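/- arXiv:1608.01873 — 16 statements merged into one kernel-verified Lean document; each statement's English description precedes it below -/
import Mathlib

section
/- Let p > 3 be a prime such that for every natural number r the congruence 2^r ≡ −1 (mod p) fails. Then for n = p + 2 the chromatic number of G(n, 3, 2) satisfies χ(G(n, 3, 2)) ≤ n − 2. -/
/-- The graph `G(n, r, s)`: vertices are the `r`-element subsets of `{0, 1, ..., n-1}`,
two of them adjacent iff their intersection has exactly `s` elements. -/
def distGraph (n r s : ℕ) : SimpleGraph {A : Finset (Fin n) // A.card = r} where
  Adj A B := A ≠ B ∧ (A.1 ∩ B.1).card = s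
  symm := by
    constructor
    intro A B h
    exact ⟨h.1.symm, by rw [Finset.inter_comm]; exact h.2⟩
  loopless := by
    constructor
    intro A h
    exact h.1 rfl



section SConstr
variable {p : ℕ}

lemma exists_S (hp : Fact p.Prime) (h2ne : (2 : ZMod p) ≠ 0)
    (h2 : ∀ r : ℕ, (2 : ZMod p) ^ r ≠ -1) :
    ∃ S : Set (ZMod p),
      (∀ x : ZMod p, x ≠ 0 → (x ∈ S ↔ ¬ (-x ∈ S))) ∧
      (∀ x : ZMod p, x ∈ S ↔ 2 * x ∈ S) := by
  haveI := hp
  set t : (ZMod p)ˣ := Units.mk0 2 h2ne with ht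
  set H : Subgroup (ZMod p)ˣ := Subgroup.zpowers t with hH
  have htH : t ∈ H := Subgroup.mem_zpowers t
  have hneg : (-1 : (ZMod p)ˣ) ∉ H := by
    intro h
    obtain ⟨m, hm⟩ := mem_powers_iff_mem_zpowers.mpr h
    apply h2 m
    have := congrArg (Units.val) hm
    simpa [ht] using this
  set K : Subgroup (ZMod p)ˣ :=
    { carrier := {z | z ∈ H ∨ -z ∈ H}
      one_mem' := Or.inl (one_mem H)
      mul_mem' := by
        rintro a b (ha | ha) (hb | hb)
        · exact Or.inl (mul_mem ha hb)
        · exact Or.inr (by rw [← mul_neg]; exact mul_mem ha hb)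
        · exact Or.inr (by rw [← neg_mul]; exact mul_mem ha hb)
        · exact Or.inl (by rw [← neg_mul_neg]; exact mul_mem ha hb)
      inv_mem' := by
        rintro a (ha | ha)
        · exact Or.inl (inv_mem ha)
        · exact Or.inr (by rw [← inv_neg]; exact inv_mem ha) } with hK
  have htK : t ∈ K := Or.inl htH
  have hm1K : (-1 : (ZMod p)ˣ) ∈ K := Or.inr (by rw [neg_neg]; exact one_mem H)
  set rep : (ZMod p)ˣ → (ZMod p)ˣ := fun w => Quotient.out (QuotientGroup.mk (s := K) w) with hrep
  have hrep_eq : ∀ w : (ZMod p)ˣ, QuotientGroup.mk (s := K) (rep w) = QuotientGroup.mk (s := K) w := by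
    intro w; exact QuotientGroup.out_eq' _
  have hrep_congr : ∀ w w' : (ZMod p)ˣ,
      QuotientGroup.mk (s := K) w = QuotientGroup.mk (s := K) w' → rep w = rep w' := by
    intro w w' h; rw [hrep]; simp only [h]
  set S : Set (ZMod p) :=
    {x : ZMod p | ∃ w : (ZMod p)ˣ, (w : ZMod p) = x ∧ w * (rep w)⁻¹ ∈ H} with hSdef
  have hmem : ∀ (z : ZMod p) (hz : z ≠ 0),
      (z ∈ S ↔ (Units.mk0 z hz) * (rep (Units.mk0 z hz))⁻¹ ∈ H) := by
    intro z hz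
    constructor
    · rintro ⟨w', hw1, hw2⟩
      have hww : w' = Units.mk0 z hz := Units.ext (by simpa using hw1)
      rwa [hww] at hw2
    · intro h; exact ⟨_, rfl, h⟩
  have hgK : ∀ w : (ZMod p)ˣ, w * (rep w)⁻¹ ∈ K := by
    intro w
    have h1 : (rep w)⁻¹ * w ∈ K := QuotientGroup.eq.mp (hrep_eq w)
    rwa [mul_comm]
  refine ⟨S, ?_, ?_⟩
  · intro x hx
    have hnx : (-x : ZMod p) ≠ 0 := neg_ne_zero.mpr hx
    set w : (ZMod p)ˣ := Units.mk0 x hx with hw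
    have hmkneg : Units.mk0 (-x) hnx = -w := Units.ext (by simp [hw])
    have hmk : QuotientGroup.mk (s := K) (-w) = QuotientGroup.mk (s := K) w := by
      apply QuotientGroup.eq.mpr
      have : (-w)⁻¹ * w = (-1 : (ZMod p)ˣ)⁻¹ := by
        rw [← neg_one_mul, mul_inv, mul_assoc, inv_mul_cancel, mul_one]
      rw [this]
      exact inv_mem hm1K
    set g : (ZMod p)ˣ := w * (rep w)⁻¹ with hg
    have h1 : x ∈ S ↔ g ∈ H := hmem x hx
    have h2' : (-x) ∈ S ↔ (-g) ∈ H := by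
      rw [hmem (-x) hnx, hmkneg, hrep_congr _ _ hmk, neg_mul]
    rw [h1, h2']
    constructor
    · intro hgH hngH
      apply hneg
      have : (-g) * g⁻¹ = -1 := by rw [neg_mul, mul_inv_cancel]
      rw [← this]
      exact mul_mem hngH (inv_mem hgH)
    · intro hn
      rcases hgK w with h | h
      · exact h
      · exact absurd h hn
  · intro x
    by_cases hx : x = 0
    · subst hx; rw [mul_zero]
    · have h2x : (2 * x : ZMod p) ≠ 0 := mul_ne_zero h2ne hx
      set w : (ZMod p)ˣ := Units.mk0 x hx with hw
      have hmk2 : Units.mk0 (2 * x) h2x = t * w := Units.ext (by simp [ht, hw])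
      have hmk : QuotientGroup.mk (s := K) (t * w) = QuotientGroup.mk (s := K) w := by
        apply QuotientGroup.eq.mpr
        have : (t * w)⁻¹ * w = t⁻¹ := by
          rw [mul_inv, mul_assoc, inv_mul_cancel, mul_one]
        rw [this]
        exact inv_mem htK
      rw [hmem x hx, hmem (2 * x) h2x, hmk2, hrep_congr _ _ hmk]
      constructor
      · intro h
        rw [mul_assoc]
        exact mul_mem htH h
      · intro h
        have := mul_mem (inv_mem htH) h
        rwa [← mul_assoc, ← mul_assoc, inv_mul_cancel, one_mul] at this
end SConstr

open Finset


namespace DGaux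

variable {p : ℕ}

def uu (p : ℕ) : Fin (p + 2) := ⟨p, by omega⟩
def vv (p : ℕ) : Fin (p + 2) := ⟨p + 1, by omega⟩

def ee {p : ℕ} (i : Fin (p + 2)) : ZMod p := ((i : ℕ) : ZMod p)

open Classical in
noncomputable def ch (S : Set (ZMod p)) (P : Finset (Fin (p + 2))) : ZMod p :=
  ∑ x ∈ P, if (∀ y ∈ P, y ≠ x → ee x - ee y ∈ S) then ee x else 0

open Classical in
noncomputable def col (S : Set (ZMod p)) (A : Finset (Fin (p + 2))) : ZMod p :=
  if uu p ∈ A then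
    (if vv p ∈ A then 3 * ∑ x ∈ (A.erase (uu p)).erase (vv p), ee x
     else (∑ x ∈ (A.erase (uu p)).erase (vv p), ee x) + ch S ((A.erase (uu p)).erase (vv p)))
  else
    (if vv p ∈ A then
      2 * (∑ x ∈ (A.erase (uu p)).erase (vv p), ee x) - ch S ((A.erase (uu p)).erase (vv p))
     else ∑ x ∈ (A.erase (uu p)).erase (vv p), ee x)

open Classical in
noncomputable def Fc (S : Set (ZMod p)) (c d : ZMod p) : ZMod p :=
  if c - d ∈ S then 2 * c + d else c + 2 * d

open Classical in
noncomputable def Gc (S : Set (ZMod p)) (c d : ZMod p) : ZMod p :=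
  if c - d ∈ S then c + 2 * d else 2 * c + d

lemma plain_of {i : Fin (p + 2)} (h1 : i ≠ uu p) (h2 : i ≠ vv p) : (i : ℕ) < p := by
  have hi := i.2
  by_contra h
  rcases (by omega : (i : ℕ) = p ∨ (i : ℕ) = p + 1) with h' | h'
  · exact h1 (Fin.ext h')
  · exact h2 (Fin.ext h')

lemma uu_ne_vv : uu p ≠ vv p := by
  intro h
  have := congrArg Fin.val h
  simp [uu, vv] at this

lemma ne_uu {i : Fin (p + 2)} (h : (i : ℕ) < p) : i ≠ uu p := by
  intro hh; rw [hh] at h; simp [uu] at h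

lemma ne_vv {i : Fin (p + 2)} (h : (i : ℕ) < p) : i ≠ vv p := by
  intro hh; rw [hh] at h; simp [vv] at h

lemma ee_inj [NeZero p] {i j : Fin (p + 2)} (hi : (i : ℕ) < p) (hj : (j : ℕ) < p)
    (h : ee i = ee j) : i = j := by
  apply Fin.ext
  have := congrArg ZMod.val h
  rwa [ee, ee, ZMod.val_natCast_of_lt hi, ZMod.val_natCast_of_lt hj] at this

lemma ee_ne [NeZero p] {i j : Fin (p + 2)} (hi : (i : ℕ) < p) (hj : (j : ℕ) < p)
    (h : i ≠ j) : ee i ≠ ee j := fun hh => h (ee_inj hi hj hh)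

section withS
variable [Fact p.Prime] (S : Set (ZMod p))
variable (hS : ∀ x : ZMod p, x ≠ 0 → (x ∈ S ↔ ¬ (-x ∈ S)))
variable (hS2 : ∀ x : ZMod p, x ∈ S ↔ 2 * x ∈ S)

include hS in
open Classical in
lemma ch_pair {c d : Fin (p + 2)} (hcd : c ≠ d) (he : ee c ≠ ee d) :
    ch S {c, d} = if ee c - ee d ∈ S then ee c else ee d := by
  classical
  have hsub : ee c - ee d ≠ 0 := sub_ne_zero.mpr he
  rw [ch, Finset.sum_pair hcd]
  by_cases h : ee c - ee d ∈ S
  · rw [if_pos h]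
    rw [if_pos, if_neg, add_zero]
    · intro hall
      have := hall c (by simp) hcd
      have hns : ¬ (-(ee c - ee d) ∈ S) := (hS _ hsub).mp h
      rw [neg_sub] at hns
      exact hns this
    · intro y hy hyc
      have : y = d := by
        rcases Finset.mem_insert.mp hy with h' | h'
        · exact absurd h' hyc
        · simpa using h'
      rwa [this]
  · rw [if_neg h]
    rw [if_neg, if_pos, zero_add]
    · intro y hy hyd
      have : y = c := by
        rcases Finset.mem_insert.mp hy with h' | h'
        · exact h'
        · exact absurd (by simpa using h') hyd
      rw [this]
      by_contra hns
      have hsub' : ee d - ee c ≠ 0 := sub_ne_zero.mpr he.symm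
      have := (hS _ hsub').mpr (by rwa [neg_sub])
      exact hns this
    · intro hall
      exact h (hall d (by simp) (Ne.symm hcd))

lemma erase_uv_of_plain {T : Finset (Fin (p + 2))} (hu : uu p ∉ T) (hv : vv p ∉ T) :
    (T.erase (uu p)).erase (vv p) = T := by
  rw [Finset.erase_eq_self.mpr hu, Finset.erase_eq_self.mpr hv]

include hS in
lemma col_u {c d : Fin (p + 2)} (hcd : c ≠ d) (hc : (c : ℕ) < p) (hd : (d : ℕ) < p)
    (he : ee c ≠ ee d) :
    col S {uu p, c, d} = Fc S (ee c) (ee d) := by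
  classical
  have hu1 : uu p ∉ ({c, d} : Finset (Fin (p + 2))) := by
    simp only [Finset.mem_insert, Finset.mem_singleton]
    push_neg
    exact ⟨fun h => (ne_uu hc) h.symm, fun h => (ne_uu hd) h.symm⟩
  have hv1 : vv p ∉ ({c, d} : Finset (Fin (p + 2))) := by
    simp only [Finset.mem_insert, Finset.mem_singleton]
    push_neg
    exact ⟨fun h => (ne_vv hc) h.symm, fun h => (ne_vv hd) h.symm⟩
  have hv2 : vv p ∉ ({uu p, c, d} : Finset (Fin (p + 2))) := by
    simp only [Finset.mem_insert, Finset.mem_singleton]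
    push_neg
    refine ⟨uu_ne_vv.symm, fun h => (ne_vv hc) h.symm, fun h => (ne_vv hd) h.symm⟩
  have herase : ((({uu p, c, d} : Finset (Fin (p + 2))).erase (uu p)).erase (vv p)) = {c, d} := by
    rw [Finset.erase_insert hu1, Finset.erase_eq_self.mpr hv1]
  rw [col, if_pos (Finset.mem_insert_self _ _), if_neg hv2, herase, Finset.sum_pair hcd,
    ch_pair S hS hcd he, Fc]
  split_ifs <;> ring

include hS in
lemma col_v {c d : Fin (p + 2)} (hcd : c ≠ d) (hc : (c : ℕ) < p) (hd : (d : ℕ) < p)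
    (he : ee c ≠ ee d) :
    col S {vv p, c, d} = Gc S (ee c) (ee d) := by
  classical
  have hu1 : uu p ∉ ({vv p, c, d} : Finset (Fin (p + 2))) := by
    simp only [Finset.mem_insert, Finset.mem_singleton]
    push_neg
    exact ⟨uu_ne_vv, fun h => (ne_uu hc) h.symm, fun h => (ne_uu hd) h.symm⟩
  have hv1 : vv p ∉ ({c, d} : Finset (Fin (p + 2))) := by
    simp only [Finset.mem_insert, Finset.mem_singleton]
    push_neg
    exact ⟨fun h => (ne_vv hc) h.symm, fun h => (ne_vv hd) h.symm⟩
  have herase : ((({vv p, c, d} : Finset (Fin (p + 2))).erase (uu p)).erase (vv p)) = {c, d} := by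
    rw [Finset.erase_eq_self.mpr hu1, Finset.erase_insert hv1]
  rw [col, if_neg hu1, if_pos (Finset.mem_insert_self _ _), herase, Finset.sum_pair hcd,
    ch_pair S hS hcd he, Gc]
  split_ifs <;> ring

lemma col_uv {c : Fin (p + 2)} (hc : (c : ℕ) < p) :
    col S {uu p, vv p, c} = 3 * ee c := by
  classical
  have hu1 : uu p ∉ ({vv p, c} : Finset (Fin (p + 2))) := by
    simp only [Finset.mem_insert, Finset.mem_singleton]
    push_neg
    exact ⟨uu_ne_vv, fun h => (ne_uu hc) h.symm⟩
  have hv1 : vv p ∉ ({c} : Finset (Fin (p + 2))) := by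
    simp only [Finset.mem_singleton]
    exact fun h => (ne_vv hc) h.symm
  have herase : ((({uu p, vv p, c} : Finset (Fin (p + 2))).erase (uu p)).erase (vv p)) = {c} := by
    rw [Finset.erase_insert hu1, Finset.erase_insert hv1]
  rw [col, if_pos (Finset.mem_insert_self _ _),
    if_pos (Finset.mem_insert.mpr (Or.inr (Finset.mem_insert_self _ _))), herase,
    Finset.sum_singleton]

lemma col_plain {c d f : Fin (p + 2)} (hcd : c ≠ d) (hcf : c ≠ f) (hdf : d ≠ f)
    (hc : (c : ℕ) < p) (hd : (d : ℕ) < p) (hf : (f : ℕ) < p) :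
    col S {c, d, f} = ee c + ee d + ee f := by
  classical
  have hu1 : uu p ∉ ({c, d, f} : Finset (Fin (p + 2))) := by
    simp only [Finset.mem_insert, Finset.mem_singleton]
    push_neg
    exact ⟨fun h => (ne_uu hc) h.symm, fun h => (ne_uu hd) h.symm, fun h => (ne_uu hf) h.symm⟩
  have hv1 : vv p ∉ ({c, d, f} : Finset (Fin (p + 2))) := by
    simp only [Finset.mem_insert, Finset.mem_singleton]
    push_neg
    exact ⟨fun h => (ne_vv hc) h.symm, fun h => (ne_vv hd) h.symm, fun h => (ne_vv hf) h.symm⟩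
  have hcnot : c ∉ ({d, f} : Finset (Fin (p + 2))) := by
    simp only [Finset.mem_insert, Finset.mem_singleton]
    push_neg
    exact ⟨hcd, hcf⟩
  rw [col, if_neg hu1, if_neg hv1, erase_uv_of_plain hu1 hv1, Finset.sum_insert hcnot,
    Finset.sum_pair hdf, add_assoc]

variable (h2ne : (2 : ZMod p) ≠ 0) (h3ne : (3 : ZMod p) ≠ 0)

include hS2 h2ne in
open Classical in
lemma Z2 {c c' d : ZMod p} (hcc : c ≠ c') : Fc S c d ≠ Fc S c' d := by
  rw [Fc, Fc]
  split_ifs with h1 h2' h2'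
  · intro h
    have h' : (2 : ZMod p) * c = 2 * c' := by linear_combination h
    exact hcc (mul_left_cancel₀ h2ne h')
  · intro h
    have hd : c' - d = 2 * (c - d) := by linear_combination -h
    exact h2' (by rw [hd]; exact (hS2 _).mp h1)
  · intro h
    have hd : c - d = 2 * (c' - d) := by linear_combination h
    exact h1 (by rw [hd]; exact (hS2 _).mp h2')
  · intro h; exact hcc (by linear_combination h)

include hS2 h2ne in
open Classical in
lemma Z3 {c c' d : ZMod p} (hcc : c ≠ c') : Gc S c d ≠ Gc S c' d := by
  rw [Gc, Gc]
  split_ifs with h1 h2' h2'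
  · intro h; exact hcc (by linear_combination h)
  · intro h
    have hd : c - d = 2 * (c' - d) := by linear_combination h
    exact h2' ((hS2 _).mpr (by rw [← hd]; exact h1))
  · intro h
    have hd : c' - d = 2 * (c - d) := by linear_combination -h
    exact h1 ((hS2 _).mpr (by rw [← hd]; exact h2'))
  · intro h
    have h' : (2 : ZMod p) * c = 2 * c' := by linear_combination h
    exact hcc (mul_left_cancel₀ h2ne h')

open Classical in
lemma Z5 {c d e : ZMod p} (h1 : e ≠ c) (h2' : e ≠ d) : Fc S c d ≠ e + c + d := by
  rw [Fc]; split_ifs with h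
  · intro hh; exact h1 (by linear_combination -hh)
  · intro hh; exact h2' (by linear_combination -hh)

open Classical in
lemma Z9 {c d e : ZMod p} (h1 : e ≠ c) (h2' : e ≠ d) : Gc S c d ≠ e + c + d := by
  rw [Gc]; split_ifs with h
  · intro hh; exact h2' (by linear_combination -hh)
  · intro hh; exact h1 (by linear_combination -hh)

open Classical in
lemma Z7 {c d : ZMod p} (hcd : c ≠ d) : Fc S c d ≠ Gc S c d := by
  rw [Fc, Gc]; split_ifs with h
  · intro hh; exact hcd (by linear_combination hh)
  · intro hh; exact hcd (by linear_combination -hh)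

include h2ne in
open Classical in
lemma Z6F {c' d : ZMod p} (h : c' ≠ d) : 3 * d ≠ Fc S c' d := by
  rw [Fc]; split_ifs with h1
  · intro hh
    have h' : (2 : ZMod p) * c' = 2 * d := by linear_combination -hh
    exact h (mul_left_cancel₀ h2ne h')
  · intro hh; exact h (by linear_combination -hh)

include h2ne in
open Classical in
lemma Z6G {c' d : ZMod p} (h : c' ≠ d) : 3 * d ≠ Gc S c' d := by
  rw [Gc]; split_ifs with h1
  · intro hh; exact h (by linear_combination -hh)
  · intro hh
    have h' : (2 : ZMod p) * c' = 2 * d := by linear_combination -hh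
    exact h (mul_left_cancel₀ h2ne h')

include h3ne in
lemma Z4 {c c' : ZMod p} (h : c ≠ c') : 3 * c ≠ 3 * c' := by
  intro hh; exact h (mul_left_cancel₀ h3ne hh)

end withS



section Key
variable [Fact p.Prime] (S : Set (ZMod p))
variable (hS : ∀ x : ZMod p, x ≠ 0 → (x ∈ S ↔ ¬ (-x ∈ S)))
variable (hS2 : ∀ x : ZMod p, x ∈ S ↔ 2 * x ∈ S)
variable (h2ne : (2 : ZMod p) ≠ 0) (h3ne : (3 : ZMod p) ≠ 0)

include hS hS2 h2ne in
lemma subA {x y b : Fin (p + 2)} (hxy : x ≠ y) (hxu : x ≠ uu p) (hyu : y ≠ uu p)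
    (hb : (b : ℕ) < p) (hxb : x ≠ b) (hyb : y ≠ b) :
    col S {x, uu p, b} ≠ col S {y, uu p, b} := by
  haveI : NeZero p := ⟨(Fact.out : p.Prime).pos.ne'⟩
  rw [Finset.insert_comm x (uu p), Finset.insert_comm y (uu p)]
  by_cases hxv : x = vv p
  · subst hxv
    have hyv : y ≠ vv p := hxy.symm
    have hy : (y : ℕ) < p := plain_of hyu hyv
    rw [col_uv S hb, col_u S hS hyb hy hb (ee_ne hy hb hyb)]
    exact Z6F S h2ne (ee_ne hy hb hyb)
  · by_cases hyv : y = vv p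
    · subst hyv
      have hx : (x : ℕ) < p := plain_of hxu hxv
      rw [col_uv S hb, col_u S hS hxb hx hb (ee_ne hx hb hxb)]
      exact (Z6F S h2ne (ee_ne hx hb hxb)).symm
    · have hx : (x : ℕ) < p := plain_of hxu hxv
      have hy : (y : ℕ) < p := plain_of hyu hyv
      rw [col_u S hS hxb hx hb (ee_ne hx hb hxb), col_u S hS hyb hy hb (ee_ne hy hb hyb)]
      exact Z2 S hS2 h2ne (ee_ne hx hy hxy)

include hS hS2 h2ne in
lemma subB {x y b : Fin (p + 2)} (hxy : x ≠ y) (hxv : x ≠ vv p) (hyv : y ≠ vv p)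
    (hb : (b : ℕ) < p) (hxb : x ≠ b) (hyb : y ≠ b) :
    col S {x, vv p, b} ≠ col S {y, vv p, b} := by
  haveI : NeZero p := ⟨(Fact.out : p.Prime).pos.ne'⟩
  rw [Finset.insert_comm x (vv p), Finset.insert_comm y (vv p)]
  by_cases hxu : x = uu p
  · subst hxu
    have hyu : y ≠ uu p := hxy.symm
    have hy : (y : ℕ) < p := plain_of hyu hyv
    rw [show ({vv p, uu p, b} : Finset (Fin (p + 2))) = {uu p, vv p, b} from
      Finset.insert_comm _ _ _]
    rw [col_uv S hb, col_v S hS hyb hy hb (ee_ne hy hb hyb)]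
    exact Z6G S h2ne (ee_ne hy hb hyb)
  · by_cases hyu : y = uu p
    · subst hyu
      have hx : (x : ℕ) < p := plain_of hxu hxv
      rw [show ({vv p, uu p, b} : Finset (Fin (p + 2))) = {uu p, vv p, b} from
        Finset.insert_comm _ _ _]
      rw [col_uv S hb, col_v S hS hxb hx hb (ee_ne hx hb hxb)]
      exact (Z6G S h2ne (ee_ne hx hb hxb)).symm
    · have hx : (x : ℕ) < p := plain_of hxu hxv
      have hy : (y : ℕ) < p := plain_of hyu hyv
      rw [col_v S hS hxb hx hb (ee_ne hx hb hxb), col_v S hS hyb hy hb (ee_ne hy hb hyb)]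
      exact Z3 S hS2 h2ne (ee_ne hx hy hxy)

include hS in
lemma subD {x y a b : Fin (p + 2)} (hxy : x ≠ y) (hxa : x ≠ a) (hxb : x ≠ b)
    (hya : y ≠ a) (hyb : y ≠ b) (hab : a ≠ b) (ha : (a : ℕ) < p) (hb : (b : ℕ) < p) :
    col S {x, a, b} ≠ col S {y, a, b} := by
  haveI : NeZero p := ⟨(Fact.out : p.Prime).pos.ne'⟩
  have heab : ee a ≠ ee b := ee_ne ha hb hab
  by_cases hxu : x = uu p
  · subst hxu
    by_cases hyv : y = vv p
    · subst hyv
      rw [col_u S hS hab ha hb heab, col_v S hS hab ha hb heab]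
      exact Z7 S heab
    · have hyu : y ≠ uu p := hxy.symm
      have hy : (y : ℕ) < p := plain_of hyu hyv
      rw [col_u S hS hab ha hb heab, col_plain S hya hyb hab hy ha hb]
      exact Z5 S (ee_ne hy ha hya) (ee_ne hy hb hyb)
  · by_cases hxv : x = vv p
    · subst hxv
      by_cases hyu : y = uu p
      · subst hyu
        rw [col_v S hS hab ha hb heab, col_u S hS hab ha hb heab]
        exact (Z7 S heab).symm
      · have hyv : y ≠ vv p := hxy.symm
        have hy : (y : ℕ) < p := plain_of hyu hyv
        rw [col_v S hS hab ha hb heab, col_plain S hya hyb hab hy ha hb]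
        exact Z9 S (ee_ne hy ha hya) (ee_ne hy hb hyb)
    · have hx : (x : ℕ) < p := plain_of hxu hxv
      by_cases hyu : y = uu p
      · subst hyu
        rw [col_plain S hxa hxb hab hx ha hb, col_u S hS hab ha hb heab]
        exact (Z5 S (ee_ne hx ha hxa) (ee_ne hx hb hxb)).symm
      · by_cases hyv : y = vv p
        · subst hyv
          rw [col_plain S hxa hxb hab hx ha hb, col_v S hS hab ha hb heab]
          exact (Z9 S (ee_ne hx ha hxa) (ee_ne hx hb hxb)).symm
        · have hy : (y : ℕ) < p := plain_of hyu hyv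
          rw [col_plain S hxa hxb hab hx ha hb, col_plain S hya hyb hab hy ha hb]
          intro h
          exact ee_ne hx hy hxy (add_right_cancel (add_right_cancel h))

include hS hS2 h2ne h3ne in
lemma key {x y a b : Fin (p + 2)} (hxy : x ≠ y) (hxa : x ≠ a) (hxb : x ≠ b)
    (hya : y ≠ a) (hyb : y ≠ b) (hab : a ≠ b) :
    col S {x, a, b} ≠ col S {y, a, b} := by
  haveI : NeZero p := ⟨(Fact.out : p.Prime).pos.ne'⟩
  by_cases hau : a = uu p
  · subst hau
    by_cases hbv : b = vv p
    · subst hbv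
      have hx : (x : ℕ) < p := plain_of hxa hxb
      have hy : (y : ℕ) < p := plain_of hya hyb
      have hsx : ({x, uu p, vv p} : Finset (Fin (p + 2))) = {uu p, vv p, x} := by
        ext z; simp only [Finset.mem_insert, Finset.mem_singleton]; tauto
      have hsy : ({y, uu p, vv p} : Finset (Fin (p + 2))) = {uu p, vv p, y} := by
        ext z; simp only [Finset.mem_insert, Finset.mem_singleton]; tauto
      rw [hsx, hsy, col_uv S hx, col_uv S hy]
      exact Z4 h3ne (ee_ne hx hy hxy)
    · have hb : (b : ℕ) < p := plain_of (Ne.symm hab) hbv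
      exact subA S hS hS2 h2ne hxy hxa hya hb hxb hyb
  · by_cases hav : a = vv p
    · subst hav
      by_cases hbu : b = uu p
      · subst hbu
        have hx : (x : ℕ) < p := plain_of hxb hxa
        have hy : (y : ℕ) < p := plain_of hyb hya
        have hsx : ({x, vv p, uu p} : Finset (Fin (p + 2))) = {uu p, vv p, x} := by
          ext z; simp only [Finset.mem_insert, Finset.mem_singleton]; tauto
        have hsy : ({y, vv p, uu p} : Finset (Fin (p + 2))) = {uu p, vv p, y} := by
          ext z; simp only [Finset.mem_insert, Finset.mem_singleton]; tauto
        rw [hsx, hsy, col_uv S hx, col_uv S hy]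
        exact Z4 h3ne (ee_ne hx hy hxy)
      · have hb : (b : ℕ) < p := plain_of hbu (Ne.symm hab)
        exact subB S hS hS2 h2ne hxy hxa hya hb hxb hyb
    · by_cases hbu : b = uu p
      · subst hbu
        have ha : (a : ℕ) < p := plain_of hau hav
        rw [Finset.pair_comm a (uu p)]
        exact subA S hS hS2 h2ne hxy hxb hyb ha hxa hya
      · by_cases hbv : b = vv p
        · subst hbv
          have ha : (a : ℕ) < p := plain_of hau hav
          rw [Finset.pair_comm a (vv p)]
          exact subB S hS hS2 h2ne hxy hxb hyb ha hxa hya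
        · exact subD S hS hxy hxa hxb hya hyb hab (plain_of hau hav) (plain_of hbu hbv)

end Key

end DGaux

theorem stmt_0 (p : ℕ) (hp : p.Prime) (hp3 : 3 < p)
    (h2 : ∀ r : ℕ, (2 : ZMod p) ^ r ≠ -1) :
    (distGraph (p + 2) 3 2).chromaticNumber ≤ ((p + 2) - 2 : ℕ) := by
  haveI hpf : Fact p.Prime := ⟨hp⟩
  haveI : NeZero p := ⟨hp.pos.ne'⟩
  have h2ne : (2 : ZMod p) ≠ 0 := by
    intro h
    rw [show (2 : ZMod p) = ((2 : ℕ) : ZMod p) by norm_cast] at h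
    have := (CharP.cast_eq_zero_iff (ZMod p) p 2).mp h
    have := Nat.le_of_dvd (by norm_num) this
    omega
  have h3ne : (3 : ZMod p) ≠ 0 := by
    intro h
    rw [show (3 : ZMod p) = ((3 : ℕ) : ZMod p) by norm_cast] at h
    have := (CharP.cast_eq_zero_iff (ZMod p) p 3).mp h
    have := Nat.le_of_dvd (by norm_num) this
    omega
  obtain ⟨S, hS, hS2⟩ := exists_S hpf h2ne h2
  have valid : ∀ {A B : {A : Finset (Fin (p + 2)) // A.card = 3}},
      (distGraph (p + 2) 3 2).Adj A B → DGaux.col S A.1 ≠ DGaux.col S B.1 := by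
    intro A B hadj
    have hne : A ≠ B := hadj.1
    have hcard : (A.1 ∩ B.1).card = 2 := hadj.2
    set I : Finset (Fin (p + 2)) := A.1 ∩ B.1 with hI
    have hsubA : I ⊆ A.1 := Finset.inter_subset_left
    have hsubB : I ⊆ B.1 := Finset.inter_subset_right
    have hcA : (A.1 \ I).card = 1 := by
      rw [Finset.card_sdiff_of_subset hsubA, A.2, hcard]
    have hcB : (B.1 \ I).card = 1 := by
      rw [Finset.card_sdiff_of_subset hsubB, B.2, hcard]
    obtain ⟨xx, hxx⟩ := Finset.card_eq_one.mp hcA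
    obtain ⟨yy, hyy⟩ := Finset.card_eq_one.mp hcB
    have hxmem : xx ∈ A.1 \ I := by rw [hxx]; exact Finset.mem_singleton_self _
    have hymem : yy ∈ B.1 \ I := by rw [hyy]; exact Finset.mem_singleton_self _
    have hxA : xx ∈ A.1 := (Finset.mem_sdiff.mp hxmem).1
    have hxI : xx ∉ I := (Finset.mem_sdiff.mp hxmem).2
    have hyB : yy ∈ B.1 := (Finset.mem_sdiff.mp hymem).1
    have hyI : yy ∉ I := (Finset.mem_sdiff.mp hymem).2
    have hA : A.1 = insert xx I := by
      have h1 := Finset.sdiff_union_of_subset hsubA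
      rw [hxx] at h1
      rw [← h1, Finset.insert_eq]
    have hB : B.1 = insert yy I := by
      have h1 := Finset.sdiff_union_of_subset hsubB
      rw [hyy] at h1
      rw [← h1, Finset.insert_eq]
    have hxy : xx ≠ yy := by
      intro h
      apply hxI
      rw [hI, Finset.mem_inter]
      exact ⟨hxA, h ▸ hyB⟩
    obtain ⟨a, b, hab, hIab⟩ := Finset.card_eq_two.mp hcard
    have hxa : xx ≠ a := by intro h; exact hxI (by rw [hIab, h]; simp)
    have hxb : xx ≠ b := by intro h; exact hxI (by rw [hIab, h]; simp)
    have hya : yy ≠ a := by intro h; exact hyI (by rw [hIab, h]; simp)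
    have hyb : yy ≠ b := by intro h; exact hyI (by rw [hIab, h]; simp)
    rw [hA, hB, hIab]
    exact DGaux.key S hS hS2 h2ne h3ne hxy hxa hxb hya hyb hab
  let C : (distGraph (p + 2) 3 2).Coloring (ZMod p) :=
    SimpleGraph.Coloring.mk (fun A => DGaux.col S A.1) valid
  have hle := C.colorable.chromaticNumber_le
  rw [ZMod.card p] at hle
  rw [show ((p + 2) - 2 : ℕ) = p by omega]
  exact hle
end

section
/- Let p > 3 be a prime such that for every natural number r the congruence 2^r ≡ −1 (mod p) fails. Then for n = p + 1 the chromatic number of G(n, 3, 2) satisfies χ(G(n, 3, 2)) ≤ n − 1. -/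
/-- In a commutative group, any element of order two admits a "sign" function. -/
lemma sign_exists {G : Type*} [CommGroup G] (ε : G) (h1 : ε ≠ 1) (h2 : ε * ε = 1) :
    ∃ h : G → Bool, ∀ g, h (ε * g) = !h g := by
  classical
  set H : Subgroup G := Subgroup.zpowers ε with hH
  have hinv : ε⁻¹ = ε := inv_eq_of_mul_eq_one_right h2
  have hmem : ∀ x : G, x ∈ H → x = 1 ∨ x = ε := by
    rintro x ⟨z, rfl⟩
    have h2z : ε ^ (2:ℤ) = 1 := by rw [zpow_two]; exact h2
    have hsplit : ε ^ z = ε ^ (z % 2) := by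
      conv_lhs => rw [← Int.mul_ediv_add_emod z 2]
      rw [zpow_add, zpow_mul, h2z, one_zpow, one_mul]
    rcases Int.emod_two_eq_zero_or_one z with h | h
    · left; show ε ^ z = 1; rw [hsplit, h, zpow_zero]
    · right; show ε ^ z = ε; rw [hsplit, h, zpow_one]
  have key : ∀ g : G, (QuotientGroup.mk g : G ⧸ H).out = g ∨
      (QuotientGroup.mk g : G ⧸ H).out = ε * g := by
    intro g
    have h0 : (QuotientGroup.mk ((QuotientGroup.mk g : G ⧸ H).out) : G ⧸ H)
        = QuotientGroup.mk g := QuotientGroup.out_eq' _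
    rw [QuotientGroup.eq] at h0
    rcases hmem _ h0 with h | h
    · left
      have := mul_eq_one_iff_inv_eq.mp h
      rw [inv_inv] at this; exact this
    · right
      have h' : g = (QuotientGroup.mk g : G ⧸ H).out * ε := by
        rwa [inv_mul_eq_iff_eq_mul] at h
      rw [← mul_left_inj ε, ← h', mul_comm ε g, mul_assoc, h2, mul_one]
  have hmk : ∀ g : G, (QuotientGroup.mk (ε * g) : G ⧸ H) = QuotientGroup.mk g := by
    intro g
    rw [QuotientGroup.eq]
    have h3 : (ε * g)⁻¹ * g = ε⁻¹ := by
      rw [mul_comm ε g, mul_inv_rev, mul_assoc]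
      simp
    rw [h3, hinv]
    exact Subgroup.mem_zpowers ε
  refine ⟨fun g => decide ((QuotientGroup.mk g : G ⧸ H).out = ε * g), ?_⟩
  intro g
  dsimp only
  rw [hmk g]
  have hne : ε * g ≠ g := by
    intro h; exact h1 (mul_right_cancel (by rwa [one_mul]))
  rcases key g with h | h
  · rw [h]
    simp [hne.symm, (by rw [← mul_assoc, h2, one_mul] : ε * (ε * g) = g)]
  · rw [h]
    have : ε * (ε * g) = g := by rw [← mul_assoc, h2, one_mul]
    simp [this, hne]

/-- Map `Fin (p+1)` into `ZMod p` (the last element plays the role of "infinity"). -/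
def iZ (p : ℕ) (i : Fin (p + 1)) : ZMod p := ((i : ℕ) : ZMod p)

lemma iZ_inj {p : ℕ} [NeZero p] {i j : Fin (p + 1)} (hi : i ≠ Fin.last p)
    (hj : j ≠ Fin.last p) (h : iZ p i = iZ p j) : i = j := by
  have hi' : (i : ℕ) < p := Fin.val_lt_last hi
  have hj' : (j : ℕ) < p := Fin.val_lt_last hj
  have := congrArg ZMod.val h
  rw [iZ, iZ, ZMod.val_cast_of_lt hi', ZMod.val_cast_of_lt hj'] at this
  exact Fin.ext this

/-- The coloring function on triples. -/
def colFun (p : ℕ) (hz : ZMod p → Bool) (A : Finset (Fin (p + 1))) : ZMod p :=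
  (∑ i ∈ A.erase (Fin.last p), iZ p i) +
  (if Fin.last p ∈ A then
     ∑ i ∈ A.erase (Fin.last p),
       (if hz (2 * iZ p i - ∑ j ∈ A.erase (Fin.last p), iZ p j) then iZ p i else 0)
   else 0)

lemma colFun_not_mem {p : ℕ} (hz : ZMod p → Bool) {A : Finset (Fin (p + 1))}
    (hlast : Fin.last p ∉ A) : colFun p hz A = ∑ i ∈ A, iZ p i := by
  rw [colFun, Finset.erase_eq_of_notMem hlast, if_neg hlast, add_zero]

lemma colFun_mem {p : ℕ} (hz : ZMod p → Bool)
    (hneg : ∀ x : ZMod p, x ≠ 0 → hz (-x) = !hz x)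
    {A : Finset (Fin (p + 1))} (hlast : Fin.last p ∈ A)
    {a b : Fin (p + 1)} (hab : a ≠ b) (hab' : iZ p a ≠ iZ p b)
    (hA : A.erase (Fin.last p) = {a, b}) :
    colFun p hz A =
      (iZ p a + iZ p b) + (if hz (iZ p a - iZ p b) then iZ p a else iZ p b) := by
  have hsum : ∑ j ∈ A.erase (Fin.last p), iZ p j = iZ p a + iZ p b := by
    rw [hA, Finset.sum_pair hab]
  rw [colFun, if_pos hlast, hsum, hA, Finset.sum_pair hab]
  have e1 : 2 * iZ p a - (iZ p a + iZ p b) = iZ p a - iZ p b := by ring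
  have e2 : 2 * iZ p b - (iZ p a + iZ p b) = -(iZ p a - iZ p b) := by ring
  rw [e1, e2, hneg _ (sub_ne_zero.mpr hab')]
  cases h : hz (iZ p a - iZ p b) <;> simp

/-- Extraction: if `|A|=3`, `|A∩B|=2` then `A = insert x (A∩B)` with `x ∉ B`. -/
lemma extract {n : ℕ} {A B : Finset (Fin n)} (hA : A.card = 3)
    (hint : (A ∩ B).card = 2) :
    ∃ x, x ∉ B ∧ x ∉ A ∩ B ∧ A = insert x (A ∩ B) := by
  have hc : (A \ B).card = 1 := by
    have := Finset.card_sdiff_add_card_inter A B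
    omega
  obtain ⟨x, hx⟩ := Finset.card_eq_one.mp hc
  have hxmem : x ∈ A \ B := by rw [hx]; exact Finset.mem_singleton_self x
  have hxB : x ∉ B := (Finset.mem_sdiff.mp hxmem).2
  refine ⟨x, hxB, fun h => hxB (Finset.mem_inter.mp h).2, ?_⟩
  have h1 : A = A \ B ∪ A ∩ B := (Finset.sdiff_union_inter A B).symm
  conv_lhs => rw [h1, hx]
  ext t
  simp [Finset.mem_insert, or_comm]

lemma colFun_ne_mixed {p : ℕ} [NeZero p] (hz : ZMod p → Bool)
    (hneg : ∀ x : ZMod p, x ≠ 0 → hz (-x) = !hz x)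
    {A B : Finset (Fin (p + 1))} (hA : A.card = 3) (hB : B.card = 3)
    (hint : (A ∩ B).card = 2) (hlA : Fin.last p ∈ A) (hlB : Fin.last p ∉ B) :
    colFun p hz A ≠ colFun p hz B := by
  classical
  have hlS : Fin.last p ∉ A ∩ B := fun h => hlB (Finset.mem_inter.mp h).2
  obtain ⟨x, hxB, hxS, hAeq⟩ := extract hA hint
  have hxlast : x = Fin.last p := by
    rcases Finset.mem_insert.mp (hAeq ▸ hlA) with h | h
    · exact h.symm
    · exact absurd h hlS
  rw [hxlast] at hAeq
  obtain ⟨y, hyA, hyS', hBeq⟩ := extract hB (by rwa [Finset.inter_comm])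
  rw [Finset.inter_comm] at hBeq hyS'
  have hyB : y ∈ B := hBeq ▸ Finset.mem_insert_self _ _
  have hylast : y ≠ Fin.last p := fun h => hyA (by rw [h]; exact hlA)
  obtain ⟨a, b, hab, hSab⟩ := Finset.card_eq_two.mp hint
  have haS : a ∈ A ∩ B := by rw [hSab]; simp
  have hbS : b ∈ A ∩ B := by rw [hSab]; simp
  have halast : a ≠ Fin.last p := fun h => hlS (h ▸ haS)
  have hblast : b ≠ Fin.last p := fun h => hlS (h ▸ hbS)
  have hab' : iZ p a ≠ iZ p b := fun h => hab (iZ_inj halast hblast h)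
  have hAerase : A.erase (Fin.last p) = {a, b} := by
    rw [hAeq, Finset.erase_insert hlS, hSab]
  have hcolA := colFun_mem hz hneg hlA hab hab' hAerase
  have hyS : y ∉ ({a, b} : Finset (Fin (p+1))) := hSab ▸ hyS'
  have hcolB : colFun p hz B = iZ p y + (iZ p a + iZ p b) := by
    rw [colFun_not_mem hz hlB, hBeq, hSab, Finset.sum_insert hyS,
      Finset.sum_pair hab]
  intro heq
  rw [hcolA, hcolB] at heq
  have hya : y ≠ a := fun h => hyS (by rw [h]; simp)
  have hyb : y ≠ b := fun h => hyS (by rw [h]; simp)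
  cases h : hz (iZ p a - iZ p b) <;> simp only [h, if_true, if_false,
    Bool.false_eq_true, reduceIte] at heq
  · exact hyb (iZ_inj hylast hblast (by linear_combination -heq))
  · exact hya (iZ_inj hylast halast (by linear_combination -heq))

lemma colFun_ne_none {p : ℕ} [NeZero p] (hz : ZMod p → Bool)
    {A B : Finset (Fin (p + 1))} (hA : A.card = 3) (hB : B.card = 3)
    (hint : (A ∩ B).card = 2) (hlA : Fin.last p ∉ A) (hlB : Fin.last p ∉ B) :
    colFun p hz A ≠ colFun p hz B := by
  classical
  obtain ⟨x, hxB, hxS, hAeq⟩ := extract hA hint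
  obtain ⟨y, hyA, hyS', hBeq⟩ := extract hB (by rwa [Finset.inter_comm])
  rw [Finset.inter_comm] at hBeq hyS'
  have hxA : x ∈ A := hAeq ▸ Finset.mem_insert_self _ _
  have hyB : y ∈ B := hBeq ▸ Finset.mem_insert_self _ _
  have hxlast : x ≠ Fin.last p := fun h => hlA (h ▸ hxA)
  have hylast : y ≠ Fin.last p := fun h => hlB (h ▸ hyB)
  have hsA : ∑ i ∈ A, iZ p i = iZ p x + ∑ i ∈ A ∩ B, iZ p i := by
    conv_lhs => rw [hAeq]
    exact Finset.sum_insert hxS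
  have hsB : ∑ i ∈ B, iZ p i = iZ p y + ∑ i ∈ A ∩ B, iZ p i := by
    conv_lhs => rw [hBeq]
    exact Finset.sum_insert hyS'
  intro heq
  rw [colFun_not_mem hz hlA, colFun_not_mem hz hlB, hsA, hsB] at heq
  have : x = y := iZ_inj hxlast hylast (by linear_combination heq)
  exact hxB (this ▸ hyB)

lemma colFun_ne_both {p : ℕ} [NeZero p] [Fact p.Prime] (hp2 : (2 : ZMod p) ≠ 0)
    (hz : ZMod p → Bool)
    (hneg : ∀ x : ZMod p, x ≠ 0 → hz (-x) = !hz x)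
    (hdbl : ∀ x : ZMod p, x ≠ 0 → hz (2 * x) = hz x)
    {A B : Finset (Fin (p + 1))} (hA : A.card = 3) (hB : B.card = 3)
    (hint : (A ∩ B).card = 2) (hlA : Fin.last p ∈ A) (hlB : Fin.last p ∈ B) :
    colFun p hz A ≠ colFun p hz B := by
  classical
  have hlS : Fin.last p ∈ A ∩ B := Finset.mem_inter.mpr ⟨hlA, hlB⟩
  obtain ⟨x, hxB, hxS, hAeq⟩ := extract hA hint
  obtain ⟨y, hyA, hyS', hBeq⟩ := extract hB (by rwa [Finset.inter_comm])
  rw [Finset.inter_comm] at hBeq hyS'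
  have hyB : y ∈ B := hBeq ▸ Finset.mem_insert_self _ _
  have hxlast : x ≠ Fin.last p := fun h => hxB (h ▸ hlB)
  have hylast : y ≠ Fin.last p := fun h => hyA (h ▸ hlA)
  have hxy : x ≠ y := fun h => hxB (h ▸ hyB)
  have hm1 : ((A ∩ B).erase (Fin.last p)).card = 1 := by
    rw [Finset.card_erase_of_mem hlS, hint]
  obtain ⟨m, hm⟩ := Finset.card_eq_one.mp hm1
  have hmmem : m ∈ (A ∩ B).erase (Fin.last p) := by
    rw [hm]; exact Finset.mem_singleton_self m
  have hmlast : m ≠ Fin.last p := Finset.ne_of_mem_erase hmmem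
  have hmS : m ∈ A ∩ B := Finset.mem_of_mem_erase hmmem
  have hxm : x ≠ m := fun h => hxS (h ▸ hmS)
  have hym : y ≠ m := fun h => hyS' (h ▸ hmS)
  have hXM : iZ p x ≠ iZ p m := fun h => hxm (iZ_inj hxlast hmlast h)
  have hYM : iZ p y ≠ iZ p m := fun h => hym (iZ_inj hylast hmlast h)
  have hXY : iZ p x ≠ iZ p y := fun h => hxy (iZ_inj hxlast hylast h)
  have hAerase : A.erase (Fin.last p) = {x, m} := by
    rw [hAeq, Finset.erase_insert_of_ne hxlast, hm]
  have hBerase : B.erase (Fin.last p) = {y, m} := by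
    rw [hBeq, Finset.erase_insert_of_ne hylast, hm]
  have hcolA := colFun_mem hz hneg hlA hxm hXM hAerase
  have hcolB := colFun_mem hz hneg hlB hym hYM hBerase
  intro heq
  rw [hcolA, hcolB] at heq
  cases h1 : hz (iZ p x - iZ p m) <;> cases h2 : hz (iZ p y - iZ p m) <;>
    simp only [h1, h2, if_true, if_false, Bool.false_eq_true, reduceIte] at heq
  · exact hXY (by linear_combination heq)
  · have hd := hdbl (iZ p y - iZ p m) (sub_ne_zero.mpr hYM)
    rw [show 2 * (iZ p y - iZ p m) = iZ p x - iZ p m by linear_combination -heq,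
      h1, h2] at hd
    simp at hd
  · have hd := hdbl (iZ p x - iZ p m) (sub_ne_zero.mpr hXM)
    rw [show 2 * (iZ p x - iZ p m) = iZ p y - iZ p m by linear_combination heq,
      h1, h2] at hd
    simp at hd
  · have h3 : 2 * iZ p x = 2 * iZ p y := by linear_combination heq
    exact hXY (mul_left_cancel₀ hp2 h3)

lemma colorable_key (p : ℕ) [NeZero p] [Fact p.Prime] (hp2 : (2 : ZMod p) ≠ 0)
    (hz : ZMod p → Bool)
    (hneg : ∀ x : ZMod p, x ≠ 0 → hz (-x) = !hz x)
    (hdbl : ∀ x : ZMod p, x ≠ 0 → hz (2 * x) = hz x) :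
    (distGraph (p + 1) 3 2).Colorable p := by
  classical
  have C : (distGraph (p + 1) 3 2).Coloring (ZMod p) := by
    refine SimpleGraph.Coloring.mk (fun A => colFun p hz A.1) ?_
    intro A B hadj
    have hadj' : A ≠ B ∧ (A.1 ∩ B.1).card = 2 := hadj
    have hne : A.1 ≠ B.1 := fun h => hadj'.1 (Subtype.ext h)
    by_cases hA : Fin.last p ∈ A.1 <;> by_cases hB : Fin.last p ∈ B.1
    · exact colFun_ne_both hp2 hz hneg hdbl A.2 B.2 hadj'.2 hA hB
    · exact colFun_ne_mixed hz hneg A.2 B.2 hadj'.2 hA hB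
    · exact (colFun_ne_mixed hz hneg B.2 A.2
        (by rw [Finset.inter_comm]; exact hadj'.2) hB hA).symm
    · exact colFun_ne_none hz A.2 B.2 hadj'.2 hA hB
  have := C.colorable
  rwa [ZMod.card] at this

theorem stmt_1 (p : ℕ) (hp : p.Prime) (hp3 : 3 < p)
    (h2 : ∀ r : ℕ, (2 : ZMod p) ^ r ≠ -1) :
    (distGraph (p + 1) 3 2).chromaticNumber ≤ ((p + 1) - 1 : ℕ) := by
  classical
  haveI : Fact p.Prime := ⟨hp⟩
  haveI : NeZero p := ⟨hp.ne_zero⟩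
  have hp2 : (2 : ZMod p) ≠ 0 := by
    intro h
    have hv : ((2 : ℕ) : ZMod p).val = 2 := ZMod.val_cast_of_lt (by omega)
    rw [show ((2:ℕ) : ZMod p) = (2 : ZMod p) by norm_cast, h] at hv
    simp at hv
  set u2 : (ZMod p)ˣ := Units.mk0 (2 : ZMod p) hp2 with hu2
  set ε : (ZMod p)ˣ := -1 with hε
  set K : Subgroup (ZMod p)ˣ := Subgroup.zpowers u2 with hK
  have hεK : ε ∉ K := by
    intro hmem
    rw [← mem_powers_iff_mem_zpowers] at hmem
    obtain ⟨n, hn⟩ := hmem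
    apply h2 n
    have := congrArg (Units.val) hn
    simpa [hu2, hε] using this
  set εQ : (ZMod p)ˣ ⧸ K := QuotientGroup.mk ε with hεQ
  have hεQ1 : εQ ≠ 1 := by
    rw [hεQ, Ne, QuotientGroup.eq_one_iff]
    exact hεK
  have hεQ2 : εQ * εQ = 1 := by
    rw [hεQ, ← QuotientGroup.mk_mul]
    have : ε * ε = 1 := by simp [hε]
    rw [this, QuotientGroup.mk_one]
  obtain ⟨h, hh⟩ := sign_exists εQ hεQ1 hεQ2
  set hz : ZMod p → Bool :=
    fun x => if hx : x = 0 then false else h (QuotientGroup.mk (Units.mk0 x hx)) with hzdef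
  have hneg : ∀ x : ZMod p, x ≠ 0 → hz (-x) = !hz x := by
    intro x hx
    have hnx : -x ≠ 0 := neg_ne_zero.mpr hx
    have hu : Units.mk0 (-x) hnx = ε * Units.mk0 x hx := by
      ext; simp [hε]
    simp only [hzdef, dif_neg hnx, dif_neg hx, hu, QuotientGroup.mk_mul, ← hεQ]
    exact hh _
  have hdbl : ∀ x : ZMod p, x ≠ 0 → hz (2 * x) = hz x := by
    intro x hx
    have h2x : 2 * x ≠ 0 := mul_ne_zero hp2 hx
    have hu : Units.mk0 (2 * x) h2x = u2 * Units.mk0 x hx := by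
      ext; simp [hu2]
    have hk1 : (QuotientGroup.mk (u2 * Units.mk0 x hx) : (ZMod p)ˣ ⧸ K)
        = QuotientGroup.mk (Units.mk0 x hx) := by
      rw [QuotientGroup.eq]
      have h3 : (u2 * Units.mk0 x hx)⁻¹ * Units.mk0 x hx = u2⁻¹ := by
        rw [mul_comm u2 _, mul_inv_rev, mul_assoc]
        simp
      rw [h3]
      exact Subgroup.inv_mem _ (Subgroup.mem_zpowers u2)
    simp only [hzdef, dif_neg h2x, dif_neg hx, hu, hk1]
  have hcol := colorable_key p hp2 hz hneg hdbl
  have := hcol.chromaticNumber_le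
  simpa using this
end

section
/- For all integers n ≥ r ≥ 2 with n − r even, the chromatic number of G(n, r, r−1) satisfies χ(G(n, r, r−1)) ≥ n − r + 1. -/
theorem stmt_3 (n r : ℕ) (hr : 2 ≤ r) (hn : r ≤ n) (hpar : Even (n - r)) :
    ((n - r + 1 : ℕ) : ℕ∞) ≤ (distGraph n r (r - 1)).chromaticNumber := by
  -- base set B of size r-1
  have hrn : r - 1 ≤ n := le_trans (Nat.sub_le r 1) hn
  set B : Finset (Fin n) := Finset.univ.map (Fin.castLEEmb hrn) with hB
  have hBcard : B.card = r - 1 := by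
    simp [hB]
  -- the extra points
  have hx : ∀ i : Fin (n - r + 1), r - 1 + i.val < n := by
    intro i
    have := i.isLt
    omega
  set x : Fin (n - r + 1) → Fin n := fun i => ⟨r - 1 + i.val, hx i⟩ with hxdef
  have hxinj : Function.Injective x := by
    intro i j hij
    have : r - 1 + i.val = r - 1 + j.val := congrArg Fin.val hij
    exact Fin.ext (by omega)
  have hxB : ∀ i, x i ∉ B := by
    intro i hiB
    rw [hB, Finset.mem_map] at hiB
    obtain ⟨a, -, ha⟩ := hiB
    have : (a : ℕ) = r - 1 + i.val := congrArg Fin.val ha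
    have := a.isLt
    omega
  -- the vertices of the clique
  have hcard : ∀ i, (insert (x i) B).card = r := by
    intro i
    rw [Finset.card_insert_of_notMem (hxB i), hBcard]
    omega
  set f : Fin (n - r + 1) → {A : Finset (Fin n) // A.card = r} :=
    fun i => ⟨insert (x i) B, hcard i⟩ with hf
  have hfinj : Function.Injective f := by
    intro i j hij
    have h1 : insert (x i) B = insert (x j) B := congrArg Subtype.val hij
    have h2 : x i ∈ insert (x j) B := h1 ▸ Finset.mem_insert_self _ _
    rcases Finset.mem_insert.mp h2 with h | h
    · exact hxinj h
    · exact absurd h (hxB i)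
  have hinter : ∀ i j, i ≠ j → (insert (x i) B ∩ insert (x j) B) = B := by
    intro i j hij
    ext a
    simp only [Finset.mem_inter, Finset.mem_insert]
    constructor
    · rintro ⟨hi | hi, hj | hj⟩
      · exact absurd (hxinj (hi ▸ hj)) hij
      · exact hj
      · exact hi
      · exact hi
    · intro h; exact ⟨Or.inr h, Or.inr h⟩
  -- embedding of the complete graph
  let emb : (⊤ : SimpleGraph (Fin (n - r + 1))) ↪g distGraph n r (r - 1) :=
    { toFun := f
      inj' := hfinj
      map_rel_iff' := by
        intro i j
        simp only [SimpleGraph.top_adj]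
        constructor
        · intro h
          intro hij
          exact h.1 (congrArg f hij)
        · intro hij
          refine ⟨fun h => hij (hfinj h), ?_⟩
          show ((insert (x i) B) ∩ (insert (x j) B)).card = r - 1
          rw [hinter i j hij, hBcard] }
  have := SimpleGraph.chromaticNumber_mono_of_hom emb.toHom
  rwa [SimpleGraph.chromaticNumber_top, Fintype.card_fin] at this
end

section
/- For all integers n ≥ r ≥ 2 with n − r odd, the chromatic number of G(n, r, r−1) satisfies χ(G(n, r, r−1)) ≥ n − r + 2. -/
theorem stmt_4 (n r : ℕ) (hr : 2 ≤ r) (hn : r ≤ n) (hpar : Odd (n - r)) :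
    ((n - r + 2 : ℕ) : ℕ∞) ≤ (distGraph n r (r - 1)).chromaticNumber := by
  have hcast : ((n - r + 2 : ℕ) : ℕ∞) = ((n - r + 1 : ℕ) : ℕ∞) + 1 := by push_cast; ring
  rw [hcast]
  refine Order.add_one_le_of_lt (not_le.mp fun hle => ?_)
  rw [SimpleGraph.chromaticNumber_le_iff_colorable] at hle
  obtain ⟨c⟩ := hle
  have h2n : r - 2 ≤ n := by omega
  set T : Finset (Fin n) := (Finset.range (r-2)).attachFin
    (fun m hm => lt_of_lt_of_le (Finset.mem_range.mp hm) h2n) with hTdef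
  set Rem : Finset (Fin n) := (Finset.Ico (r-2) n).attachFin
    (fun m hm => (Finset.mem_Ico.mp hm).2) with hRdef
  have hTcard : T.card = r - 2 := by simp [hTdef, Finset.card_attachFin]
  have hRcard : Rem.card = n - r + 2 := by
    simp only [hRdef, Finset.card_attachFin, Nat.card_Ico]; omega
  have hmemT : ∀ x : Fin n, x ∈ T ↔ (x:ℕ) < r - 2 := by
    intro x; simp [hTdef, Finset.mem_attachFin]
  have hmemR : ∀ x : Fin n, x ∈ Rem ↔ r - 2 ≤ (x:ℕ) := by
    intro x; simp [hRdef, Finset.mem_attachFin, x.isLt]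
  have hdisj : Disjoint T Rem := by
    rw [Finset.disjoint_left]; intro x hx hx'
    rw [hmemT x] at hx; rw [hmemR x] at hx'; omega
  have hvcard : ∀ P : Finset (Fin n), P ∈ Rem.powersetCard 2 → (T ∪ P).card = r := by
    intro P hP
    rw [Finset.mem_powersetCard] at hP
    rw [Finset.card_union_of_disjoint (hdisj.mono_right hP.1), hTcard, hP.2]
    omega
  let f : Finset (Fin n) → Fin (n - r + 1) := fun P =>
    if h : (T ∪ P).card = r then c ⟨T ∪ P, h⟩ else ⟨0, by omega⟩
  have key : ∀ P ∈ Rem.powersetCard 2, ∀ Q ∈ Rem.powersetCard 2,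
      P ≠ Q → f P = f Q → Disjoint P Q := by
    intro P hP Q hQ hne hf
    by_contra hnd
    have hP' := hP; have hQ' := hQ
    rw [Finset.mem_powersetCard] at hP' hQ'
    have hPQ : (P ∩ Q).card = 1 := by
      have h1 : (P ∩ Q).Nonempty := Finset.not_disjoint_iff_nonempty_inter.mp hnd
      have h2 : (P ∩ Q).card ≤ 2 :=
        le_trans (Finset.card_le_card Finset.inter_subset_left) hP'.2.le
      have h3 : (P ∩ Q).card ≠ 2 := by
        intro h
        apply hne
        have hPP : P ∩ Q = P := Finset.eq_of_subset_of_card_le Finset.inter_subset_left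
          (by rw [h, hP'.2])
        have hQQ : P ∩ Q = Q := Finset.eq_of_subset_of_card_le Finset.inter_subset_right
          (by rw [h, hQ'.2])
        rw [← hPP, hQQ]
      have h4 := Finset.card_pos.mpr h1
      omega
    have hdP : Disjoint T P := hdisj.mono_right hP'.1
    have hdQ : Disjoint T Q := hdisj.mono_right hQ'.1
    have hadj : (distGraph n r (r-1)).Adj ⟨T ∪ P, hvcard P hP⟩ ⟨T ∪ Q, hvcard Q hQ⟩ := by
      constructor
      · intro h
        apply hne
        have h' : T ∪ P = T ∪ Q := congrArg Subtype.val h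
        calc P = (T ∪ P) \ T := (Finset.union_sdiff_cancel_left hdP).symm
        _ = (T ∪ Q) \ T := by rw [h']
        _ = Q := Finset.union_sdiff_cancel_left hdQ
      · show ((T ∪ P) ∩ (T ∪ Q)).card = r - 1
        rw [← Finset.union_inter_distrib_left]
        rw [Finset.card_union_of_disjoint
          (hdisj.mono_right (Finset.inter_subset_left.trans hP'.1))]
        rw [hTcard, hPQ]
        omega
    have hval := c.valid hadj
    apply hval
    have e1 : f P = c ⟨T ∪ P, hvcard P hP⟩ := dif_pos (hvcard P hP)
    have e2 : f Q = c ⟨T ∪ Q, hvcard Q hQ⟩ := dif_pos (hvcard Q hQ)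
    rw [← e1, ← e2, hf]
  have hsum : (Rem.powersetCard 2).card =
      ∑ i : Fin (n-r+1), ((Rem.powersetCard 2).filter (fun P => f P = i)).card :=
    Finset.card_eq_sum_card_fiberwise (fun P _ => Finset.mem_univ (f P))
  have hfiber : ∀ i : Fin (n-r+1),
      2 * ((Rem.powersetCard 2).filter (fun P => f P = i)).card ≤ n - r + 1 := by
    intro i
    set F := (Rem.powersetCard 2).filter (fun P => f P = i) with hF
    have hdisjF : ∀ P ∈ F, ∀ Q ∈ F, P ≠ Q → Disjoint (id P) (id Q) := by
      intro P hP Q hQ hne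
      rw [hF, Finset.mem_filter] at hP hQ
      exact key P hP.1 Q hQ.1 hne (hP.2.trans hQ.2.symm)
    have hcards : ∀ P ∈ F, (id P).card = 2 := by
      intro P hP
      rw [hF, Finset.mem_filter, Finset.mem_powersetCard] at hP
      exact hP.1.2
    have hcardU : (F.biUnion id).card = 2 * F.card := by
      rw [Finset.card_biUnion hdisjF, Finset.sum_congr rfl hcards, Finset.sum_const,
        smul_eq_mul, mul_comm]
    have hsub : F.biUnion id ⊆ Rem := by
      intro x hx
      rw [Finset.mem_biUnion] at hx
      obtain ⟨P, hP, hxP⟩ := hx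
      rw [hF, Finset.mem_filter, Finset.mem_powersetCard] at hP
      exact hP.1.1 hxP
    have h1 : 2 * F.card ≤ n - r + 2 := by
      rw [← hcardU, ← hRcard]
      exact Finset.card_le_card hsub
    obtain ⟨t, ht⟩ := hpar
    omega
  have h2 : 2 * (Rem.powersetCard 2).card ≤ (n-r+1) * (n-r+1) := by
    rw [hsum, Finset.mul_sum]
    calc ∑ i : Fin (n-r+1), 2 * ((Rem.powersetCard 2).filter (fun P => f P = i)).card
        ≤ ∑ _i : Fin (n-r+1), (n-r+1) := Finset.sum_le_sum (fun i _ => hfiber i)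
      _ = (n-r+1)*(n-r+1) := by
          rw [Finset.sum_const, Finset.card_univ, Fintype.card_fin, smul_eq_mul]
  have hPcard : (Rem.powersetCard 2).card = (n-r+2).choose 2 := by
    rw [Finset.card_powersetCard, hRcard]
  obtain ⟨t, ht⟩ := hpar
  have hchoose : 2 * ((n-r+2).choose 2) = (n-r+2) * (n-r+1) := by
    rw [Nat.choose_two_right]
    have hm : n - r + 2 = 2*t + 3 := by omega
    rw [hm]
    have h31 : 2*t+3-1 = 2*t+2 := by omega
    rw [h31]
    have : (2*t+3) * (2*t+2) = 2 * ((2*t+3) * (t+1)) := by ring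
    rw [this, Nat.mul_div_cancel_left _ (by norm_num : 0 < 2)]
    have : n - r + 1 = 2*t + 2 := by omega
    rw [this]; ring
  rw [hPcard, hchoose] at h2
  have hfin : n - r + 2 ≤ n - r + 1 :=
    Nat.le_of_mul_le_mul_right h2 (by omega)
  omega
end

section
/- Let r be a prime and let n = r·k − 1 for some positive integer k with n ≥ r. Then the chromatic number of G(n, r, r−1) satisfies χ(G(n, r, r−1)) ≥ n − r + 2. -/
theorem stmt_5 (n r k : ℕ) (hr : r.Prime) (hk : 0 < k) (hn : n = r * k - 1)
    (hnr : r ≤ n) :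
    ((n - r + 2 : ℕ) : ℕ∞) ≤ (distGraph n r (r - 1)).chromaticNumber := by
  classical
  have hrpos : 0 < r := hr.pos
  have hr2 : 2 ≤ r := hr.two_le
  -- the key step: not colorable with n - r + 1 colors
  have key : ¬ (distGraph n r (r - 1)).Colorable (n - r + 1) := by
    rintro ⟨C⟩
    set t : Fin (n - r + 1) := ⟨0, by omega⟩ with ht
    -- uniqueness of color-t extension of each (r-1)-set
    have huniq : ∀ S : Finset (Fin n), S.card = r - 1 →
        ∃! A : {A : Finset (Fin n) // A.card = r}, C A = t ∧ S ⊆ A.1 := by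
      intro S hS
      have hxS : ∀ x : {x // x ∈ Sᶜ}, (insert x.1 S).card = r := by
        intro x
        rw [Finset.card_insert_of_notMem (Finset.mem_compl.mp x.2), hS]
        omega
      let F : {x // x ∈ Sᶜ} → {A : Finset (Fin n) // A.card = r} :=
        fun x => ⟨insert x.1 S, hxS x⟩
      have hinj : Function.Injective (fun x => C (F x)) := by
        intro x y hxy
        by_contra hne
        have hxv : x.1 ∉ S := Finset.mem_compl.mp x.2
        have hxy1 : x.1 ≠ y.1 := fun h => hne (Subtype.ext h)
        have hnotmem : x.1 ∉ insert y.1 S := by simp [hxy1, hxv]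
        have hint : insert x.1 S ∩ insert y.1 S = S := by
          rw [Finset.insert_inter_of_notMem hnotmem]
          exact Finset.inter_eq_left.mpr (Finset.subset_insert _ _)
        have hFne : F x ≠ F y := by
          intro h
          apply hnotmem
          have h1 : insert x.1 S = insert y.1 S := congrArg Subtype.val h
          rw [← h1]
          exact Finset.mem_insert_self _ _
        have hadj : (distGraph n r (r - 1)).Adj (F x) (F y) :=
          ⟨hFne, by show (insert x.1 S ∩ insert y.1 S).card = r - 1; rw [hint, hS]⟩
        exact C.valid hadj hxy
      have hcards : Fintype.card {x // x ∈ Sᶜ} = Fintype.card (Fin (n - r + 1)) := by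
        rw [Fintype.card_coe, Finset.card_compl, hS, Fintype.card_fin, Fintype.card_fin]
        omega
      have hbij : Function.Bijective (fun x => C (F x)) :=
        (Fintype.bijective_iff_injective_and_card _).mpr ⟨hinj, hcards⟩
      obtain ⟨x, hx⟩ := hbij.surjective t
      refine ⟨F x, ⟨hx, Finset.subset_insert _ _⟩, ?_⟩
      rintro B ⟨hBt, hBS⟩
      have hsd : (B.1 \ S).card = 1 := by
        rw [Finset.card_sdiff_of_subset hBS, hS, B.2]; omega
      obtain ⟨b, hb⟩ := Finset.card_eq_one.mp hsd
      have hbB : b ∈ B.1 \ S := hb ▸ Finset.mem_singleton_self b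
      have hbmem : b ∈ Sᶜ := Finset.mem_compl.mpr (Finset.mem_sdiff.mp hbB).2
      have hBeq : B = F ⟨b, hbmem⟩ := by
        apply Subtype.ext
        have h2 := Finset.sdiff_union_of_subset hBS
        rw [hb, ← Finset.insert_eq] at h2
        exact h2.symm
      have hx' : C (F x) = t := hx
      rw [hBeq]
      exact congrArg F (hinj (show C (F ⟨b, hbmem⟩) = C (F x) by
        rw [← hBeq, hBt, hx']))
    -- a default vertex
    obtain ⟨s0, _, hs0⟩ := Finset.exists_subset_card_eq
      (show r ≤ (Finset.univ : Finset (Fin n)).card by simpa using hnr)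
    haveI : Nonempty {A : Finset (Fin n) // A.card = r} := ⟨⟨s0, hs0⟩⟩
    choose! g hg1 hg2 using fun S (hS : Finset.card S = r - 1) => (huniq S hS).exists
    have hgmem : ∀ S ∈ Finset.powersetCard (r - 1) (Finset.univ : Finset (Fin n)),
        g S ∈ Finset.univ.filter (fun A : {A : Finset (Fin n) // A.card = r} => C A = t) := by
      intro S hSP
      have hSc : S.card = r - 1 := (Finset.mem_powersetCard.mp hSP).2
      exact Finset.mem_filter.mpr ⟨Finset.mem_univ _, hg1 S hSc⟩
    have hcount := Finset.card_eq_sum_card_fiberwise hgmem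
    have hfiber : ∀ A ∈ Finset.univ.filter
        (fun A : {A : Finset (Fin n) // A.card = r} => C A = t),
        (Finset.powersetCard (r - 1) (Finset.univ : Finset (Fin n))).filter
          (fun S => g S = A) = Finset.powersetCard (r - 1) A.1 := by
      intro A hA
      have hAt : C A = t := (Finset.mem_filter.mp hA).2
      ext S
      simp only [Finset.mem_filter, Finset.mem_powersetCard]
      constructor
      · rintro ⟨⟨-, hSc⟩, hgA⟩
        exact ⟨hgA ▸ hg2 S hSc, hSc⟩
      · rintro ⟨hSA, hSc⟩
        exact ⟨⟨Finset.subset_univ _, hSc⟩,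
          (huniq S hSc).unique ⟨hg1 S hSc, hg2 S hSc⟩ ⟨hAt, hSA⟩⟩
    have hcount2 := hcount.trans
      (Finset.sum_congr rfl fun A hA => congrArg Finset.card (hfiber A hA))
    have hchr : r.choose (r - 1) = r := by
      have h1 := Nat.choose_symm (Nat.sub_le r 1)
      rw [show r - (r - 1) = 1 by omega] at h1
      rw [← h1, Nat.choose_one_right]
    have hL : (Finset.powersetCard (r - 1) (Finset.univ : Finset (Fin n))).card
        = n.choose (r - 1) := by
      rw [Finset.card_powersetCard, Finset.card_univ, Fintype.card_fin]
    have hR : ∀ A ∈ Finset.univ.filter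
        (fun A : {A : Finset (Fin n) // A.card = r} => C A = t),
        (Finset.powersetCard (r - 1) A.1).card = r := fun A _ => by
      rw [Finset.card_powersetCard, A.2, hchr]
    have hcard : n.choose (r - 1) =
        (Finset.univ.filter (fun A : {A : Finset (Fin n) // A.card = r} => C A = t)).card
          * r := by
      rw [← hL, hcount2, Finset.sum_congr rfl hR, Finset.sum_const, smul_eq_mul]
    have hdvd : r ∣ n.choose (r - 1) := hcard ▸ dvd_mul_left r _
    -- Lucas
    haveI : Fact r.Prime := ⟨hr⟩
    have hn' : n = r * (k - 1) + (r - 1) := by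
      have h3 : r * k = r * (k - 1) + r := by
        conv_lhs => rw [← Nat.sub_add_cancel hk]
        ring
      omega
    have hmodr : n % r = r - 1 := by
      rw [hn', Nat.mul_add_mod]
      exact Nat.mod_eq_of_lt (by omega)
    have hdivr : n / r = k - 1 := by
      rw [hn', Nat.mul_add_div hrpos, Nat.div_eq_of_lt (by omega)]
      omega
    have hmod := Choose.choose_modEq_choose_mod_mul_choose_div_nat (n := n) (k := r - 1) (p := r)
    rw [hmodr, Nat.mod_eq_of_lt (by omega : r - 1 < r), hdivr,
      Nat.div_eq_of_lt (by omega : r - 1 < r), Nat.choose_self, Nat.choose_zero_right] at hmod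
    have h0 : n.choose (r - 1) % r = 0 := by
      obtain ⟨c, hc⟩ := hdvd
      rw [hc, Nat.mul_mod_right]
    rw [Nat.ModEq, h0] at hmod
    rw [Nat.mod_eq_of_lt (by omega : 1 * 1 < r)] at hmod
    omega
  -- conclude
  have h2 : ((n - r + 2 : ℕ) : ℕ∞) = ((n - r + 1 : ℕ) : ℕ∞) + 1 := by push_cast; ring
  rw [h2, ENat.add_one_le_iff (ENat.coe_ne_top _)]
  by_contra hle
  push_neg at hle
  exact key (SimpleGraph.chromaticNumber_le_iff_colorable.mp hle)
end

section
/- For every integer n ≥ 3 with n ≡ 0, 2, 4 or 5 (mod 6), the chromatic number of G(n, 3, 2) satisfies χ(G(n, 3, 2)) ≥ n − 1. -/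
/-- Pair-counting bound for partial Steiner triple systems. -/
lemma aux_pair_bound (n : ℕ) (F : Finset (Finset (Fin n))) (h3 : ∀ A ∈ F, A.card = 3)
    (hint : ∀ A ∈ F, ∀ B ∈ F, A ≠ B → (A ∩ B).card ≤ 1) :
    6 * F.card ≤ n * (n - 1) := by
  have hdisj : ∀ A ∈ F, ∀ B ∈ F, A ≠ B →
      Disjoint (A.powersetCard 2) (B.powersetCard 2) := by
    intro A hA B hB hAB
    rw [Finset.disjoint_left]
    intro p hp hq
    rw [Finset.mem_powersetCard] at hp hq
    have : p ⊆ A ∩ B := Finset.subset_inter hp.1 hq.1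
    have := Finset.card_le_card this
    have := hint A hA B hB hAB
    omega
  have hcard : (F.biUnion (fun A => A.powersetCard 2)).card = 3 * F.card := by
    rw [Finset.card_biUnion hdisj]
    rw [Finset.sum_congr rfl (fun A hA => by
      rw [Finset.card_powersetCard, h3 A hA])]
    simp [Finset.sum_const, mul_comm]
  have hsub : F.biUnion (fun A => A.powersetCard 2) ⊆ Finset.univ.powersetCard 2 := by
    intro p hp
    rw [Finset.mem_biUnion] at hp
    obtain ⟨A, _, hp⟩ := hp
    rw [Finset.mem_powersetCard] at hp ⊢
    exact ⟨Finset.subset_univ _, hp.2⟩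
  have h1 := Finset.card_le_card hsub
  rw [hcard, Finset.card_powersetCard, Finset.card_univ, Fintype.card_fin,
    Nat.choose_two_right] at h1
  have h2 : 2 ∣ n * (n - 1) := by
    rcases Nat.even_or_odd n with h | h
    · exact Dvd.dvd.mul_right h.two_dvd _
    · rcases n with _ | m
      · simp
      · simp only [Nat.succ_sub_one]
        exact Dvd.dvd.mul_left (Nat.Odd.sub_odd h odd_one).two_dvd _
  omega

/-- Degree-counting bound for partial Steiner triple systems on an even number of points. -/
lemma aux_even_bound (n : ℕ) (hev : n % 2 = 0) (F : Finset (Finset (Fin n)))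
    (h3 : ∀ A ∈ F, A.card = 3)
    (hint : ∀ A ∈ F, ∀ B ∈ F, A ≠ B → (A ∩ B).card ≤ 1) :
    6 * F.card ≤ n * (n - 2) := by
  have hdeg : ∀ x : Fin n, 2 * (F.filter (fun A => x ∈ A)).card ≤ n - 1 := by
    intro x
    set Fx := F.filter (fun A => x ∈ A) with hFx
    have hinj : Set.InjOn (fun A : Finset (Fin n) => A.erase x) ↑Fx := by
      intro A hA B hB h
      simp only [hFx, Finset.mem_coe, Finset.mem_filter] at hA hB
      simp only at h
      have : insert x (A.erase x) = insert x (B.erase x) := by rw [h]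
      rwa [Finset.insert_erase hA.2, Finset.insert_erase hB.2] at this
    set Gx := Fx.image (fun A => A.erase x) with hGx
    have hcardG : Gx.card = Fx.card := Finset.card_image_of_injOn hinj
    have hdisj : ∀ p ∈ Gx, ∀ q ∈ Gx, p ≠ q → Disjoint (id p) (id q) := by
      intro p hp q hq hpq
      simp only [hGx, Finset.mem_image] at hp hq
      obtain ⟨A, hA, rfl⟩ := hp
      obtain ⟨B, hB, rfl⟩ := hq
      simp only [hFx, Finset.mem_filter] at hA hB
      have hAB : A ≠ B := fun h => hpq (by rw [h])
      have h1 := hint A hA.1 B hB.1 hAB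
      simp only [id, Finset.disjoint_left]
      intro y hy hy'
      have hyA := Finset.mem_of_mem_erase hy
      have hyB := Finset.mem_of_mem_erase hy'
      have hyx : y ≠ x := Finset.ne_of_mem_erase hy
      have : {y, x} ⊆ A ∩ B := by
        intro z hz
        simp only [Finset.mem_insert, Finset.mem_singleton] at hz
        rcases hz with rfl | rfl
        · exact Finset.mem_inter.2 ⟨hyA, hyB⟩
        · exact Finset.mem_inter.2 ⟨hA.2, hB.2⟩
      have := Finset.card_le_card this
      rw [Finset.card_insert_of_notMem (by simpa using hyx), Finset.card_singleton] at this
      omega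
    have h2c : ∀ p ∈ Gx, (id p : Finset (Fin n)).card = 2 := by
      intro p hp
      simp only [hGx, Finset.mem_image] at hp
      obtain ⟨A, hA, rfl⟩ := hp
      simp only [hFx, Finset.mem_filter] at hA
      simp only [id]
      rw [Finset.card_erase_of_mem hA.2, h3 A hA.1]
    have hU : (Gx.biUnion id).card = 2 * Gx.card := by
      rw [Finset.card_biUnion hdisj, Finset.sum_congr rfl h2c]
      simp [mul_comm]
    have hsub : Gx.biUnion id ⊆ Finset.univ.erase x := by
      intro y hy
      rw [Finset.mem_biUnion] at hy
      obtain ⟨p, hp, hy⟩ := hy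
      simp only [hGx, Finset.mem_image] at hp
      obtain ⟨A, _, rfl⟩ := hp
      exact Finset.mem_erase.2 ⟨Finset.ne_of_mem_erase hy, Finset.mem_univ _⟩
    have := Finset.card_le_card hsub
    rw [hU, Finset.card_erase_of_mem (Finset.mem_univ x), Finset.card_univ,
      Fintype.card_fin] at this
    omega
  have hdc : ∑ A ∈ F, A.card = ∑ x : Fin n, (F.filter (fun A => x ∈ A)).card := by
    have : ∀ A : Finset (Fin n), A.card = ∑ x : Fin n, if x ∈ A then 1 else 0 := by
      intro A
      rw [Finset.sum_ite_mem, Finset.univ_inter, Finset.card_eq_sum_ones]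
    rw [Finset.sum_congr rfl (fun A _ => this A), Finset.sum_comm]
    exact Finset.sum_congr rfl (fun x _ => (Finset.card_filter _ _).symm)
  have h3F : ∑ A ∈ F, A.card = 3 * F.card := by
    rw [Finset.sum_congr rfl h3]; simp [mul_comm]
  have hsum : 6 * F.card = ∑ x : Fin n, 2 * (F.filter (fun A => x ∈ A)).card := by
    rw [← Finset.mul_sum, ← hdc, h3F]; ring
  have hle : ∑ x : Fin n, 2 * (F.filter (fun A => x ∈ A)).card ≤ ∑ _x : Fin n, (n - 2) := by
    refine Finset.sum_le_sum (fun x _ => ?_)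
    have := hdeg x
    omega
  simp only [Finset.sum_const, Finset.card_univ, Fintype.card_fin, smul_eq_mul] at hle
  omega

/-- Strict bound in the admissible residue cases. -/
lemma aux_strict_bound (n : ℕ) (hn : 3 ≤ n)
    (hmod : n % 6 = 0 ∨ n % 6 = 2 ∨ n % 6 = 4 ∨ n % 6 = 5)
    (F : Finset (Finset (Fin n))) (h3 : ∀ A ∈ F, A.card = 3)
    (hint : ∀ A ∈ F, ∀ B ∈ F, A ≠ B → (A ∩ B).card ≤ 1) :
    6 * F.card < n * (n - 1) := by
  rcases hmod with h | h | h | h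
  case inr.inr.inr =>
    have h1 := aux_pair_bound n F h3 hint
    obtain ⟨k, rfl⟩ : ∃ k, n = 6 * k + 5 := ⟨n / 6, by omega⟩
    have : (6 * k + 5) * (6 * k + 5 - 1) = 6 * (6 * k * k + 9 * k + 3) + 2 := by
      rw [show 6 * k + 5 - 1 = 6 * k + 4 from rfl]; ring
    omega
  all_goals {
    have hev : n % 2 = 0 := by omega
    have h1 := aux_even_bound n hev F h3 hint
    have h2 : n * (n - 2) < n * (n - 1) :=
      Nat.mul_lt_mul_of_le_of_lt (le_refl n) (by omega) (by omega)
    omega }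

theorem stmt_6 (n : ℕ) (hn : 3 ≤ n)
    (hmod : n % 6 = 0 ∨ n % 6 = 2 ∨ n % 6 = 4 ∨ n % 6 = 5) :
    ((n - 1 : ℕ) : ℕ∞) ≤ (distGraph n 3 2).chromaticNumber := by
  have hnc : ¬ (distGraph n 3 2).Colorable (n - 2) := by
    rintro ⟨C⟩
    -- color classes, pushed down to finsets of triples
    set V := {A : Finset (Fin n) // A.card = 3}
    have hfib := Finset.card_eq_sum_card_fiberwise
      (f := C) (s := (Finset.univ : Finset V)) (t := Finset.univ)
      (fun x _ => Finset.mem_univ _)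
    have hcardV : (Finset.univ : Finset V).card = n.choose 3 := by
      rw [Finset.card_univ]
      simp [V, Fintype.card_finset_len, Fintype.card_fin]
    -- bound each fiber
    have hbound : ∀ c : Fin (n - 2),
        6 * ((Finset.univ : Finset V).filter (fun v => C v = c)).card ≤ n * (n - 1) - 1 := by
      intro c
      set S := (Finset.univ : Finset V).filter (fun v => C v = c) with hS
      set F := S.image (fun v : V => v.1) with hF
      have hcardF : F.card = S.card :=
        Finset.card_image_of_injOn (fun a _ b _ h => Subtype.ext h)
      have h3 : ∀ A ∈ F, A.card = 3 := by
        intro A hA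
        simp only [hF, Finset.mem_image] at hA
        obtain ⟨v, _, rfl⟩ := hA
        exact v.2
      have hint : ∀ A ∈ F, ∀ B ∈ F, A ≠ B → (A ∩ B).card ≤ 1 := by
        intro A hA B hB hAB
        simp only [hF, Finset.mem_image] at hA hB
        obtain ⟨v, hv, rfl⟩ := hA
        obtain ⟨w, hw, rfl⟩ := hB
        simp only [hS, Finset.mem_filter] at hv hw
        have hvw : v ≠ w := fun h => hAB (by rw [h])
        have hnadj : ¬ (distGraph n 3 2).Adj v w := by
          intro hadj
          exact C.valid hadj (hv.2.trans hw.2.symm)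
        simp only [distGraph, hvw, ne_eq, not_false_eq_true, true_and] at hnadj
        have hle : (v.1 ∩ w.1).card ≤ 3 :=
          le_trans (Finset.card_le_card Finset.inter_subset_left) (le_of_eq v.2)
        have hne3 : (v.1 ∩ w.1).card ≠ 3 := by
          intro h
          have : v.1 ∩ w.1 = v.1 :=
            Finset.eq_of_subset_of_card_le Finset.inter_subset_left (by omega)
          have hsub : v.1 ⊆ w.1 := this ▸ Finset.inter_subset_right
          have : v.1 = w.1 := Finset.eq_of_subset_of_card_le hsub (by rw [v.2, w.2])
          exact hvw (Subtype.ext this)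
        omega
      have := aux_strict_bound n hn hmod F h3 hint
      omega
    -- sum up
    have hsum : ∑ c : Fin (n - 2),
        6 * ((Finset.univ : Finset V).filter (fun v => C v = c)).card
        ≤ ∑ _c : Fin (n - 2), (n * (n - 1) - 1) :=
      Finset.sum_le_sum (fun c _ => hbound c)
    rw [← Finset.mul_sum, ← hfib, hcardV] at hsum
    simp only [Finset.sum_const, Finset.card_univ, Fintype.card_fin, smul_eq_mul] at hsum
    have hchoose : n.choose 3 * 6 = n * (n - 1) * (n - 2) := by
      rcases Nat.exists_eq_add_of_le hn with ⟨m, rfl⟩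
      rw [Nat.add_comm 3 m]
      rw [show m + 3 - 1 = m + 2 from rfl, show m + 3 - 2 = m + 1 from rfl]
      have key := Nat.choose_mul_factorial_mul_factorial (show 3 ≤ m + 3 by omega)
      rw [show Nat.factorial 3 = 6 from rfl, show m + 3 - 3 = m from rfl] at key
      have hf : Nat.factorial (m + 3) = (m + 3) * (m + 2) * (m + 1) * Nat.factorial m := by
        rw [show m + 3 = (m + 2) + 1 from rfl, Nat.factorial_succ,
          show m + 2 = (m + 1) + 1 from rfl, Nat.factorial_succ, Nat.factorial_succ]
        ring
      rw [hf] at key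
      exact Nat.eq_of_mul_eq_mul_right (Nat.factorial_pos m) key
    have e1 : (n - 2) * (n * (n - 1) - 1) = n * (n - 1) * (n - 2) - (n - 2) := by
      rw [Nat.mul_sub, mul_one, mul_comm]
    have hX : 6 * n.choose 3 = n * (n - 1) * (n - 2) := by rw [mul_comm]; exact hchoose
    rw [e1, ← hX] at hsum
    have hpos : 0 < n.choose 3 := Nat.choose_pos hn
    omega
  have h2 : ¬ (distGraph n 3 2).chromaticNumber ≤ (n - 2 : ℕ) := by
    rw [SimpleGraph.chromaticNumber_le_iff_colorable]
    exact hnc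
  have h3 : ((n - 2 : ℕ) : ℕ∞) < (distGraph n 3 2).chromaticNumber := lt_of_not_ge h2
  have : ((n - 1 : ℕ) : ℕ∞) = ((n - 2 : ℕ) : ℕ∞) + 1 := by
    rw [show n - 1 = (n - 2) + 1 by omega]
    push_cast
    rfl
  rw [this]
  exact Order.add_one_le_of_lt h3
end

section
/- Let n be a prime number and let r, s be integers with 0 ≤ s < r ≤ n. Then the chromatic number of G(n, r, s) satisfies χ(G(n, r, s)) ≤ n^{r−s}. -/
open Polynomial

theorem stmt_7 (n r s : ℕ) (hn : n.Prime) (hs : s < r) (hr : r ≤ n) :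
    (distGraph n r s).chromaticNumber ≤ ((n ^ (r - s) : ℕ) : ℕ∞) := by
  classical
  haveI := Fact.mk hn
  haveI : NeZero n := ⟨hn.ne_zero⟩
  set f : Fin n → ZMod n := fun a => (a.val : ZMod n) with hf
  have hfinj : Function.Injective f := by
    intro a b hab
    have h2 := congrArg ZMod.val hab
    rw [hf] at h2
    simp only [ZMod.val_natCast_of_lt a.isLt, ZMod.val_natCast_of_lt b.isLt] at h2
    exact Fin.ext h2
  set P : Finset (Fin n) → Polynomial (ZMod n) :=
    fun S => ∏ a ∈ S, (X - C (f a)) with hP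
  have hmon : ∀ S : Finset (Fin n), (P S).Monic := fun S =>
    monic_prod_of_monic _ _ fun a _ => monic_X_sub_C _
  have hdeg : ∀ S : Finset (Fin n), (P S).natDegree = S.card := by
    intro S
    rw [hP, natDegree_prod_of_monic _ _ (fun a _ => monic_X_sub_C _)]
    simp [natDegree_X_sub_C]
  have hroots : ∀ S : Finset (Fin n), (P S).roots = S.val.map f := by
    intro S
    have : P S = ((S.val.map f).map fun a => X - C a).prod := by
      simp only [hP, Multiset.map_map, Function.comp]
      rw [Finset.prod_eq_multiset_prod]
    rw [this, roots_multiset_prod_X_sub_C]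
  have C : (distGraph n r s).Coloring (Fin (r - s) → ZMod n) := by
    refine SimpleGraph.Coloring.mk (fun A i => (P A.1).coeff (s + i)) ?_
    rintro A B ⟨hne, hcard⟩ hcol
    apply hne
    have hPeq : P A.1 = P B.1 := by
      set Q := P A.1 - P B.1 with hQ
      have hcoeff : ∀ k, s ≤ k → Q.coeff k = 0 := by
        intro k hk
        rcases lt_trichotomy k r with hkr | rfl | hkr
        · have hi : k - s < r - s := by omega
          have := congrFun hcol ⟨k - s, hi⟩
          simp only at this
          rw [hQ, coeff_sub]
          have hks : s + (k - s) = k := by omega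
          rw [hks] at this
          rw [this, sub_self]
        · have hA1 : (P A.1).coeff k = 1 := by
            have h := (hmon A.1).coeff_natDegree
            rwa [hdeg, A.2] at h
          have hB1 : (P B.1).coeff k = 1 := by
            have h := (hmon B.1).coeff_natDegree
            rwa [hdeg, B.2] at h
          rw [hQ, coeff_sub, hA1, hB1, sub_self]
        · rw [hQ, coeff_sub,
            coeff_eq_zero_of_natDegree_lt (by rw [hdeg, A.2]; exact hkr),
            coeff_eq_zero_of_natDegree_lt (by rw [hdeg, B.2]; exact hkr), sub_self]
      by_contra hne'
      have hQne : Q ≠ 0 := sub_ne_zero.mpr hne'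
      have hdQ : Q.natDegree < s := by
        by_contra h
        exact hQne (leadingCoeff_eq_zero.mp (hcoeff _ (le_of_not_gt h)))
      have hT : ((A.1 ∩ B.1).image f).card = s := by
        rw [Finset.card_image_of_injective _ hfinj, hcard]
      have : Q = 0 := by
        apply Polynomial.eq_zero_of_natDegree_lt_card_of_eval_eq_zero' Q ((A.1 ∩ B.1).image f)
        · intro x hx
          obtain ⟨a, ha, rfl⟩ := Finset.mem_image.mp hx
          have evalzero : ∀ (S : Finset (Fin n)), a ∈ S → (P S).eval (f a) = 0 := by
            intro S haS
            rw [hP, eval_prod]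
            exact Finset.prod_eq_zero haS (by simp)
          rw [hQ, eval_sub, evalzero _ (Finset.mem_inter.mp ha).1,
            evalzero _ (Finset.mem_inter.mp ha).2, sub_self]
        · rw [hT]; exact hdQ
      exact hQne this
    have hval : A.1.val.map f = B.1.val.map f := by
      rw [← hroots, ← hroots, hPeq]
    exact Subtype.ext (Finset.val_injective (Multiset.map_injective hfinj hval))
  have hcolorable : (distGraph n r s).Colorable (n ^ (r - s)) := by
    have h := C.colorable
    rwa [Fintype.card_fun, ZMod.card, Fintype.card_fin] at h
  exact hcolorable.chromaticNumber_le
end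

section
/- Let p > 3 be a prime such that for every natural number r the congruence 2^r ≡ −1 (mod p) fails. Then there exist two functions f₁, f₂ defined on all unordered pairs {x, y} of distinct elements of Z_p, with values in Z_p, such that: (1) for each i ∈ {1, 2} and each pair, f_i(x, y) = f_i(y, x) ∈ {x, y}; (2) f₁(x, y) ≠ f₂(x, y) for every pair of distinct x, y; and (3) there is no pair of distinct elements x, y and no i ∈ {1, 2} such that simultaneously f_i(x, y) = x and f_i((x+y)/2, x) = (x+y)/2, where (x+y)/2 denotes (x+y)·2⁻¹ computed in the field Z_p. -/
theorem stmt_8 (p : ℕ) (hp : p.Prime) (hp3 : 3 < p)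
    (h2 : ∀ r : ℕ, (2 : ZMod p) ^ r ≠ -1) :
    ∃ f₁ f₂ : ZMod p → ZMod p → ZMod p,
      (∀ x y : ZMod p, x ≠ y →
        f₁ x y = f₁ y x ∧ f₁ x y ∈ ({x, y} : Set (ZMod p)) ∧
        f₂ x y = f₂ y x ∧ f₂ x y ∈ ({x, y} : Set (ZMod p))) ∧
      (∀ x y : ZMod p, x ≠ y → f₁ x y ≠ f₂ x y) ∧
      (¬ ∃ (x y : ZMod p), x ≠ y ∧
        ((f₁ x y = x ∧ f₁ ((x + y) * 2⁻¹) x = (x + y) * 2⁻¹) ∨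
         (f₂ x y = x ∧ f₂ ((x + y) * 2⁻¹) x = (x + y) * 2⁻¹))) := by
  classical
  haveI : Fact p.Prime := ⟨hp⟩
  have h2ne : (2 : ZMod p) ≠ 0 := by
    intro h
    have hd : (p : ℕ) ∣ 2 := (ZMod.natCast_eq_zero_iff 2 p).mp (by exact_mod_cast h)
    have := Nat.le_of_dvd (by norm_num) hd
    omega
  set u2 : (ZMod p)ˣ := Units.mk0 2 h2ne with hu2
  set H : Subgroup (ZMod p)ˣ := Subgroup.zpowers u2 with hH
  set c : (ZMod p)ˣ ⧸ H := QuotientGroup.mk (-1 : (ZMod p)ˣ) with hc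
  have hneg1 : c ≠ 1 := by
    intro h
    rw [hc, QuotientGroup.eq_one_iff] at h
    rw [hH, ← mem_powers_iff_mem_zpowers] at h
    obtain ⟨m, hm⟩ := h
    apply h2 m
    have := congrArg (Units.val) hm
    simpa [hu2] using this
  have hcc : c * c = 1 := by
    rw [hc, ← QuotientGroup.mk_mul]
    norm_num
  set K : Subgroup ((ZMod p)ˣ ⧸ H) := Subgroup.zpowers c with hK
  have hKmem : ∀ k ∈ K, k = 1 ∨ k = c := by
    intro k hk
    rw [hK, Subgroup.mem_zpowers_iff] at hk
    obtain ⟨n, rfl⟩ := hk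
    have hcr : ∀ r : ℤ, c ^ (r + r) = 1 := by
      intro r
      calc c ^ (r + r) = c ^ r * c ^ r := zpow_add c r r
        _ = (c * c) ^ r := (mul_zpow c c r).symm
        _ = 1 := by rw [hcc, one_zpow]
    rcases Int.even_or_odd n with ⟨r, rfl⟩ | ⟨r, rfl⟩
    · left; exact hcr r
    · right
      have h2r : (2 : ℤ) * r = r + r := by ring
      rw [zpow_add, h2r, hcr r, zpow_one]
      exact one_mul c
  set Sel : (ZMod p)ˣ → Prop :=
    fun u => Quotient.out ((QuotientGroup.mk (QuotientGroup.mk u : (ZMod p)ˣ ⧸ H))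
      : ((ZMod p)ˣ ⧸ H) ⧸ K) = (QuotientGroup.mk u : (ZMod p)ˣ ⧸ H) with hSel
  have hmkneg : ∀ u : (ZMod p)ˣ, (QuotientGroup.mk (-u) : (ZMod p)ˣ ⧸ H)
      = QuotientGroup.mk u * c := by
    intro u
    rw [hc, ← QuotientGroup.mk_mul, mul_neg_one]
  have key_neg : ∀ u : (ZMod p)ˣ, Sel (-u) ↔ ¬ Sel u := by
    intro u
    set g : (ZMod p)ˣ ⧸ H := QuotientGroup.mk u with hg
    have hne : g ≠ g * c := by
      intro h
      exact hneg1 (left_eq_mul.mp h)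
    have hsame : ((QuotientGroup.mk g : ((ZMod p)ˣ ⧸ H) ⧸ K))
        = QuotientGroup.mk (g * c) := by
      rw [QuotientGroup.eq, inv_mul_cancel_left]
      exact Subgroup.mem_zpowers _
    have hout : Quotient.out ((QuotientGroup.mk g : ((ZMod p)ˣ ⧸ H) ⧸ K)) = g ∨
        Quotient.out ((QuotientGroup.mk g : ((ZMod p)ˣ ⧸ H) ⧸ K)) = g * c := by
      set o := Quotient.out ((QuotientGroup.mk g : ((ZMod p)ˣ ⧸ H) ⧸ K)) with ho
      have h1 : (QuotientGroup.mk o : ((ZMod p)ˣ ⧸ H) ⧸ K) = QuotientGroup.mk g :=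
        Quotient.out_eq _
      rw [QuotientGroup.eq] at h1
      rcases hKmem _ h1 with h | h
      · left
        exact (inv_mul_eq_one.mp h)
      · right
        have hgo : g = o * c := by
          have := congrArg (fun z => o * z) h
          simpa [mul_inv_cancel_left] using this
        rw [hgo, mul_assoc, hcc]
        exact (mul_one o).symm
    rw [hSel]
    simp only [hmkneg u, ← hg, ← hsame]
    constructor
    · intro h hcon
      rw [hcon] at h
      exact hne h
    · intro h
      rcases hout with h1 | h1
      · exact absurd h1 h
      · exact h1
  have key_half : ∀ u : (ZMod p)ˣ, Sel (u * u2⁻¹) ↔ Sel u := by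
    intro u
    have hq : (QuotientGroup.mk (u * u2⁻¹) : (ZMod p)ˣ ⧸ H) = QuotientGroup.mk u := by
      rw [QuotientGroup.eq]
      have h' : (u * u2⁻¹)⁻¹ * u = u2 := by group
      rw [h']
      exact Subgroup.mem_zpowers u2
    rw [hSel]
    simp only [hq]
  set Q : ZMod p → Prop := fun d => ∀ h : d ≠ 0, Sel (Units.mk0 d h) with hQ
  have hQiff : ∀ (d : ZMod p) (h : d ≠ 0), Q d ↔ Sel (Units.mk0 d h) :=
    fun d h => ⟨fun hq => hq h, fun hs _ => hs⟩
  have hQneg : ∀ (d : ZMod p) (h : d ≠ 0), Q (-d) ↔ ¬ Q d := by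
    intro d h
    have hn : (-d) ≠ 0 := neg_ne_zero.mpr h
    rw [hQiff _ h, hQiff _ hn]
    have : Units.mk0 (-d) hn = -(Units.mk0 d h) := by ext; simp
    rw [this]
    exact key_neg _
  have hQhalf : ∀ (d : ZMod p) (h : d ≠ 0), Q (d * 2⁻¹) ↔ Q d := by
    intro d h
    have h2inv : (2 : ZMod p)⁻¹ ≠ 0 := inv_ne_zero h2ne
    have hdn : d * 2⁻¹ ≠ 0 := mul_ne_zero h h2inv
    rw [hQiff _ h, hQiff _ hdn]
    have : Units.mk0 (d * 2⁻¹) hdn = Units.mk0 d h * u2⁻¹ := by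
      ext
      simp [hu2]
    rw [this]
    exact key_half _
  have hflip : ∀ x y : ZMod p, x ≠ y → (Q (x - y) ↔ ¬ Q (y - x)) := by
    intro x y hxy
    have hd : y - x ≠ 0 := sub_ne_zero_of_ne (Ne.symm hxy)
    have := hQneg (y - x) hd
    rwa [show -(y - x) = x - y by ring] at this
  refine ⟨fun x y => if Q (y - x) then x else y, fun x y => if Q (y - x) then y else x,
    ?_, ?_, ?_⟩
  · intro x y hxy
    by_cases hq : Q (y - x)
    · have hq' : ¬ Q (x - y) := fun h => (hflip x y hxy).mp h hq
      simp only [if_pos hq, if_neg hq']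
      simp
    · have hq' : Q (x - y) := (hflip x y hxy).mpr hq
      simp only [if_pos hq', if_neg hq]
      simp
  · intro x y hxy
    by_cases hq : Q (y - x)
    · simp only [if_pos hq]; exact hxy
    · simp only [if_neg hq]; exact Ne.symm hxy
  · rintro ⟨x, y, hxy, hcase⟩
    have hd : y - x ≠ 0 := sub_ne_zero_of_ne (Ne.symm hxy)
    have hnd : x - y ≠ 0 := sub_ne_zero_of_ne hxy
    have h2inv : (2 : ZMod p)⁻¹ ≠ 0 := inv_ne_zero h2ne
    have hxm : x - (x + y) * 2⁻¹ = (x - y) * 2⁻¹ := by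
      field_simp
      ring
    have hxmne : x - (x + y) * 2⁻¹ ≠ 0 := by
      rw [hxm]; exact mul_ne_zero hnd h2inv
    rcases hcase with ⟨h1, h1'⟩ | ⟨h1, h1'⟩
    · have h1b : (if Q (y - x) then x else y) = x := h1
      have h1b' : (if Q (x - (x + y) * 2⁻¹) then (x + y) * 2⁻¹ else x) = (x + y) * 2⁻¹ := h1'
      have hq : Q (y - x) := by
        by_contra hq
        rw [if_neg hq] at h1b
        exact hxy h1b.symm
      have hq' : Q (x - (x + y) * 2⁻¹) := by
        by_contra hq'
        rw [if_neg hq'] at h1b'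
        exact hxmne (by rw [← h1b', sub_self])
      rw [hxm, hQhalf _ hnd] at hq'
      exact (hflip x y hxy).mp hq' hq
    · have h1b : (if Q (y - x) then y else x) = x := h1
      have h1b' : (if Q (x - (x + y) * 2⁻¹) then x else (x + y) * 2⁻¹) = (x + y) * 2⁻¹ := h1'
      have hq : ¬ Q (y - x) := by
        intro hq
        rw [if_pos hq] at h1b
        exact hxy h1b.symm
      have hq' : ¬ Q (x - (x + y) * 2⁻¹) := by
        intro hq'
        rw [if_pos hq'] at h1b'
        exact hxmne (by rw [← h1b', sub_self])
      apply hq'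
      rw [hxm, hQhalf _ hnd]
      exact (hflip x y hxy).mpr hq
end

section
/- Let p be an odd prime, let i and j be distinct elements of Z_p, and define f : Z_p → Z_p by f(x) = (x + i)·2⁻¹. Then the least positive integer m such that the m-fold iterate f^m(j) equals j is exactly the multiplicative order of 2 modulo p. -/
theorem stmt_9 (p : ℕ) (hp : p.Prime) (hodd : Odd p) (i j : ZMod p) (hij : i ≠ j) :
    IsLeast {m : ℕ | 0 < m ∧ (fun x : ZMod p => (x + i) * 2⁻¹)^[m] j = j}
      (orderOf (2 : ZMod p)) := by
  haveI : Fact p.Prime := ⟨hp⟩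
  have h2 : (2 : ZMod p) ≠ 0 := by
    intro h
    have hd : (p : ℕ) ∣ 2 := (ZMod.natCast_eq_zero_iff 2 p).mp (by exact_mod_cast h)
    have := hp.two_le
    have hle : p ≤ 2 := Nat.le_of_dvd (by norm_num) hd
    have hp2 : p = 2 := by omega
    rw [hp2] at hodd
    simp [Nat.odd_iff] at hodd
  have hinv : (2 : ZMod p) * 2⁻¹ = 1 := mul_inv_cancel₀ h2
  have key : ∀ m : ℕ, (fun x : ZMod p => (x + i) * 2⁻¹)^[m] j = (j - i) * (2⁻¹)^m + i := by
    intro m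
    induction m with
    | zero => simp
    | succ n ih =>
      rw [Function.iterate_succ_apply', ih]
      have : ((j - i) * 2⁻¹ ^ n + i + i) * 2⁻¹
          = (j - i) * 2⁻¹ ^ (n + 1) + (2 * i) * 2⁻¹ := by ring
      simp only [this]
      rw [mul_comm (2 : ZMod p) i, mul_assoc, hinv, mul_one]
  have hiff : ∀ m : ℕ, (fun x : ZMod p => (x + i) * 2⁻¹)^[m] j = j ↔ (2 : ZMod p) ^ m = 1 := by
    intro m
    rw [key m]
    constructor
    · intro h
      have h1 : (j - i) * ((2⁻¹) ^ m - 1) = 0 := by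
        have := sub_eq_zero.mpr h
        linear_combination this
      have hji : j - i ≠ 0 := sub_ne_zero.mpr (Ne.symm hij)
      have h3 : (2⁻¹ : ZMod p) ^ m = 1 := by
        rcases mul_eq_zero.mp h1 with h' | h'
        · exact absurd h' hji
        · exact sub_eq_zero.mp h'
      have : (2 : ZMod p) ^ m * (2⁻¹) ^ m = 1 := by
        rw [← mul_pow, hinv, one_pow]
      rw [h3, mul_one] at this
      exact this
    · intro h
      have h3 : (2⁻¹ : ZMod p) ^ m = 1 := by
        have : (2 : ZMod p) ^ m * (2⁻¹) ^ m = 1 := by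
          rw [← mul_pow, hinv, one_pow]
        rw [h, one_mul] at this
        exact this
      rw [h3, mul_one, sub_add_cancel]
  have hfin : IsOfFinOrder (2 : ZMod p) := by
    refine isOfFinOrder_iff_pow_eq_one.mpr ⟨p - 1, ?_, ZMod.pow_card_sub_one_eq_one h2⟩
    have := hp.two_le
    omega
  constructor
  · exact ⟨hfin.orderOf_pos, (hiff _).mpr (pow_orderOf_eq_one 2)⟩
  · rintro m ⟨hm, hmj⟩
    exact orderOf_le_of_pow_eq_one hm ((hiff m).mp hmj)
end

section
/- Let p > 3 be a prime such that for every natural number r the congruence 2^r ≡ −1 (mod p) fails. Then there exists a function g : Z_p × Z_p → {0, 1} such that for all distinct i, j ∈ Z_p: (1) g(i, j) = g(i, (j + i)·2⁻¹), i.e., g(i, ·) is constant along each orbit of the map x ↦ (x + i)·2⁻¹; and (2) g(i, j) ≠ g(j, i). -/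
theorem stmt_11 (p : ℕ) (hp : p.Prime) (hp3 : 3 < p)
    (h2 : ∀ r : ℕ, (2 : ZMod p) ^ r ≠ -1) :
    ∃ g : ZMod p → ZMod p → Fin 2,
      ∀ i j : ZMod p, i ≠ j →
        g i j = g i ((j + i) * 2⁻¹) ∧ g i j ≠ g j i := by
  classical
  haveI : Fact p.Prime := ⟨hp⟩
  have h2ne : (2 : ZMod p) ≠ 0 := by
    intro h
    have : ((2 : ℕ) : ZMod p) = 0 := by exact_mod_cast h
    rw [ZMod.natCast_eq_zero_iff] at this
    have := Nat.le_of_dvd (by norm_num) this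
    omega
  -- the equivalence relation: same orbit under multiplication by 2
  let s : Setoid (ZMod p) :=
    ⟨fun a b => ∃ m n : ℕ, 2 ^ m * a = 2 ^ n * b, by
      constructor
      · intro a; exact ⟨0, 0, rfl⟩
      · rintro a b ⟨m, n, h⟩; exact ⟨n, m, h.symm⟩
      · rintro a b c ⟨m, n, h1⟩ ⟨m', n', h2'⟩
        refine ⟨m' + m, n + n', ?_⟩
        calc 2 ^ (m' + m) * a = 2 ^ m' * (2 ^ m * a) := by ring
          _ = 2 ^ m' * (2 ^ n * b) := by rw [h1]
          _ = 2 ^ n * (2 ^ m' * b) := by ring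
          _ = 2 ^ n * (2 ^ n' * c) := by rw [h2']
          _ = 2 ^ (n + n') * c := by ring⟩
  let Q := Quotient s
  have negresp : ∀ a b : ZMod p, s.r a b → s.r (-a) (-b) := by
    rintro a b ⟨m, n, h⟩
    exact ⟨m, n, by rw [mul_neg, mul_neg, h]⟩
  let neg : Q → Q := Quotient.map (fun x => -x) negresp
  have key : ∀ d : ZMod p, d ≠ 0 → (Quotient.mk s d) ≠ (Quotient.mk s (-d)) := by
    intro d hd hEq
    obtain ⟨m, n, h⟩ := Quotient.exact hEq
    have h' : (2 : ZMod p) ^ m = -(2 ^ n) := by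
      have : (2 : ZMod p) ^ m * d = -(2 ^ n) * d := by rw [h]; ring
      exact mul_right_cancel₀ hd this
    have hfermat : (2 : ZMod p) ^ (p - 1) = 1 := ZMod.pow_card_sub_one_eq_one h2ne
    apply h2 (m + n * (p - 2))
    have hn : n + n * (p - 2) = n * (p - 1) := by
      have hpe : p - 1 = (p - 2) + 1 := by omega
      rw [hpe, Nat.mul_succ]; omega
    calc (2 : ZMod p) ^ (m + n * (p - 2))
        = 2 ^ m * 2 ^ (n * (p - 2)) := by rw [pow_add]
      _ = -(2 ^ n) * 2 ^ (n * (p - 2)) := by rw [h']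
      _ = -(2 ^ (n + n * (p - 2))) := by rw [pow_add]; ring
      _ = -(2 ^ (n * (p - 1))) := by rw [hn]
      _ = -((2 ^ (p - 1)) ^ n) := by rw [← pow_mul, Nat.mul_comm]
      _ = -1 := by rw [hfermat, one_pow]
  haveI : DecidableEq Q := Classical.decEq _
  haveI : Fintype Q := Fintype.ofFinite Q
  let e : Q ≃ Fin (Fintype.card Q) := Fintype.equivFin Q
  let f : Q → Fin 2 := fun q => if e q ≤ e (neg q) then 0 else 1
  have negneg : ∀ q : Q, neg (neg q) = q := by
    intro q
    induction q using Quotient.ind with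
    | _ a => show Quotient.mk s (-(-a)) = Quotient.mk s a; rw [neg_neg]
  have hf : ∀ q : Q, neg q ≠ q → f q ≠ f (neg q) := by
    intro q hq
    have hne : e q ≠ e (neg q) := fun h => hq ((e.injective h).symm)
    simp only [f, negneg]
    rcases lt_or_gt_of_ne hne with h | h
    · rw [if_pos h.le, if_neg (not_le.mpr h)]; decide
    · rw [if_neg (not_le.mpr h), if_pos h.le]; decide
  refine ⟨fun i j => f (Quotient.mk s (j - i)), ?_⟩
  intro i j hij
  have hd : j - i ≠ 0 := sub_ne_zero.mpr (Ne.symm hij)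
  constructor
  · show f (Quotient.mk s (j - i)) = f (Quotient.mk s ((j + i) * 2⁻¹ - i))
    apply congrArg f
    apply Quotient.sound
    refine ⟨0, 1, ?_⟩
    have h3 : (2 : ZMod p) * ((j + i) * 2⁻¹ - i) = j - i := by
      field_simp
      ring
    rw [pow_zero, pow_one, one_mul, h3]
  · show f (Quotient.mk s (j - i)) ≠ f (Quotient.mk s (i - j))
    have h1 : (Quotient.mk s (i - j)) = neg (Quotient.mk s (j - i)) := by
      show _ = Quotient.mk s (-(j - i))
      rw [neg_sub]
    rw [h1]
    apply hf
    rw [show neg (Quotient.mk s (j - i)) = Quotient.mk s (-(j - i)) from rfl]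
    exact fun h => key _ hd h.symm
end

section
/- There are infinitely many primes p such that for every natural number r, 2^r is not congruent to −1 modulo p. -/
theorem stmt_13 :
    {p : ℕ | p.Prime ∧ ∀ r : ℕ, (2 : ZMod p) ^ r ≠ -1}.Infinite := by
  have h : {p : ℕ | p.Prime ∧ (p : ZMod 8) = 7}.Infinite :=
    Nat.infinite_setOfPred_prime_and_eq_mod (a := 7) (by decide)
  refine h.mono ?_
  rintro p ⟨hp, hmod⟩
  have hp8 : p % 8 = 7 := by
    have hv := ZMod.val_natCast (n := 8) p
    rw [hmod] at hv
    exact hv.symm.trans (by decide)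
  haveI := Fact.mk hp
  refine ⟨hp, fun r hr => ?_⟩
  have hne2 : p ≠ 2 := by omega
  have h2 : IsSquare (2 : ZMod p) := by
    rw [ZMod.exists_sq_eq_two_iff hne2]
    omega
  have hneg : ¬ IsSquare (-1 : ZMod p) := by
    rw [ZMod.exists_sq_eq_neg_one_iff]
    omega
  obtain ⟨s, hs⟩ := h2
  exact hneg ⟨s ^ r, by rw [← hr, hs]; ring⟩
end

section
/- Let n ≥ r ≥ 2 be integers and let W be an independent set of vertices in the graph G(n, r, r−1). Then |W| · C(r, 2) ≤ ⌊(n − r + 2)/2⌋ · C(n, r − 2), where C(a, b) denotes the binomial coefficient. -/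
theorem stmt_14 (n r : ℕ) (hr : 2 ≤ r) (hn : r ≤ n)
    (W : Finset {A : Finset (Fin n) // A.card = r})
    (hW : ∀ a ∈ W, ∀ b ∈ W, ¬ (distGraph n r (r - 1)).Adj a b) :
    W.card * r.choose 2 ≤ ((n - r + 2) / 2) * n.choose (r - 2) := by
  classical
  set S := (Finset.univ : Finset (Fin n)).powersetCard (r - 2) with hS
  have hSc : S.card = n.choose (r - 2) := by
    simp [hS, Finset.card_powersetCard]
  -- each A ∈ W contains exactly `r.choose 2` members of S
  have h1 : ∀ A : {A : Finset (Fin n) // A.card = r},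
      (S.filter (fun T => T ⊆ A.1)).card = r.choose 2 := by
    intro A
    have he : S.filter (fun T => T ⊆ A.1) = A.1.powersetCard (r - 2) := by
      ext T
      simp only [Finset.mem_filter, hS, Finset.mem_powersetCard, Finset.subset_univ,
        true_and]
      tauto
    rw [he, Finset.card_powersetCard, A.2, Nat.choose_symm hr]
  -- key bound: each T ∈ S is contained in at most (n-r+2)/2 members of W
  have h3 : ∀ T ∈ S, (W.filter (fun A => T ⊆ A.1)).card ≤ (n - r + 2) / 2 := by
    intro T hT
    have hTc : T.card = r - 2 := (Finset.mem_powersetCard.mp hT).2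
    set M := W.filter (fun A => T ⊆ A.1) with hM
    set F := M.image (fun A => A.1 \ T) with hF
    -- members of M intersect pairwise exactly in T
    have hinter : ∀ A ∈ M, ∀ B ∈ M, A ≠ B → A.1 ∩ B.1 = T := by
      intro A hA B hB hne
      rw [hM, Finset.mem_filter] at hA hB
      have hsub : T ⊆ A.1 ∩ B.1 := Finset.subset_inter hA.2 hB.2
      have hle : (A.1 ∩ B.1).card ≤ r - 1 := by
        have h' : (A.1 ∩ B.1).card ≤ r := by
          calc (A.1 ∩ B.1).card ≤ A.1.card := Finset.card_le_card Finset.inter_subset_left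
          _ = r := A.2
        rcases Nat.lt_or_ge (A.1 ∩ B.1).card r with h | h
        · omega
        · exfalso
          have heq : A.1 ∩ B.1 = A.1 := by
            apply Finset.eq_of_subset_of_card_le Finset.inter_subset_left
            rw [A.2]; omega
          have hAB : A.1 ⊆ B.1 := by
            rw [← heq]; exact Finset.inter_subset_right
          have : A.1 = B.1 := Finset.eq_of_subset_of_card_le hAB (by rw [A.2, B.2])
          exact hne (Subtype.ext this)
      have hne' : (A.1 ∩ B.1).card ≠ r - 1 := by
        intro hcard
        exact hW A hA.1 B hB.1 ⟨hne, hcard⟩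
      have : (A.1 ∩ B.1).card ≤ r - 2 := by omega
      exact (Finset.eq_of_subset_of_card_le hsub (by omega)).symm
    -- the map A ↦ A.1 \ T is injective on M
    have hinj : Set.InjOn (fun A : {A : Finset (Fin n) // A.card = r} => A.1 \ T) M := by
      intro A hA B hB hAB
      have hA' := (Finset.mem_filter.mp hA).2
      have hB' := (Finset.mem_filter.mp hB).2
      have : A.1 = B.1 := by
        rw [← Finset.union_sdiff_of_subset hA', ← Finset.union_sdiff_of_subset hB']
        simpa using congrArg (T ∪ ·) hAB
      exact Subtype.ext this
    have hFcard : F.card = M.card := Finset.card_image_of_injOn hinj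
    -- elements of F have card 2 and are pairwise disjoint
    have hcard2 : ∀ D ∈ F, D.card = 2 := by
      intro D hD
      rw [hF, Finset.mem_image] at hD
      obtain ⟨A, hA, rfl⟩ := hD
      have hA' := (Finset.mem_filter.mp hA).2
      rw [Finset.card_sdiff_of_subset hA', A.2, hTc]
      omega
    have hdisj : ∀ D₁ ∈ F, ∀ D₂ ∈ F, D₁ ≠ D₂ → Disjoint (id D₁) (id D₂) := by
      intro D₁ hD₁ D₂ hD₂ hne
      rw [hF, Finset.mem_image] at hD₁ hD₂
      obtain ⟨A, hA, rfl⟩ := hD₁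
      obtain ⟨B, hB, rfl⟩ := hD₂
      have hABne : A ≠ B := fun h => hne (by rw [h])
      have hi := hinter A hA B hB hABne
      simp only [id]
      rw [Finset.disjoint_left]
      intro x hx hx'
      have hxA := (Finset.mem_sdiff.mp hx).1
      have hxB := (Finset.mem_sdiff.mp hx').1
      have hxT : x ∈ T := by rw [← hi]; exact Finset.mem_inter.mpr ⟨hxA, hxB⟩
      exact (Finset.mem_sdiff.mp hx).2 hxT
    -- union of F sits inside univ \ T
    have hsubU : F.biUnion id ⊆ Finset.univ \ T := by
      intro x hx
      rw [Finset.mem_biUnion] at hx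
      obtain ⟨D, hD, hxD⟩ := hx
      rw [hF, Finset.mem_image] at hD
      obtain ⟨A, hA, rfl⟩ := hD
      simp only [id, Finset.mem_sdiff] at hxD ⊢
      exact ⟨Finset.mem_univ x, hxD.2⟩
    have hbi : (F.biUnion id).card = ∑ D ∈ F, (id D).card :=
      Finset.card_biUnion hdisj
    have hsum : ∑ D ∈ F, (id D).card = 2 * F.card := by
      simp only [id]
      rw [Finset.sum_congr rfl hcard2, Finset.sum_const, smul_eq_mul, mul_comm]
    have hU : (Finset.univ \ T : Finset (Fin n)).card = n - (r - 2) := by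
      rw [Finset.card_sdiff_of_subset (Finset.subset_univ T), hTc, Finset.card_univ,
        Fintype.card_fin]
    have : 2 * F.card ≤ n - (r - 2) := by
      rw [← hsum, ← hbi, ← hU]
      exact Finset.card_le_card hsubU
    have h2 : M.card * 2 ≤ n - r + 2 := by omega
    exact Nat.le_div_iff_mul_le (by norm_num) |>.mpr h2
  -- double counting
  have hdc : ∑ A ∈ W, (S.filter (fun T => T ⊆ A.1)).card
      = ∑ T ∈ S, (W.filter (fun A => T ⊆ A.1)).card := by
    simp only [Finset.card_filter]
    exact Finset.sum_comm
  calc W.card * r.choose 2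
      = ∑ A ∈ W, (S.filter (fun T => T ⊆ A.1)).card := by
        rw [Finset.sum_congr rfl (fun A _ => h1 A), Finset.sum_const, smul_eq_mul]
    _ = ∑ T ∈ S, (W.filter (fun A => T ⊆ A.1)).card := hdc
    _ ≤ ∑ T ∈ S, (n - r + 2) / 2 := Finset.sum_le_sum h3
    _ = ((n - r + 2) / 2) * n.choose (r - 2) := by
        rw [Finset.sum_const, smul_eq_mul, hSc, mul_comm]
end

section
/- Let R be a commutative ring, and let X, Y, W be finite subsets of R with X ∩ W = ∅, Y ∩ W = ∅ and |X| = |Y| = h. If σ_i(X ∪ W) = σ_i(Y ∪ W) for every i with 1 ≤ i ≤ h, then σ_i(X) = σ_i(Y) for every i with 1 ≤ i ≤ h. -/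
/-- The `i`-th elementary symmetric function of the elements of a finite set `M`
in a commutative ring: the sum over all `i`-element subsets `S` of `M` of the
product of the elements of `S`. -/
def esymmSet {R : Type*} [CommRing R] (M : Finset R) (i : ℕ) : R :=
  ∑ S ∈ M.powersetCard i, ∏ t ∈ S, t


open Polynomial

lemma esymmSet_coeff {R : Type*} [CommRing R] (M : Finset R) {i : ℕ} (hi : i ≤ M.card) :
    (∏ a ∈ M, (Polynomial.X + C a)).coeff (M.card - i) = esymmSet M i := by
  have h1 := Finset.prod_X_add_C_coeff M (fun a => a) (k := M.card - i) (Nat.sub_le _ _)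
  rw [h1, Nat.sub_sub_self hi]
  rfl

lemma esymmSet_zero {R : Type*} [CommRing R] (M : Finset R) : esymmSet M 0 = 1 := by
  simp [esymmSet]

theorem stmt_16 {R : Type*} [CommRing R] [DecidableEq R] (h : ℕ) (X Y W : Finset R)
    (hXW : X ∩ W = ∅) (hYW : Y ∩ W = ∅)
    (hX : X.card = h) (hY : Y.card = h)
    (hsym : ∀ i, 1 ≤ i → i ≤ h → esymmSet (X ∪ W) i = esymmSet (Y ∪ W) i) :
    ∀ i, 1 ≤ i → i ≤ h → esymmSet X i = esymmSet Y i := by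
  intro i hi1 hih
  nontriviality R
  have hdX : Disjoint X W := Finset.disjoint_iff_inter_eq_empty.mpr hXW
  have hdY : Disjoint Y W := Finset.disjoint_iff_inter_eq_empty.mpr hYW
  set n := W.card with hn
  set PX : Polynomial R := ∏ a ∈ X, (Polynomial.X + C a) with hPX
  set PY : Polynomial R := ∏ a ∈ Y, (Polynomial.X + C a) with hPY
  set PW : Polynomial R := ∏ a ∈ W, (Polynomial.X + C a) with hPW
  have monW : PW.Monic := monic_prod_of_monic _ _ fun a _ => monic_X_add_C a
  have monX : PX.Monic := monic_prod_of_monic _ _ fun a _ => monic_X_add_C a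
  have monY : PY.Monic := monic_prod_of_monic _ _ fun a _ => monic_X_add_C a
  have degW : PW.natDegree = n := by
    rw [hPW, natDegree_prod_of_monic _ _ fun a _ => monic_X_add_C a]
    simp [natDegree_X_add_C, hn]
  have degX : PX.natDegree = h := by
    rw [hPX, natDegree_prod_of_monic _ _ fun a _ => monic_X_add_C a]
    simp [natDegree_X_add_C, hX]
  have degY : PY.natDegree = h := by
    rw [hPY, natDegree_prod_of_monic _ _ fun a _ => monic_X_add_C a]
    simp [natDegree_X_add_C, hY]
  have cardXW : (X ∪ W).card = h + n := by
    rw [Finset.card_union_of_disjoint hdX, hX]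
  have cardYW : (Y ∪ W).card = h + n := by
    rw [Finset.card_union_of_disjoint hdY, hY]
  -- key: PX * PW = PY * PW on all coefficients ≥ n
  have key : ∀ k, n ≤ k → (PX * PW).coeff k = (PY * PW).coeff k := by
    intro k hk
    by_cases hk2 : k ≤ h + n
    · have hXmul : PX * PW = ∏ a ∈ X ∪ W, (Polynomial.X + C a) :=
        (Finset.prod_union hdX).symm
      have hYmul : PY * PW = ∏ a ∈ Y ∪ W, (Polynomial.X + C a) :=
        (Finset.prod_union hdY).symm
      have c1 := esymmSet_coeff (X ∪ W) (i := h + n - k) (by omega)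
      have c2 := esymmSet_coeff (Y ∪ W) (i := h + n - k) (by omega)
      rw [cardXW, show h + n - (h + n - k) = k from by omega] at c1
      rw [cardYW, show h + n - (h + n - k) = k from by omega] at c2
      rw [hXmul, hYmul, c1, c2]
      rcases Nat.eq_zero_or_pos (h + n - k) with h0 | h0
      · rw [h0, esymmSet_zero, esymmSet_zero]
      · exact hsym _ h0 (by omega)
    · rw [coeff_eq_zero_of_natDegree_lt (lt_of_le_of_lt natDegree_mul_le (by omega)),
        coeff_eq_zero_of_natDegree_lt (lt_of_le_of_lt natDegree_mul_le (by omega))]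
  -- conclude PX = PY
  have hQ : PX = PY := by
    by_contra hne
    set Q : Polynomial R := PX - PY with hQdef
    have hQne : Q ≠ 0 := sub_ne_zero.mpr hne
    have hQdeg : Q.natDegree ≤ h := by
      refine (natDegree_sub_le _ _).trans ?_
      omega
    have hzero : (Q * PW).coeff (Q.natDegree + n) = 0 := by
      rw [hQdef, sub_mul, coeff_sub, key _ (by omega), sub_self]
    rw [← degW, coeff_mul_degree_add_degree, monW.leadingCoeff, mul_one] at hzero
    exact leadingCoeff_ne_zero.mpr hQne hzero
  have e1 : PX.coeff (h - i) = esymmSet X i := by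
    rw [← hX]; exact esymmSet_coeff X (by omega)
  have e2 : PY.coeff (h - i) = esymmSet Y i := by
    rw [← hY]; exact esymmSet_coeff Y (by omega)
  rw [← e1, ← e2, hQ]
end

section
/- Let n ≥ r > s ≥ 0 be integers, set h = r − s, and let m ≥ 2 be an integer. Suppose there exists a function a : {0, 1, …, n−1} → Z_m such that any two distinct h-element subsets S, T of {0, 1, …, n−1} have distinct sums, i.e., Σ_{i∈S} a(i) = Σ_{i∈T} a(i) implies S = T. Then the chromatic number of G(n, r, s) satisfies χ(G(n, r, s)) ≤ m. -/
theorem stmt_17 (n r s m : ℕ) (hs : s < r) (hr : r ≤ n) (hm : 2 ≤ m)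
    (a : Fin n → ZMod m)
    (ha : ∀ S T : Finset (Fin n), S.card = r - s → T.card = r - s →
      (∑ i ∈ S, a i) = (∑ i ∈ T, a i) → S = T) :
    (distGraph n r s).chromaticNumber ≤ (m : ℕ∞) := by
  haveI : NeZero m := ⟨by omega⟩
  have C : (distGraph n r s).Coloring (ZMod m) := by
    refine SimpleGraph.Coloring.mk (fun A => ∑ i ∈ A.1, a i) ?_
    rintro A B ⟨hAB, hcard⟩ hsum
    apply hAB
    have h1 : (A.1 \ B.1).card = r - s := by
      have := Finset.card_sdiff_add_card_inter A.1 B.1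
      have := A.2
      omega
    have h2 : (B.1 \ A.1).card = r - s := by
      have h := Finset.card_sdiff_add_card_inter B.1 A.1
      rw [Finset.inter_comm] at h
      have := B.2
      omega
    have hsplitA : (∑ i ∈ A.1, a i) = (∑ i ∈ A.1 ∩ B.1, a i) + (∑ i ∈ A.1 \ B.1, a i) :=
      (Finset.sum_inter_add_sum_sdiff A.1 B.1 a).symm
    have hsplitB : (∑ i ∈ B.1, a i) = (∑ i ∈ A.1 ∩ B.1, a i) + (∑ i ∈ B.1 \ A.1, a i) := by
      rw [Finset.inter_comm]
      exact (Finset.sum_inter_add_sum_sdiff B.1 A.1 a).symm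
    have hsum2 : (∑ i ∈ A.1 \ B.1, a i) = (∑ i ∈ B.1 \ A.1, a i) := by
      rw [hsplitA, hsplitB] at hsum
      exact add_left_cancel hsum
    have := ha _ _ h1 h2 hsum2
    have hempty : A.1 \ B.1 = ∅ := by
      have hd : Disjoint (A.1 \ B.1) (B.1 \ A.1) := disjoint_sdiff_sdiff
      rw [this] at hd ⊢
      simpa using disjoint_self.mp hd
    have hsub : A.1 ⊆ B.1 := Finset.sdiff_eq_empty_iff_subset.mp hempty
    exact Subtype.ext (Finset.eq_of_subset_of_card_le hsub (B.2.trans A.2.symm).le)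
  simpa [ZMod.card] using C.colorable.chromaticNumber_le
end

section
/- Let p > 3 be a prime such that for every natural number r the congruence 2^r ≡ −1 (mod p) fails. Then χ(G(p + 1, 3, 2)) = p, i.e., for n = p + 1 the chromatic number of G(n, 3, 2) equals exactly n − 1. -/
lemma invol_bool {α : Type*} (σ : α → α) (h2 : ∀ x, σ (σ x) = x)
    (hfp : ∀ x, σ x ≠ x) : ∃ φ : α → Bool, ∀ x, φ (σ x) = !(φ x) := by
  classical
  let s : Setoid α := ⟨fun x y => y = x ∨ y = σ x, by
    constructor
    · intro x; exact Or.inl rfl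
    · rintro x y (rfl | rfl)
      · exact Or.inl rfl
      · right; rw [h2]
    · rintro x y z (rfl | rfl) h
      · exact h
      · rcases h with rfl | rfl
        · right; rfl
        · left; rw [h2]⟩
  refine ⟨fun x => decide ((Quotient.mk s x).out = x), fun x => ?_⟩
  have hq : (Quotient.mk s (σ x)) = Quotient.mk s x :=
    Quotient.sound (Or.inr (h2 x).symm)
  have hmem : (Quotient.mk s x).out = x ∨ (Quotient.mk s x).out = σ x := by
    have h := Quotient.exact (Quotient.out_eq (Quotient.mk s x))
    rcases (h : x = _ ∨ x = σ _) with h' | h'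
    · exact Or.inl h'.symm
    · right
      have hc := congrArg σ h'
      rw [h2] at hc
      exact hc.symm
  show decide ((Quotient.mk s (σ x)).out = σ x) = ! decide ((Quotient.mk s x).out = x)
  rw [hq]
  rcases hmem with h | h
  · rw [h]
    have : x ≠ σ x := fun hh => hfp x hh.symm
    simp [this]
  · rw [h]
    have : σ x ≠ x := hfp x
    simp [this]

lemma group_sign {G : Type*} [Group G] (g : G) (hgg : g * g = 1) (hne : g ≠ 1) :
    ∃ ψ : G → Bool, ∀ x, ψ (g * x) = !ψ x :=
  invol_bool (fun x : G => g * x)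
    (fun x => by show g * (g * x) = x; rw [← mul_assoc, hgg, one_mul])
    (fun x hx => by
      have hx' : g * x = x := hx
      exact hne (by rwa [mul_eq_right] at hx'))

lemma sign_fun_abs {G : Type*} [CommGroup G] [Finite G] (a b : G) (hbb : b * b = 1)
    (hb : ∀ n : ℕ, a ^ n ≠ b) :
    ∃ φ : G → Bool, (∀ x, φ (b * x) = !φ x) ∧ (∀ x, φ (a * x) = φ x) := by
  set U := Subgroup.zpowers a with hU
  have hbU : b ∉ U := by
    intro hm
    obtain ⟨n, hn⟩ := (isOfFinOrder_of_finite a).mem_powers_iff_mem_zpowers.mpr hm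
    exact hb n hn
  have hne : ((b : G) : G ⧸ U) ≠ 1 := by
    rw [Ne, QuotientGroup.eq_one_iff]; exact hbU
  have hgg : ((b : G) : G ⧸ U) * ((b : G) : G ⧸ U) = 1 := by
    rw [← QuotientGroup.mk_mul, hbb, QuotientGroup.mk_one]
  obtain ⟨ψ, hψ⟩ := group_sign _ hgg hne
  refine ⟨fun x => ψ (x : G ⧸ U), fun x => ?_, fun x => ?_⟩
  · show ψ ((b * x : G) : G ⧸ U) = !ψ (x : G ⧸ U)
    rw [QuotientGroup.mk_mul]; exact hψ _
  · show ψ ((a * x : G) : G ⧸ U) = ψ (x : G ⧸ U)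
    rw [QuotientGroup.mk_mul]
    have ha : ((a : G) : G ⧸ U) = 1 := by
      rw [QuotientGroup.eq_one_iff]; exact Subgroup.mem_zpowers a
    rw [ha, one_mul]

lemma sign_fun (p : ℕ) (hp : p.Prime) (hp3 : 3 < p)
    (h2 : ∀ r : ℕ, (2 : ZMod p) ^ r ≠ -1) :
    ∃ φ : ZMod p → Bool, (∀ x : ZMod p, x ≠ 0 → φ (-x) = !(φ x)) ∧
      (∀ x : ZMod p, x ≠ 0 → φ (2 * x) = φ x) := by
  haveI : Fact p.Prime := ⟨hp⟩
  have h20 : (2 : ZMod p) ≠ 0 := by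
    have h : ((2:ℕ) : ZMod p) ≠ 0 := by
      rw [Ne, ZMod.natCast_eq_zero_iff]
      intro hd
      exact absurd (Nat.le_of_dvd (by norm_num) hd) (by omega)
    simpa using h
  obtain ⟨φu, hφ1, hφ2⟩ := sign_fun_abs (G := (ZMod p)ˣ) (Units.mk0 2 h20) (-1)
    (by norm_num)
    (by
      intro n hn
      apply h2 n
      have := congrArg (Units.val) hn
      simpa using this)
  classical
  refine ⟨fun x => if h : x = 0 then false else φu (Units.mk0 x h), ?_, ?_⟩
  · intro x hx
    have hnx : -x ≠ 0 := neg_ne_zero.mpr hx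
    show (if h : -x = 0 then false else φu (Units.mk0 (-x) h)) =
      !(if h : x = 0 then false else φu (Units.mk0 x h))
    rw [dif_neg hnx, dif_neg hx]
    have hu : Units.mk0 (-x) hnx = (-1 : (ZMod p)ˣ) * Units.mk0 x hx := by
      ext; simp
    rw [hu]
    exact hφ1 _
  · intro x hx
    have hnx : 2 * x ≠ 0 := mul_ne_zero h20 hx
    show (if h : 2*x = 0 then false else φu (Units.mk0 (2*x) h)) =
      (if h : x = 0 then false else φu (Units.mk0 x h))
    rw [dif_neg hnx, dif_neg hx]
    have hu : Units.mk0 (2*x) hnx = Units.mk0 2 h20 * Units.mk0 x hx := by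
      ext; simp
    rw [hu]
    exact hφ2 _


def eF (p : ℕ) (i : Fin (p+1)) : ZMod p := (i.val : ZMod p)

def headF (p : ℕ) (φ : ZMod p → Bool) (B : Finset (Fin (p+1))) : ZMod p :=
  ∑ x ∈ B.filter (fun x => ∀ y ∈ B, y ≠ x → φ (eF p y - eF p x) = true), eF p x

noncomputable def colF (p : ℕ) (φ : ZMod p → Bool) (A : Finset (Fin (p+1))) : ZMod p :=
  (∑ i ∈ (A.erase (Fin.last p)), eF p i) +
    (if Fin.last p ∈ A then headF p φ (A.erase (Fin.last p)) else 0)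

lemma eF_inj (p : ℕ) (hp : 0 < p) {i j : Fin (p+1)} (hi : i ≠ Fin.last p)
    (hj : j ≠ Fin.last p) (h : eF p i = eF p j) : i = j := by
  haveI : NeZero p := ⟨hp.ne'⟩
  have hi' : i.val < p := lt_of_le_of_ne (Nat.lt_succ_iff.mp i.isLt)
    (fun hh => hi (Fin.ext hh))
  have hj' : j.val < p := lt_of_le_of_ne (Nat.lt_succ_iff.mp j.isLt)
    (fun hh => hj (Fin.ext hh))
  have := congrArg (ZMod.val) h
  rw [eF, eF, ZMod.val_natCast_of_lt hi', ZMod.val_natCast_of_lt hj'] at this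
  exact Fin.ext this

lemma head_pair (p : ℕ) (hp : 0 < p) (φ : ZMod p → Bool)
    (hφ1 : ∀ x : ZMod p, x ≠ 0 → φ (-x) = !(φ x))
    {a b : Fin (p+1)} (hab : a ≠ b) (ha : a ≠ Fin.last p) (hb : b ≠ Fin.last p) :
    (headF p φ {a,b} = eF p a ∧ φ (eF p b - eF p a) = true) ∨
    (headF p φ {a,b} = eF p b ∧ φ (eF p b - eF p a) = false) := by
  set d : ZMod p := eF p b - eF p a with hd
  have hdne : d ≠ 0 := sub_ne_zero.mpr (fun hh => hab (eF_inj p hp hb ha hh).symm)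
  have hba : φ (eF p a - eF p b) = !(φ d) := by
    rw [← neg_sub, hφ1 d hdne]
  by_cases hc : φ d = true
  · left
    refine ⟨?_, hc⟩
    have hf : ({a,b} : Finset (Fin (p+1))).filter
        (fun x => ∀ y ∈ ({a,b} : Finset (Fin (p+1))), y ≠ x → φ (eF p y - eF p x) = true)
        = {a} := by
      ext z
      simp only [Finset.mem_filter, Finset.mem_insert, Finset.mem_singleton]
      constructor
      · rintro ⟨(rfl | rfl), hq⟩
        · rfl
        · exfalso
          have := hq a (Or.inl rfl) hab
          rw [hba, hc] at this
          simp at this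
      · rintro rfl
        refine ⟨Or.inl rfl, fun y hy hne => ?_⟩
        rcases hy with rfl | rfl
        · exact absurd rfl hne
        · exact hc
    rw [headF, hf, Finset.sum_singleton]
  · have hc' : φ d = false := by simpa using hc
    right
    refine ⟨?_, hc'⟩
    have hf : ({a,b} : Finset (Fin (p+1))).filter
        (fun x => ∀ y ∈ ({a,b} : Finset (Fin (p+1))), y ≠ x → φ (eF p y - eF p x) = true)
        = {b} := by
      ext z
      simp only [Finset.mem_filter, Finset.mem_insert, Finset.mem_singleton]
      constructor
      · rintro ⟨(rfl | rfl), hq⟩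
        · exfalso
          have := hq b (Or.inr rfl) (Ne.symm hab)
          rw [← hd, hc'] at this
          simp at this
        · rfl
      · rintro rfl
        refine ⟨Or.inr rfl, fun y hy hne => ?_⟩
        rcases hy with rfl | rfl
        · rw [hba, hc']; rfl
        · exact absurd rfl hne
    rw [headF, hf, Finset.sum_singleton]

lemma colF_of_not_mem (p : ℕ) (φ : ZMod p → Bool) {A : Finset (Fin (p+1))}
    (h : Fin.last p ∉ A) : colF p φ A = ∑ i ∈ A, eF p i := by
  rw [colF, Finset.erase_eq_of_notMem h, if_neg h, add_zero]

lemma colF_proper (p : ℕ) (hpr : p.Prime) (hp3 : 3 < p) (φ : ZMod p → Bool)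
    (hφ1 : ∀ x : ZMod p, x ≠ 0 → φ (-x) = !(φ x))
    (hφ2 : ∀ x : ZMod p, x ≠ 0 → φ (2*x) = φ x)
    {A B : Finset (Fin (p+1))} (hA : A.card = 3) (hB : B.card = 3)
    (hne : A ≠ B) (hint : (A ∩ B).card = 2) : colF p φ A ≠ colF p φ B := by
  haveI : Fact p.Prime := ⟨hpr⟩
  haveI : NeZero p := ⟨by omega⟩
  have hp : 0 < p := by omega
  have h2ne : (2 : ZMod p) ≠ 0 := by
    have h : ((2:ℕ) : ZMod p) ≠ 0 := by
      rw [Ne, ZMod.natCast_eq_zero_iff]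
      intro hd
      exact absurd (Nat.le_of_dvd two_pos hd) (by omega)
    simpa using h
  set L := Fin.last p with hL
  set P := A ∩ B with hP
  have hPA : P ⊆ A := Finset.inter_subset_left
  have hPB : P ⊆ B := Finset.inter_subset_right
  have hcx : (A \ P).card = 1 := by rw [Finset.card_sdiff_of_subset hPA, hA, hint]
  have hcy : (B \ P).card = 1 := by
    rw [Finset.card_sdiff_of_subset hPB, hB, hint]
  obtain ⟨x, hx⟩ := Finset.card_eq_one.mp hcx
  obtain ⟨y, hy⟩ := Finset.card_eq_one.mp hcy
  have hxP : x ∉ P := by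
    have : x ∈ A \ P := hx ▸ Finset.mem_singleton_self x
    exact (Finset.mem_sdiff.mp this).2
  have hyP : y ∉ P := by
    have : y ∈ B \ P := hy ▸ Finset.mem_singleton_self y
    exact (Finset.mem_sdiff.mp this).2
  have hAx : insert x P = A := by
    rw [Finset.insert_eq, ← hx, Finset.sdiff_union_of_subset hPA]
  have hBy : insert y P = B := by
    rw [Finset.insert_eq, ← hy, Finset.sdiff_union_of_subset hPB]
  have hxy : x ≠ y := by
    rintro rfl
    exact hne (hAx ▸ hBy ▸ rfl)
  have hxB : x ∉ B := fun hmem => hxP (Finset.mem_inter.mpr ⟨hAx ▸ Finset.mem_insert_self x P, hmem⟩)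
  have hyA : y ∉ A := fun hmem => hyP (Finset.mem_inter.mpr ⟨hmem, hBy ▸ Finset.mem_insert_self y P⟩)
  obtain ⟨a, b, hab, hPab⟩ := Finset.card_eq_two.mp hint
  have haL : a ∈ P := hPab ▸ Finset.mem_insert_self a {b}
  have hbL : b ∈ P := hPab ▸ Finset.mem_insert.mpr (Or.inr (Finset.mem_singleton_self b))
  by_cases hLP : L ∈ P
  case pos =>
    -- P = {L, c}
    have hcase : L = a ∨ L = b := by
      rw [hPab] at hLP
      simpa using hLP
    obtain ⟨c, hcL, hPLc⟩ : ∃ c, c ≠ L ∧ P = {L, c} := by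
      rcases hcase with h | h
      · exact ⟨b, fun hh => (h ▸ hab) hh.symm, by rw [hPab, h]⟩
      · exact ⟨a, fun hh => (h ▸ hab) hh, by rw [hPab, h, Finset.pair_comm]⟩
    have hxL : x ≠ L := fun hh => hxP (hh ▸ hLP)
    have hyL : y ≠ L := fun hh => hyP (hh ▸ hLP)
    have hxc : x ≠ c := fun hh => hxP (hh ▸ (hPLc ▸ Finset.mem_insert.mpr (Or.inr (Finset.mem_singleton_self c))))
    have hyc : y ≠ c := fun hh => hyP (hh ▸ (hPLc ▸ Finset.mem_insert.mpr (Or.inr (Finset.mem_singleton_self c))))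
    have colA : colF p φ A = (eF p x + eF p c) + headF p φ {x, c} := by
      have hA' : A = insert L (insert x {c}) := by
        rw [← hAx, hPLc]
        show insert x (insert L {c}) = insert L (insert x {c})
        exact Finset.insert_comm x L {c}
      have hLmem : L ∈ A := hA' ▸ Finset.mem_insert_self L _
      have herase : A.erase L = insert x {c} := by
        rw [hA']
        apply Finset.erase_insert
        simp only [Finset.mem_insert, Finset.mem_singleton]
        rintro (h | h)
        · exact hxL h.symm
        · exact hcL h.symm
      rw [colF, if_pos hLmem, herase]
      congr 1
      rw [Finset.sum_insert (by simpa using hxc), Finset.sum_singleton]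
    have colB : colF p φ B = (eF p y + eF p c) + headF p φ {y, c} := by
      have hB' : B = insert L (insert y {c}) := by
        rw [← hBy, hPLc]
        show insert y (insert L {c}) = insert L (insert y {c})
        exact Finset.insert_comm y L {c}
      have hLmem : L ∈ B := hB' ▸ Finset.mem_insert_self L _
      have herase : B.erase L = insert y {c} := by
        rw [hB']
        apply Finset.erase_insert
        simp only [Finset.mem_insert, Finset.mem_singleton]
        rintro (h | h)
        · exact hyL h.symm
        · exact hcL h.symm
      rw [colF, if_pos hLmem, herase]
      congr 1
      rw [Finset.sum_insert (by simpa using hyc), Finset.sum_singleton]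
    rw [colA, colB]
    intro heq
    have hxyE : eF p x ≠ eF p y := fun hh => hxy (eF_inj p hp hxL hyL hh)
    have hdx : eF p c - eF p x ≠ 0 :=
      sub_ne_zero.mpr (fun hh => hxc ((eF_inj p hp (fun h => hcL h) hxL hh).symm))
    have hdy : eF p c - eF p y ≠ 0 :=
      sub_ne_zero.mpr (fun hh => hyc ((eF_inj p hp (fun h => hcL h) hyL hh).symm))
    rcases head_pair p hp φ hφ1 hxc hxL (fun h => hcL h) with ⟨e1, f1⟩ | ⟨e1, f1⟩ <;>
      rcases head_pair p hp φ hφ1 hyc hyL (fun h => hcL h) with ⟨e2, f2⟩ | ⟨e2, f2⟩ <;>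
      rw [e1, e2] at heq
    · -- both heads are x resp. y : 2x = 2y
      apply hxyE
      apply mul_left_cancel₀ h2ne
      linear_combination heq
    · -- x head, y tail: contradiction via hφ2
      have hkey : eF p c - eF p y = 2 * (eF p c - eF p x) := by linear_combination heq
      rw [hkey, hφ2 _ hdx, f1] at f2
      simp at f2
    · have hkey : eF p c - eF p x = 2 * (eF p c - eF p y) := by linear_combination -heq
      rw [hkey, hφ2 _ hdy, f2] at f1
      simp at f1
    · apply hxyE
      linear_combination heq
  case neg =>
    have haLne : a ≠ L := fun hh => hLP (hh ▸ haL)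
    have hbLne : b ≠ L := fun hh => hLP (hh ▸ hbL)
    have hsumP : ∑ i ∈ P, eF p i = eF p a + eF p b := by
      rw [hPab, Finset.sum_pair hab]
    by_cases hLx : L = x
    · -- A contains L, B does not
      have hLB : L ∉ B := hLx ▸ hxB
      have colA : colF p φ A = (eF p a + eF p b) + headF p φ {a, b} := by
        have hLmem : L ∈ A := by rw [← hAx, ← hLx]; exact Finset.mem_insert_self L P
        have herase : A.erase L = P := by
          rw [← hAx, ← hLx, Finset.erase_insert hLP]
        rw [colF, if_pos hLmem, herase, hsumP, hPab]
      have colB : colF p φ B = eF p y + (eF p a + eF p b) := by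
        rw [colF_of_not_mem p φ hLB, ← hBy, Finset.sum_insert hyP, hsumP]
      rw [colA, colB]
      intro heq
      have hyLne : y ≠ L := fun hh => hLB (hh ▸ (hBy ▸ Finset.mem_insert_self y P))
      rcases head_pair p hp φ hφ1 hab haLne hbLne with ⟨e1, _⟩ | ⟨e1, _⟩ <;> rw [e1] at heq
      · have : eF p a = eF p y := by linear_combination heq
        exact hyP ((eF_inj p hp haLne hyLne this) ▸ haL)
      · have : eF p b = eF p y := by linear_combination heq
        exact hyP ((eF_inj p hp hbLne hyLne this) ▸ hbL)
    · by_cases hLy : L = y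
      · -- B contains L, A does not
        have hLA : L ∉ A := hLy ▸ hyA
        have colB : colF p φ B = (eF p a + eF p b) + headF p φ {a, b} := by
          have hLmem : L ∈ B := by rw [← hBy, ← hLy]; exact Finset.mem_insert_self L P
          have herase : B.erase L = P := by
            rw [← hBy, ← hLy, Finset.erase_insert hLP]
          rw [colF, if_pos hLmem, herase, hsumP, hPab]
        have colA : colF p φ A = eF p x + (eF p a + eF p b) := by
          rw [colF_of_not_mem p φ hLA, ← hAx, Finset.sum_insert hxP, hsumP]
        rw [colA, colB]
        intro heq
        have hxLne : x ≠ L := fun hh => hLA (hh ▸ (hAx ▸ Finset.mem_insert_self x P))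
        rcases head_pair p hp φ hφ1 hab haLne hbLne with ⟨e1, _⟩ | ⟨e1, _⟩ <;> rw [e1] at heq
        · have : eF p a = eF p x := by linear_combination -heq
          exact hxP ((eF_inj p hp haLne hxLne this) ▸ haL)
        · have : eF p b = eF p x := by linear_combination -heq
          exact hxP ((eF_inj p hp hbLne hxLne this) ▸ hbL)
      · -- L in neither A nor B
        have hLA : L ∉ A := by
          rw [← hAx]
          simp only [Finset.mem_insert]
          rintro (h | h)
          · exact hLx h
          · exact hLP h
        have hLB : L ∉ B := by
          rw [← hBy]
          simp only [Finset.mem_insert]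
          rintro (h | h)
          · exact hLy h
          · exact hLP h
        have colA : colF p φ A = eF p x + (eF p a + eF p b) := by
          rw [colF_of_not_mem p φ hLA, ← hAx, Finset.sum_insert hxP, hsumP]
        have colB : colF p φ B = eF p y + (eF p a + eF p b) := by
          rw [colF_of_not_mem p φ hLB, ← hBy, Finset.sum_insert hyP, hsumP]
        rw [colA, colB]
        intro heq
        have hxLne : x ≠ L := fun hh => hLA (hh ▸ (hAx ▸ Finset.mem_insert_self x P))
        have hyLne : y ≠ L := fun hh => hLB (hh ▸ (hBy ▸ Finset.mem_insert_self y P))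
        have : eF p x = eF p y := by linear_combination heq
        exact hxy (eF_inj p hp hxLne hyLne this)

lemma lower_bound (p : ℕ) (hpodd : p % 2 = 1) (hp3 : 3 < p) (n : ℕ)
    (C : (distGraph (p+1) 3 2).Coloring (Fin n)) : p ≤ n := by
  classical
  by_contra hn
  push_neg at hn
  set F : Fin n → Fin (p+1) → Finset {A : Finset (Fin (p+1)) // A.card = 3} :=
    fun c x => Finset.univ.filter (fun A => x ∈ A.1 ∧ C A = c) with hF
  -- step 1 : per class-point bound
  have key : ∀ (c : Fin n) (x : Fin (p+1)), 2 * (F c x).card ≤ p - 1 := by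
    intro c x
    have hdisj : ∀ A ∈ F c x, ∀ B ∈ F c x, A ≠ B →
        Disjoint (A.1.erase x) (B.1.erase x) := by
      intro A hA B hB hAB
      rw [hF, Finset.mem_filter] at hA hB
      obtain ⟨-, hxA, hcA⟩ := hA
      obtain ⟨-, hxB, hcB⟩ := hB
      have hnadj : ¬ (distGraph (p+1) 3 2).Adj A B := by
        intro hadj
        exact C.valid hadj (by rw [hcA, hcB])
      have hcard2 : (A.1 ∩ B.1).card ≠ 2 := fun hh => hnadj ⟨hAB, hh⟩
      rw [Finset.disjoint_left]
      intro z hz hz'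
      have hzx : z ≠ x := Finset.ne_of_mem_erase hz
      have hzA : z ∈ A.1 := Finset.mem_of_mem_erase hz
      have hzB : z ∈ B.1 := Finset.mem_of_mem_erase hz'
      have hsub : ({x, z} : Finset (Fin (p+1))) ⊆ A.1 ∩ B.1 := by
        intro w hw
        rcases Finset.mem_insert.mp hw with rfl | hw'
        · exact Finset.mem_inter.mpr ⟨hxA, hxB⟩
        · rw [Finset.mem_singleton] at hw'
          subst hw'
          exact Finset.mem_inter.mpr ⟨hzA, hzB⟩
      have h2le : 2 ≤ (A.1 ∩ B.1).card := by
        calc 2 = ({x, z} : Finset (Fin (p+1))).card := by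
                rw [Finset.card_pair (Ne.symm hzx)]
          _ ≤ (A.1 ∩ B.1).card := Finset.card_le_card hsub
      have h3le : (A.1 ∩ B.1).card ≤ 3 := by
        calc (A.1 ∩ B.1).card ≤ A.1.card := Finset.card_le_card Finset.inter_subset_left
          _ = 3 := A.2
      have hc3 : (A.1 ∩ B.1).card = 3 := by omega
      have hAeq : A.1 ∩ B.1 = A.1 :=
        Finset.eq_of_subset_of_card_le Finset.inter_subset_left (by rw [A.2, hc3])
      have hsubAB : A.1 ⊆ B.1 := by
        rw [← hAeq]; exact Finset.inter_subset_right
      have : A.1 = B.1 := Finset.eq_of_subset_of_card_le hsubAB (by rw [A.2, B.2])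
      exact hAB (Subtype.ext this)
    have hbi : ((F c x).biUnion (fun A => A.1.erase x)).card = 2 * (F c x).card := by
      rw [Finset.card_biUnion hdisj]
      have : ∀ A ∈ F c x, (A.1.erase x).card = 2 := by
        intro A hA
        rw [hF, Finset.mem_filter] at hA
        rw [Finset.card_erase_of_mem hA.2.1, A.2]
      rw [Finset.sum_congr rfl this, Finset.sum_const, smul_eq_mul, mul_comm]
    have hsub : (F c x).biUnion (fun A => A.1.erase x) ⊆ Finset.univ.erase x := by
      intro z hz
      rw [Finset.mem_biUnion] at hz
      obtain ⟨A, -, hzA⟩ := hz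
      exact Finset.mem_erase.mpr ⟨Finset.ne_of_mem_erase hzA, Finset.mem_univ z⟩
    have hle : 2 * (F c x).card ≤ p := by
      have h1 := Finset.card_le_card hsub
      rw [hbi] at h1
      simpa [Finset.card_erase_of_mem] using h1
    omega
  -- step 2 : total count
  have inner : ∀ x : Fin (p+1),
      ∑ c : Fin n, (F c x).card
        = (Finset.univ.filter (fun A : {A : Finset (Fin (p+1)) // A.card = 3} => x ∈ A.1)).card := by
    intro x
    rw [Finset.card_eq_sum_card_fiberwise
      (f := C) (t := Finset.univ) (fun A _ => Finset.mem_univ (C A))]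
    apply Finset.sum_congr rfl
    intro c _
    rw [hF, Finset.filter_filter]
  have total : ∑ x : Fin (p+1), ∑ c : Fin n, (F c x).card
      = 3 * (p+1).choose 3 := by
    rw [Finset.sum_congr rfl (fun x _ => inner x)]
    have : ∀ x : Fin (p+1),
        (Finset.univ.filter (fun A : {A : Finset (Fin (p+1)) // A.card = 3} => x ∈ A.1)).card
        = ∑ A : {A : Finset (Fin (p+1)) // A.card = 3}, if x ∈ A.1 then 1 else 0 := by
      intro x
      rw [Finset.card_filter]
    rw [Finset.sum_congr rfl (fun x _ => this x), Finset.sum_comm]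
    have hrow : ∀ A : {A : Finset (Fin (p+1)) // A.card = 3},
        ∑ x : Fin (p+1), (if x ∈ A.1 then 1 else 0) = 3 := by
      intro A
      rw [← Finset.card_filter, Finset.filter_univ_mem, A.2]
    rw [Finset.sum_congr rfl (fun A _ => hrow A), Finset.sum_const, smul_eq_mul]
    have hcard := Fintype.card_finset_len (α := Fin (p+1)) 3
    simp only [Fintype.card_fin] at hcard
    rw [Finset.card_univ, hcard, mul_comm]
  -- step 3 : combine
  have big : 2 * (3 * (p+1).choose 3) ≤ (p+1) * (n * (p-1)) := by
    rw [← total, Finset.mul_sum]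
    calc ∑ x : Fin (p+1), 2 * ∑ c : Fin n, (F c x).card
        = ∑ x : Fin (p+1), ∑ c : Fin n, 2 * (F c x).card := by
          exact Finset.sum_congr rfl (fun x _ => Finset.mul_sum _ _ _)
      _ ≤ ∑ x : Fin (p+1), ∑ c : Fin n, (p-1) :=
          Finset.sum_le_sum (fun x _ => Finset.sum_le_sum (fun c _ => key c x))
      _ = (p+1) * (n * (p-1)) := by
          simp [Finset.sum_const, mul_comm, mul_assoc]
  have hchoose : 6 * (p+1).choose 3 = (p+1) * (p * (p-1)) := by
    have h := Nat.descFactorial_eq_factorial_mul_choose (p+1) 3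
    have h2 : (p+1).descFactorial 3 = (p-1) * (p * ((p+1) * 1)) := by
      simp [Nat.descFactorial]
    rw [h2] at h
    simp [Nat.factorial] at h
    rw [← h]; ring
  rw [show 2 * (3 * (p+1).choose 3) = 6 * (p+1).choose 3 by ring, hchoose] at big
  have h1 : p * (p-1) ≤ n * (p-1) := Nat.le_of_mul_le_mul_left big (by omega)
  have h2 : p ≤ n := Nat.le_of_mul_le_mul_right h1 (by omega)
  omega


theorem stmt_18 (p : ℕ) (hp : p.Prime) (hp3 : 3 < p)
    (h2 : ∀ r : ℕ, (2 : ZMod p) ^ r ≠ -1) :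
    (distGraph (p + 1) 3 2).chromaticNumber = (p : ℕ∞) := by
  have hpodd : p % 2 = 1 := by
    obtain ⟨k, hk⟩ := hp.odd_of_ne_two (by omega)
    omega
  haveI : Fact p.Prime := ⟨hp⟩
  haveI : NeZero p := ⟨by omega⟩
  obtain ⟨φ, hφ1, hφ2⟩ := sign_fun p hp hp3 h2
  let C : (distGraph (p+1) 3 2).Coloring (ZMod p) :=
    SimpleGraph.Coloring.mk (fun A => colF p φ A.1)
      (by
        intro A B hadj
        exact colF_proper p hp hp3 φ hφ1 hφ2 A.2 B.2
          (fun hh => hadj.1 (Subtype.ext hh)) hadj.2)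
  have hcol : (distGraph (p+1) 3 2).Colorable p := by
    have hc := C.colorable
    rwa [ZMod.card p] at hc
  apply le_antisymm
  · exact hcol.chromaticNumber_le
  · rw [SimpleGraph.chromaticNumber_eq_biInf]
    refine le_iInf₂ fun m hm => ?_
    obtain ⟨Cm⟩ := (hm : (distGraph (p+1) 3 2).Colorable m)
    exact_mod_cast lower_bound p hpodd hp3 m Cm
end

section
/- Let p > 3 be a prime such that for every natural number r the congruence 2^r ≡ −1 (mod p) fails. Then χ(G(p + 2, 3, 2)) = p, i.e., for n = p + 2 the chromatic number of G(n, 3, 2) equals exactly n − 2. -/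
namespace Stmt19
variable (p : ℕ) [Fact p.Prime]

noncomputable def u2 (h : (2:ZMod p) ≠ 0) : (ZMod p)ˣ := Units.mk0 2 h

noncomputable def H (h : (2:ZMod p) ≠ 0) : Subgroup (ZMod p)ˣ := Subgroup.zpowers (u2 p h)

noncomputable def K (h : (2:ZMod p) ≠ 0) : Subgroup (ZMod p)ˣ := Subgroup.closure {u2 p h, -1}

noncomputable def rep (h : (2:ZMod p) ≠ 0) (u : (ZMod p)ˣ) : (ZMod p)ˣ :=
  Quotient.out (QuotientGroup.mk (s := K p h) u)

noncomputable def Sgn (h : (2:ZMod p) ≠ 0) (z : ZMod p) : Prop :=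
  ∃ hz : z ≠ 0, Units.mk0 z hz / rep p h (Units.mk0 z hz) ∈ H p h

variable {p} (h : (2:ZMod p) ≠ 0)

theorem neg_one_not_mem_H (h2 : ∀ r : ℕ, (2 : ZMod p) ^ r ≠ -1) : (-1 : (ZMod p)ˣ) ∉ H p h := by
  rintro ⟨k, hk⟩
  have hk : u2 p h ^ k = -1 := hk
  rcases le_or_gt 0 k with hk0 | hk0
  · lift k to ℕ using hk0
    apply h2 k
    have := congrArg (Units.val) hk
    simpa [u2] using this
  · apply h2 (-k).toNat
    have hk' : (u2 p h) ^ ((-k).toNat : ℤ) = -1 := by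
      rw [Int.toNat_of_nonneg (by omega)]
      rw [zpow_neg, hk]
      simp
    rw [zpow_natCast] at hk'
    have := congrArg (Units.val) hk'
    simpa [u2] using this

theorem mem_K_cases {u : (ZMod p)ˣ} (hu : u ∈ K p h) : u ∈ H p h ∨ -u ∈ H p h := by
  have hle : K p h ≤ {
      carrier := {x | x ∈ H p h ∨ -x ∈ H p h}
      one_mem' := Or.inl (one_mem _)
      mul_mem' := by
        rintro a b (ha | ha) (hb | hb)
        · exact Or.inl (mul_mem ha hb)
        · exact Or.inr (by rw [← mul_neg]; exact mul_mem ha hb)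
        · exact Or.inr (by rw [← neg_mul]; exact mul_mem ha hb)
        · exact Or.inl (by rw [← neg_mul_neg a b]; exact mul_mem ha hb)
      inv_mem' := by
        rintro a (ha | ha)
        · exact Or.inl (inv_mem ha)
        · refine Or.inr ?_
          have : (-a)⁻¹ = -a⁻¹ := by
            refine (eq_inv_of_mul_eq_one_left ?_).symm
            simp
          rw [← this]
          exact inv_mem ha } := by
    apply Subgroup.closure_le _ |>.2
    rintro x (rfl | rfl)
    · exact Or.inl (Subgroup.mem_zpowers _)
    · exact Or.inr (by simpa using (one_mem (H p h)))
  exact hle hu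

theorem div_rep_mem_K (u : (ZMod p)ˣ) : u / rep p h u ∈ K p h := by
  have : (QuotientGroup.mk (s := K p h) (rep p h u)) = QuotientGroup.mk u := by
    simp [rep]
  rw [QuotientGroup.eq] at this
  have : (rep p h u)⁻¹ * u ∈ K p h := this
  rw [div_eq_mul_inv, mul_comm]
  exact (Subgroup.inv_mem_iff _).1 (by simpa [mul_inv_rev] using (Subgroup.inv_mem _ this))

theorem rep_mul {v : (ZMod p)ˣ} (hv : v ∈ K p h) (u : (ZMod p)ˣ) :
    rep p h (v * u) = rep p h u := by
  unfold rep
  congr 1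
  rw [QuotientGroup.eq]
  simpa using Subgroup.inv_mem _ hv

end Stmt19

namespace Stmt19
variable {p : ℕ} [Fact p.Prime] (h : (2:ZMod p) ≠ 0)

theorem neg_mem_H_iff (h2 : ∀ r : ℕ, (2 : ZMod p) ^ r ≠ -1) {k : (ZMod p)ˣ}
    (hk : k ∈ K p h) : -k ∈ H p h ↔ k ∉ H p h := by
  constructor
  · intro hnk hkH
    exact neg_one_not_mem_H h h2 (by
      have : -k * k⁻¹ ∈ H p h := mul_mem hnk (inv_mem hkH)
      simpa using this)
  · intro hkH
    rcases mem_K_cases h hk with h1 | h1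
    · exact absurd h1 hkH
    · exact h1

theorem u2_mem_K : u2 p h ∈ K p h := Subgroup.subset_closure (by simp)

theorem neg_one_mem_K : (-1 : (ZMod p)ˣ) ∈ K p h := Subgroup.subset_closure (by simp)

theorem sgn_unit_iff (h2 : ∀ r : ℕ, (2 : ZMod p) ^ r ≠ -1) (u : (ZMod p)ˣ) :
    (-u) / rep p h (-u) ∈ H p h ↔ ¬ (u / rep p h u ∈ H p h) := by
  have hrep : rep p h (-u) = rep p h u := by
    rw [show -u = (-1) * u by simp]
    exact rep_mul h (neg_one_mem_K h) u
  rw [hrep]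
  have : (-u) / rep p h u = -(u / rep p h u) := by
    rw [div_eq_mul_inv, div_eq_mul_inv, neg_mul]
  rw [this]
  exact neg_mem_H_iff h h2 (div_rep_mem_K h u)

theorem Sgn_neg (h2 : ∀ r : ℕ, (2 : ZMod p) ^ r ≠ -1) {z : ZMod p} (hz : z ≠ 0) :
    Sgn p h (-z) ↔ ¬ Sgn p h z := by
  have hz' : -z ≠ 0 := neg_ne_zero.2 hz
  have hmk : Units.mk0 (-z) hz' = -(Units.mk0 z hz) := by
    ext; simp
  unfold Sgn
  constructor
  · rintro ⟨h1, hmem⟩ ⟨h3, hmem'⟩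
    rw [hmk] at hmem
    exact (sgn_unit_iff h h2 (Units.mk0 z hz)).1 hmem hmem'
  · intro hns
    refine ⟨hz', ?_⟩
    rw [hmk]
    refine (sgn_unit_iff h h2 (Units.mk0 z hz)).2 (fun hmem => hns ⟨hz, hmem⟩)

theorem Sgn_two_mul {z : ZMod p} (hz : z ≠ 0) :
    Sgn p h (2 * z) ↔ Sgn p h z := by
  have hz' : 2 * z ≠ 0 := mul_ne_zero h hz
  have hmk : Units.mk0 (2 * z) hz' = u2 p h * Units.mk0 z hz := by
    ext; simp [u2]
  have hrep : rep p h (u2 p h * Units.mk0 z hz) = rep p h (Units.mk0 z hz) :=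
    rep_mul h (u2_mem_K h) _
  unfold Sgn
  have key : ∀ (hw : 2 * z ≠ 0), (Units.mk0 (2*z) hw / rep p h (Units.mk0 (2*z) hw) ∈ H p h)
      ↔ (Units.mk0 z hz / rep p h (Units.mk0 z hz) ∈ H p h) := by
    intro hw
    have : Units.mk0 (2*z) hw = Units.mk0 (2*z) hz' := rfl
    rw [this, hmk, hrep]
    rw [div_eq_mul_inv, div_eq_mul_inv, mul_assoc]
    exact Subgroup.mul_mem_cancel_left _ (Subgroup.mem_zpowers _)
  constructor
  · rintro ⟨hw, hmem⟩; exact ⟨hz, (key hw).1 hmem⟩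
  · rintro ⟨hw, hmem⟩; exact ⟨hz', (key hz').2 hmem⟩

end Stmt19

namespace Stmt19
set_option linter.unusedSectionVars false
variable (p : ℕ) [Fact p.Prime]
def I1 : Fin (p+2) := ⟨p, by omega⟩
def I2 : Fin (p+2) := ⟨p+1, by omega⟩

def wv (x : Fin (p+2)) : ZMod p := if x.val < p then (x.val : ZMod p) else 0

def fs (A : Finset (Fin (p+2))) : ZMod p := ∑ x ∈ A, wv p x

noncomputable def P1 (h : (2:ZMod p) ≠ 0) (A : Finset (Fin (p+2))) (x : Fin (p+2)) : Prop :=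
  x.val < p ∧ ∀ y ∈ A, y.val < p → y ≠ x → Sgn p h (wv p x - wv p y)

noncomputable def P2 (h : (2:ZMod p) ≠ 0) (A : Finset (Fin (p+2))) (x : Fin (p+2)) : Prop :=
  x.val < p ∧ ∀ y ∈ A, y.val < p → y ≠ x → Sgn p h (wv p y - wv p x)

open Classical in
noncomputable def sel1 (h : (2:ZMod p) ≠ 0) (A : Finset (Fin (p+2))) : ZMod p :=
  ∑ x ∈ A, if P1 p h A x then wv p x else 0

open Classical in
noncomputable def sel2 (h : (2:ZMod p) ≠ 0) (A : Finset (Fin (p+2))) : ZMod p :=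
  ∑ x ∈ A, if P2 p h A x then wv p x else 0

noncomputable def col (h : (2:ZMod p) ≠ 0) (A : Finset (Fin (p+2))) : ZMod p :=
  fs p A + if I1 p ∈ A then (if I2 p ∈ A then 2 * fs p A else sel1 p h A)
    else (if I2 p ∈ A then sel2 p h A else 0)

variable {p}

theorem wv_lt {x : Fin (p+2)} (hx : x.val < p) : wv p x = (x.val : ZMod p) := if_pos hx

theorem wv_inj {x y : Fin (p+2)} (hx : x.val < p) (hy : y.val < p) (hxy : x ≠ y) :
    wv p x ≠ wv p y := by
  rw [wv_lt hx, wv_lt hy]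
  intro hc
  have := congrArg (ZMod.val) hc
  rw [ZMod.val_natCast_of_lt hx, ZMod.val_natCast_of_lt hy] at this
  exact hxy (Fin.ext this)

theorem I1_not_lt : ¬ ((I1 p).val < p) := by simp [I1]
theorem I2_not_lt : ¬ ((I2 p).val < p) := by simp [I2]
theorem wv_I1 : wv p (I1 p) = 0 := if_neg I1_not_lt
theorem wv_I2 : wv p (I2 p) = 0 := if_neg I2_not_lt
theorem I1_ne_I2 : (I1 p) ≠ I2 p := by simp [I1, I2, Fin.ext_iff]
theorem ne_I1 {x : Fin (p+2)} (hx : x.val < p) : x ≠ I1 p := by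
  intro hc; rw [hc] at hx; exact I1_not_lt hx
theorem ne_I2 {x : Fin (p+2)} (hx : x.val < p) : x ≠ I2 p := by
  intro hc; rw [hc] at hx; exact I2_not_lt hx

theorem colFFF (h : (2:ZMod p) ≠ 0) {x a b : Fin (p+2)}
    (hx : x.val < p) (ha : a.val < p) (hb : b.val < p)
    (hxa : x ≠ a) (hxb : x ≠ b) (hab : a ≠ b) :
    col p h {x, a, b} = wv p x + wv p a + wv p b := by
  have h1 : I1 p ∉ ({x, a, b} : Finset (Fin (p+2))) := by
    simp only [Finset.mem_insert, Finset.mem_singleton]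
    push_neg
    exact ⟨(ne_I1 hx).symm, (ne_I1 ha).symm, (ne_I1 hb).symm⟩
  have h2 : I2 p ∉ ({x, a, b} : Finset (Fin (p+2))) := by
    simp only [Finset.mem_insert, Finset.mem_singleton]
    push_neg
    exact ⟨(ne_I2 hx).symm, (ne_I2 ha).symm, (ne_I2 hb).symm⟩
  rw [col, if_neg h1, if_neg h2, add_zero, fs]
  rw [Finset.sum_insert (by simp [hxa, hxb]), Finset.sum_pair hab]
  ring


open Classical in
theorem colFF1 (h : (2:ZMod p) ≠ 0) (h2 : ∀ r : ℕ, (2 : ZMod p) ^ r ≠ -1) {a b : Fin (p+2)}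
    (ha : a.val < p) (hb : b.val < p) (hab : a ≠ b) :
    col p h (insert (I1 p) {a, b}) =
      wv p a + wv p b + (if Sgn p h (wv p a - wv p b) then wv p a else wv p b) := by
  have hnm : I1 p ∉ ({a, b} : Finset (Fin (p+2))) := by
    simp only [Finset.mem_insert, Finset.mem_singleton]
    push_neg
    exact ⟨(ne_I1 ha).symm, (ne_I1 hb).symm⟩
  have hI2 : I2 p ∉ insert (I1 p) ({a, b} : Finset (Fin (p+2))) := by
    simp only [Finset.mem_insert, Finset.mem_singleton]
    push_neg
    exact ⟨I1_ne_I2.symm, (ne_I2 ha).symm, (ne_I2 hb).symm⟩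
  have hPa : P1 p h (insert (I1 p) {a, b}) a ↔ Sgn p h (wv p a - wv p b) := by
    constructor
    · rintro ⟨-, hall⟩
      exact hall b (by simp) hb (fun hc => hab hc.symm)
    · intro hs
      refine ⟨ha, fun y hy hylt hyne => ?_⟩
      simp only [Finset.mem_insert, Finset.mem_singleton] at hy
      rcases hy with rfl | rfl | rfl
      · exact absurd hylt I1_not_lt
      · exact absurd rfl hyne
      · exact hs
  have hPb : P1 p h (insert (I1 p) {a, b}) b ↔ Sgn p h (wv p b - wv p a) := by
    constructor
    · rintro ⟨-, hall⟩
      exact hall a (by simp) ha hab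
    · intro hs
      refine ⟨hb, fun y hy hylt hyne => ?_⟩
      simp only [Finset.mem_insert, Finset.mem_singleton] at hy
      rcases hy with rfl | rfl | rfl
      · exact absurd hylt I1_not_lt
      · exact hs
      · exact absurd rfl hyne
  have hswap : Sgn p h (wv p b - wv p a) ↔ ¬ Sgn p h (wv p a - wv p b) := by
    rw [show wv p b - wv p a = -(wv p a - wv p b) by ring]
    exact Sgn_neg h h2 (sub_ne_zero.2 (wv_inj ha hb hab))
  have hP1 : ¬ P1 p h (insert (I1 p) {a, b}) (I1 p) := fun hc => I1_not_lt hc.1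
  have hfs : fs p (insert (I1 p) {a, b}) = wv p a + wv p b := by
    rw [fs, Finset.sum_insert hnm, Finset.sum_pair hab, wv_I1, zero_add]
  have hsel : sel1 p h (insert (I1 p) {a, b}) =
      if Sgn p h (wv p a - wv p b) then wv p a else wv p b := by
    rw [sel1, Finset.sum_insert hnm, Finset.sum_pair hab, if_neg hP1, zero_add]
    by_cases hs : Sgn p h (wv p a - wv p b)
    · rw [if_pos (hPa.2 hs), if_neg (fun hc => (hswap.1 (hPb.1 hc)) hs), add_zero, if_pos hs]
    · rw [if_neg (fun hc => hs (hPa.1 hc)), if_pos (hPb.2 (hswap.2 hs)), zero_add, if_neg hs]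
  rw [col, if_pos (Finset.mem_insert_self _ _), if_neg hI2, hfs, hsel]

open Classical in
theorem colFF2 (h : (2:ZMod p) ≠ 0) (h2 : ∀ r : ℕ, (2 : ZMod p) ^ r ≠ -1) {a b : Fin (p+2)}
    (ha : a.val < p) (hb : b.val < p) (hab : a ≠ b) :
    col p h (insert (I2 p) {a, b}) =
      wv p a + wv p b + (if Sgn p h (wv p a - wv p b) then wv p b else wv p a) := by
  have hnm : I2 p ∉ ({a, b} : Finset (Fin (p+2))) := by
    simp only [Finset.mem_insert, Finset.mem_singleton]
    push_neg
    exact ⟨(ne_I2 ha).symm, (ne_I2 hb).symm⟩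
  have hI1 : I1 p ∉ insert (I2 p) ({a, b} : Finset (Fin (p+2))) := by
    simp only [Finset.mem_insert, Finset.mem_singleton]
    push_neg
    exact ⟨I1_ne_I2, (ne_I1 ha).symm, (ne_I1 hb).symm⟩
  have hPa : P2 p h (insert (I2 p) {a, b}) a ↔ Sgn p h (wv p b - wv p a) := by
    constructor
    · rintro ⟨-, hall⟩
      exact hall b (by simp) hb (fun hc => hab hc.symm)
    · intro hs
      refine ⟨ha, fun y hy hylt hyne => ?_⟩
      simp only [Finset.mem_insert, Finset.mem_singleton] at hy
      rcases hy with rfl | rfl | rfl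
      · exact absurd hylt I2_not_lt
      · exact absurd rfl hyne
      · exact hs
  have hPb : P2 p h (insert (I2 p) {a, b}) b ↔ Sgn p h (wv p a - wv p b) := by
    constructor
    · rintro ⟨-, hall⟩
      exact hall a (by simp) ha hab
    · intro hs
      refine ⟨hb, fun y hy hylt hyne => ?_⟩
      simp only [Finset.mem_insert, Finset.mem_singleton] at hy
      rcases hy with rfl | rfl | rfl
      · exact absurd hylt I2_not_lt
      · exact hs
      · exact absurd rfl hyne
  have hswap : Sgn p h (wv p b - wv p a) ↔ ¬ Sgn p h (wv p a - wv p b) := by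
    rw [show wv p b - wv p a = -(wv p a - wv p b) by ring]
    exact Sgn_neg h h2 (sub_ne_zero.2 (wv_inj ha hb hab))
  have hP2 : ¬ P2 p h (insert (I2 p) {a, b}) (I2 p) := fun hc => I2_not_lt hc.1
  have hfs : fs p (insert (I2 p) {a, b}) = wv p a + wv p b := by
    rw [fs, Finset.sum_insert hnm, Finset.sum_pair hab, wv_I2, zero_add]
  have hsel : sel2 p h (insert (I2 p) {a, b}) =
      if Sgn p h (wv p a - wv p b) then wv p b else wv p a := by
    rw [sel2, Finset.sum_insert hnm, Finset.sum_pair hab, if_neg hP2, zero_add]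
    by_cases hs : Sgn p h (wv p a - wv p b)
    · rw [if_neg (fun hc => (hswap.1 (hPa.1 hc)) hs), if_pos (hPb.2 hs), zero_add, if_pos hs]
    · rw [if_pos (hPa.2 (hswap.2 hs)), if_neg (fun hc => hs (hPb.1 hc)), add_zero, if_neg hs]
  rw [col, if_neg hI1, if_pos (Finset.mem_insert_self _ _), hfs, hsel]

theorem col12 (h : (2:ZMod p) ≠ 0) {a : Fin (p+2)} (ha : a.val < p) :
    col p h (insert (I1 p) (insert (I2 p) {a})) = 3 * wv p a := by
  have h21 : I1 p ∉ (insert (I2 p) {a} : Finset (Fin (p+2))) := by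
    simp only [Finset.mem_insert, Finset.mem_singleton]
    push_neg
    exact ⟨I1_ne_I2, (ne_I1 ha).symm⟩
  have h2a : I2 p ∉ ({a} : Finset (Fin (p+2))) := by
    simp only [Finset.mem_singleton]
    exact (ne_I2 ha).symm
  have hfs : fs p (insert (I1 p) (insert (I2 p) {a})) = wv p a := by
    rw [fs, Finset.sum_insert h21, Finset.sum_insert h2a, Finset.sum_singleton,
      wv_I1, wv_I2, zero_add, zero_add]
  rw [col, if_pos (Finset.mem_insert_self _ _),
    if_pos (Finset.mem_insert_of_mem (Finset.mem_insert_self _ _)), hfs]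
  ring

end Stmt19

namespace Stmt19
set_option linter.unusedSectionVars false
open Classical
variable {p : ℕ} [Fact p.Prime] (h : (2:ZMod p) ≠ 0)
  (h2 : ∀ r : ℕ, (2 : ZMod p) ^ r ≠ -1)

theorem three_ne (hp3 : 3 < p) : (3 : ZMod p) ≠ 0 := by
  have : ((3 : ℕ) : ZMod p) ≠ 0 := by
    rw [Ne, ZMod.natCast_eq_zero_iff]
    intro hdvd
    have := Nat.le_of_dvd (by norm_num) hdvd
    omega
  simpa using this

variable {x y a b : Fin (p+2)}

theorem case1 (hx : x.val < p) (hy : y.val < p) (ha : a.val < p) (hb : b.val < p)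
    (hxy : x ≠ y) (hxa : x ≠ a) (hxb : x ≠ b) (hya : y ≠ a) (hyb : y ≠ b) (hab : a ≠ b) :
    col p h {x, a, b} ≠ col p h {y, a, b} := by
  rw [colFFF h hx ha hb hxa hxb hab, colFFF h hy ha hb hya hyb hab]
  intro heq
  exact wv_inj hx hy hxy (by linear_combination heq)

include h2 in
theorem case2 (hy : y.val < p) (ha : a.val < p) (hb : b.val < p)
    (hya : y ≠ a) (hyb : y ≠ b) (hab : a ≠ b) :
    col p h (insert (I1 p) {a, b}) ≠ col p h {y, a, b} := by
  rw [colFF1 h h2 ha hb hab, colFFF h hy ha hb hya hyb hab]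
  by_cases hs : Sgn p h (wv p a - wv p b)
  · rw [if_pos hs]
    intro heq
    exact wv_inj ha hy (fun hc => hya hc.symm) (by linear_combination heq)
  · rw [if_neg hs]
    intro heq
    exact wv_inj hb hy (fun hc => hyb hc.symm) (by linear_combination heq)

include h2 in
theorem case3 (ha : a.val < p) (hb : b.val < p) (hab : a ≠ b) :
    col p h (insert (I1 p) {a, b}) ≠ col p h (insert (I2 p) {a, b}) := by
  rw [colFF1 h h2 ha hb hab, colFF2 h h2 ha hb hab]
  by_cases hs : Sgn p h (wv p a - wv p b)
  · rw [if_pos hs, if_pos hs]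
    intro heq
    exact wv_inj ha hb hab (by linear_combination heq)
  · rw [if_neg hs, if_neg hs]
    intro heq
    exact wv_inj ha hb hab (by linear_combination -heq)

include h2 in
theorem case4 (hy : y.val < p) (ha : a.val < p) (hb : b.val < p)
    (hya : y ≠ a) (hyb : y ≠ b) (hab : a ≠ b) :
    col p h (insert (I2 p) {a, b}) ≠ col p h {y, a, b} := by
  rw [colFF2 h h2 ha hb hab, colFFF h hy ha hb hya hyb hab]
  by_cases hs : Sgn p h (wv p a - wv p b)
  · rw [if_pos hs]
    intro heq
    exact wv_inj hb hy (fun hc => hyb hc.symm) (by linear_combination heq)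
  · rw [if_neg hs]
    intro heq
    exact wv_inj ha hy (fun hc => hya hc.symm) (by linear_combination heq)

include h2 in
theorem case5 (hx : x.val < p) (hy : y.val < p) (ha : a.val < p)
    (hxy : x ≠ y) (hxa : x ≠ a) (hya : y ≠ a) :
    col p h (insert (I1 p) {x, a}) ≠ col p h (insert (I1 p) {y, a}) := by
  rw [colFF1 h h2 hx ha hxa, colFF1 h h2 hy ha hya]
  have hxa0 : wv p x - wv p a ≠ 0 := sub_ne_zero.2 (wv_inj hx ha hxa)
  have hya0 : wv p y - wv p a ≠ 0 := sub_ne_zero.2 (wv_inj hy ha hya)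
  by_cases hsx : Sgn p h (wv p x - wv p a) <;> by_cases hsy : Sgn p h (wv p y - wv p a)
  · rw [if_pos hsx, if_pos hsy]
    intro heq
    exact wv_inj hx hy hxy <| mul_left_cancel₀ h (by linear_combination heq)
  · rw [if_pos hsx, if_neg hsy]
    intro heq
    have hkey : wv p y - wv p a = 2 * (wv p x - wv p a) := by linear_combination -heq
    exact hsy (hkey ▸ (Sgn_two_mul h hxa0).2 hsx)
  · rw [if_neg hsx, if_pos hsy]
    intro heq
    have hkey : wv p x - wv p a = 2 * (wv p y - wv p a) := by linear_combination heq
    exact hsx (hkey ▸ (Sgn_two_mul h hya0).2 hsy)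
  · rw [if_neg hsx, if_neg hsy]
    intro heq
    exact wv_inj hx hy hxy (by linear_combination heq)

include h2 in
theorem case6 (hy : y.val < p) (ha : a.val < p) (hya : y ≠ a) :
    col p h (insert (I1 p) (insert (I2 p) {a})) ≠ col p h (insert (I1 p) {y, a}) := by
  rw [col12 h ha, colFF1 h h2 hy ha hya]
  by_cases hs : Sgn p h (wv p y - wv p a)
  · rw [if_pos hs]
    intro heq
    exact wv_inj ha hy (fun hc => hya hc.symm) <| mul_left_cancel₀ h (by linear_combination heq)
  · rw [if_neg hs]
    intro heq
    exact wv_inj ha hy (fun hc => hya hc.symm) (by linear_combination heq)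

include h2 in
theorem case7 (hx : x.val < p) (hy : y.val < p) (ha : a.val < p)
    (hxy : x ≠ y) (hxa : x ≠ a) (hya : y ≠ a) :
    col p h (insert (I2 p) {x, a}) ≠ col p h (insert (I2 p) {y, a}) := by
  rw [colFF2 h h2 hx ha hxa, colFF2 h h2 hy ha hya]
  have hxa0 : wv p x - wv p a ≠ 0 := sub_ne_zero.2 (wv_inj hx ha hxa)
  have hya0 : wv p y - wv p a ≠ 0 := sub_ne_zero.2 (wv_inj hy ha hya)
  by_cases hsx : Sgn p h (wv p x - wv p a) <;> by_cases hsy : Sgn p h (wv p y - wv p a)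
  · rw [if_pos hsx, if_pos hsy]
    intro heq
    exact wv_inj hx hy hxy (by linear_combination heq)
  · rw [if_pos hsx, if_neg hsy]
    intro heq
    have hkey : wv p x - wv p a = 2 * (wv p y - wv p a) := by linear_combination heq
    exact hsy ((Sgn_two_mul h hya0).1 (hkey ▸ hsx))
  · rw [if_neg hsx, if_pos hsy]
    intro heq
    have hkey : wv p y - wv p a = 2 * (wv p x - wv p a) := by linear_combination -heq
    exact hsx ((Sgn_two_mul h hxa0).1 (hkey ▸ hsy))
  · rw [if_neg hsx, if_neg hsy]
    intro heq
    exact wv_inj hx hy hxy <| mul_left_cancel₀ h (by linear_combination heq)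

include h2 in
theorem case8 (hy : y.val < p) (ha : a.val < p) (hya : y ≠ a) :
    col p h (insert (I1 p) (insert (I2 p) {a})) ≠ col p h (insert (I2 p) {y, a}) := by
  rw [col12 h ha, colFF2 h h2 hy ha hya]
  by_cases hs : Sgn p h (wv p y - wv p a)
  · rw [if_pos hs]
    intro heq
    exact wv_inj ha hy (fun hc => hya hc.symm) (by linear_combination heq)
  · rw [if_neg hs]
    intro heq
    exact wv_inj ha hy (fun hc => hya hc.symm) <| mul_left_cancel₀ h (by linear_combination heq)

theorem case9 (hp3 : 3 < p) (hx : x.val < p) (hy : y.val < p) (hxy : x ≠ y) :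
    col p h (insert (I1 p) (insert (I2 p) {x})) ≠ col p h (insert (I1 p) (insert (I2 p) {y})) := by
  rw [col12 h hx, col12 h hy]
  intro heq
  exact wv_inj hx hy hxy <| mul_left_cancel₀ (three_ne hp3) heq

end Stmt19

namespace Stmt19
set_option linter.unusedSectionVars false
open Classical
variable {p : ℕ} [Fact p.Prime] (h : (2:ZMod p) ≠ 0)
  (h2 : ∀ r : ℕ, (2 : ZMod p) ^ r ≠ -1)

theorem tri (z : Fin (p+2)) : z.val < p ∨ z = I1 p ∨ z = I2 p := by
  have hz := z.isLt
  rcases lt_or_ge z.val p with hlt | hge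
  · exact Or.inl hlt
  · rcases Nat.lt_or_ge z.val (p+1) with h' | h'
    · exact Or.inr (Or.inl (Fin.ext (by simp [I1]; omega)))
    · exact Or.inr (Or.inr (Fin.ext (by simp [I2]; omega)))

variable {x y a b : Fin (p+2)}

include h2 in
theorem mainFF (ha : a.val < p) (hb : b.val < p) (hab : a ≠ b)
    (hx : x ∉ ({a, b} : Finset (Fin (p+2)))) (hy : y ∉ ({a, b} : Finset (Fin (p+2))))
    (hxy : x ≠ y) :
    col p h (insert x {a, b}) ≠ col p h (insert y {a, b}) := by
  simp only [Finset.mem_insert, Finset.mem_singleton] at hx hy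
  push_neg at hx hy
  obtain ⟨hxa, hxb⟩ := hx
  obtain ⟨hya, hyb⟩ := hy
  rcases tri x with hx' | rfl | rfl <;> rcases tri y with hy' | rfl | rfl
  · exact case1 h hx' hy' ha hb hxy hxa hxb hya hyb hab
  · exact (case2 h h2 hx' ha hb hxa hxb hab).symm
  · exact (case4 h h2 hx' ha hb hxa hxb hab).symm
  · exact case2 h h2 hy' ha hb hya hyb hab
  · exact absurd rfl hxy
  · exact case3 h h2 ha hb hab
  · exact case4 h h2 hy' ha hb hya hyb hab
  · exact (case3 h h2 ha hb hab).symm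
  · exact absurd rfl hxy

include h2 in
theorem mainS1 (hb : b.val < p)
    (hx : x ∉ ({I1 p, b} : Finset (Fin (p+2)))) (hy : y ∉ ({I1 p, b} : Finset (Fin (p+2))))
    (hxy : x ≠ y) :
    col p h (insert x {I1 p, b}) ≠ col p h (insert y {I1 p, b}) := by
  simp only [Finset.mem_insert, Finset.mem_singleton] at hx hy
  push_neg at hx hy
  obtain ⟨hx1, hxb⟩ := hx
  obtain ⟨hy1, hyb⟩ := hy
  have e : ∀ z : Fin (p+2), insert z ({I1 p, b} : Finset (Fin (p+2))) = insert (I1 p) {z, b} := by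
    intro z; ext t; simp only [Finset.mem_insert, Finset.mem_singleton]; try tauto
  have e2 : ∀ z : Fin (p+2), z = I2 p →
      insert z ({I1 p, b} : Finset (Fin (p+2))) = insert (I1 p) (insert (I2 p) {b}) := by
    rintro z rfl; ext t; simp only [Finset.mem_insert, Finset.mem_singleton]; try tauto
  rcases tri x with hx' | rfl | rfl <;> rcases tri y with hy' | rfl | rfl
  · rw [e x, e y]; exact case5 h h2 hx' hy' hb hxy hxb hyb
  · exact absurd rfl hy1
  · rw [e x, e2 _ rfl]; exact (case6 h h2 hx' hb hxb).symm
  · exact absurd rfl hx1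
  · exact absurd rfl hx1
  · exact absurd rfl hx1
  · rw [e2 _ rfl, e y]; exact case6 h h2 hy' hb hyb
  · exact absurd rfl hy1
  · exact absurd rfl hxy

include h2 in
theorem mainS2 (hb : b.val < p)
    (hx : x ∉ ({I2 p, b} : Finset (Fin (p+2)))) (hy : y ∉ ({I2 p, b} : Finset (Fin (p+2))))
    (hxy : x ≠ y) :
    col p h (insert x {I2 p, b}) ≠ col p h (insert y {I2 p, b}) := by
  simp only [Finset.mem_insert, Finset.mem_singleton] at hx hy
  push_neg at hx hy
  obtain ⟨hx2, hxb⟩ := hx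
  obtain ⟨hy2, hyb⟩ := hy
  have e : ∀ z : Fin (p+2), insert z ({I2 p, b} : Finset (Fin (p+2))) = insert (I2 p) {z, b} := by
    intro z; ext t; simp only [Finset.mem_insert, Finset.mem_singleton]; try tauto
  have e2 : ∀ z : Fin (p+2), z = I1 p →
      insert z ({I2 p, b} : Finset (Fin (p+2))) = insert (I1 p) (insert (I2 p) {b}) := by
    rintro z rfl; ext t; simp only [Finset.mem_insert, Finset.mem_singleton]; try tauto
  rcases tri x with hx' | rfl | rfl <;> rcases tri y with hy' | rfl | rfl
  · rw [e x, e y]; exact case7 h h2 hx' hy' hb hxy hxb hyb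
  · rw [e x, e2 _ rfl]; exact (case8 h h2 hx' hb hxb).symm
  · exact absurd rfl hy2
  · rw [e2 _ rfl, e y]; exact case8 h h2 hy' hb hyb
  · exact absurd rfl hxy
  · exact absurd rfl hy2
  · exact absurd rfl hx2
  · exact absurd rfl hx2
  · exact absurd rfl hx2

theorem mainS12 (hp3 : 3 < p)
    (hx : x ∉ ({I1 p, I2 p} : Finset (Fin (p+2)))) (hy : y ∉ ({I1 p, I2 p} : Finset (Fin (p+2))))
    (hxy : x ≠ y) :
    col p h (insert x {I1 p, I2 p}) ≠ col p h (insert y {I1 p, I2 p}) := by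
  simp only [Finset.mem_insert, Finset.mem_singleton] at hx hy
  push_neg at hx hy
  obtain ⟨hx1, hx2⟩ := hx
  obtain ⟨hy1, hy2⟩ := hy
  have e : ∀ z : Fin (p+2), insert z ({I1 p, I2 p} : Finset (Fin (p+2)))
      = insert (I1 p) (insert (I2 p) {z}) := by
    intro z; ext t; simp only [Finset.mem_insert, Finset.mem_singleton]; try tauto
  rcases tri x with hx' | rfl | rfl
  · rcases tri y with hy' | rfl | rfl
    · rw [e x, e y]; exact case9 h hp3 hx' hy' hxy
    · exact absurd rfl hy1
    · exact absurd rfl hy2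
  · exact absurd rfl hx1
  · exact absurd rfl hx2

include h2 in
theorem mainLemma (hp3 : 3 < p) {S : Finset (Fin (p+2))} (hS : S.card = 2)
    (hx : x ∉ S) (hy : y ∉ S) (hxy : x ≠ y) :
    col p h (insert x S) ≠ col p h (insert y S) := by
  obtain ⟨a, b, hab, rfl⟩ := Finset.card_eq_two.1 hS
  rcases tri a with ha' | rfl | rfl
  · rcases tri b with hb' | rfl | rfl
    · exact mainFF h h2 ha' hb' hab hx hy hxy
    · rw [Finset.pair_comm a (I1 p)] at hx hy ⊢
      exact mainS1 h h2 ha' hx hy hxy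
    · rw [Finset.pair_comm a (I2 p)] at hx hy ⊢
      exact mainS2 h h2 ha' hx hy hxy
  · rcases tri b with hb' | rfl | rfl
    · exact mainS1 h h2 hb' hx hy hxy
    · exact absurd rfl hab
    · exact mainS12 h hp3 hx hy hxy
  · rcases tri b with hb' | rfl | rfl
    · exact mainS2 h h2 hb' hx hy hxy
    · rw [Finset.pair_comm (I2 p) (I1 p)] at hx hy ⊢
      exact mainS12 h hp3 hx hy hxy
    · exact absurd rfl hab

theorem decomp {m : ℕ} {A B : Finset (Fin m)} (hA : A.card = 3) (hB : B.card = 3)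
    (hne : A ≠ B) (hi : (A ∩ B).card = 2) :
    ∃ S x y, S.card = 2 ∧ x ∉ S ∧ y ∉ S ∧ x ≠ y ∧ A = insert x S ∧ B = insert y S := by
  have hAd : (A \ B).card = 1 := by
    have := Finset.card_sdiff_add_card_inter A B
    omega
  have hBd : (B \ A).card = 1 := by
    have := Finset.card_sdiff_add_card_inter B A
    rw [Finset.inter_comm] at this
    omega
  obtain ⟨x, hxe⟩ := Finset.card_eq_one.1 hAd
  obtain ⟨y, hye⟩ := Finset.card_eq_one.1 hBd
  have hxmem : x ∈ A \ B := hxe ▸ Finset.mem_singleton_self x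
  have hymem : y ∈ B \ A := hye ▸ Finset.mem_singleton_self y
  rw [Finset.mem_sdiff] at hxmem hymem
  refine ⟨A ∩ B, x, y, hi, ?_, ?_, ?_, ?_, ?_⟩
  · intro hc; exact hxmem.2 (Finset.mem_inter.1 hc).2
  · intro hc; exact hymem.2 (Finset.mem_inter.1 hc).1
  · intro hc; exact hxmem.2 (hc ▸ hymem.1)
  · rw [Finset.insert_eq, ← hxe, Finset.sdiff_union_inter]
  · rw [Finset.insert_eq, ← hye, Finset.inter_comm, Finset.sdiff_union_inter]

end Stmt19




theorem stmt_19 (p : ℕ) (hp : p.Prime) (hp3 : 3 < p)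
    (h2 : ∀ r : ℕ, (2 : ZMod p) ^ r ≠ -1) :
    (distGraph (p + 2) 3 2).chromaticNumber = (p : ℕ∞) := by

  haveI : Fact p.Prime := ⟨hp⟩
  have h : (2 : ZMod p) ≠ 0 := by
    have : ((2 : ℕ) : ZMod p) ≠ 0 := by
      rw [Ne, ZMod.natCast_eq_zero_iff]
      intro hdvd
      have := Nat.le_of_dvd (by norm_num) hdvd
      omega
    simpa using this
  have C : (distGraph (p + 2) 3 2).Coloring (ZMod p) := by
    refine SimpleGraph.Coloring.mk (fun v => Stmt19.col p h v.1) ?_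
    rintro v w ⟨hne, hcard⟩
    obtain ⟨S, x, y, hS, hx, hy, hxy, hA, hB⟩ :=
      Stmt19.decomp v.2 w.2 (fun hc => hne (Subtype.ext hc)) hcard
    simp only [hA, hB]
    exact Stmt19.mainLemma h h2 hp3 hS hx hy hxy
  have hcol : (distGraph (p + 2) 3 2).Colorable p := by
    have := C.colorable
    rwa [ZMod.card] at this
  refine le_antisymm hcol.chromaticNumber_le ?_
  rw [SimpleGraph.chromaticNumber_eq_biInf]
  refine le_iInf₂ fun n hn => ?_
  rw [Nat.cast_le]
  -- lower bound via clique {0, 1, i+2}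
  obtain ⟨Cn⟩ := hn
  have h0 : (0 : ℕ) < p + 2 := by omega
  have h1 : (1 : ℕ) < p + 2 := by omega
  let T : Fin p → Finset (Fin (p+2)) := fun i => {⟨0, h0⟩, ⟨1, h1⟩, ⟨i.val + 2, by omega⟩}
  have hmem : ∀ (i : Fin p) (t : Fin (p+2)),
      t ∈ T i ↔ t.val = 0 ∨ t.val = 1 ∨ t.val = i.val + 2 := by
    intro i t
    simp only [T, Finset.mem_insert, Finset.mem_singleton, Fin.ext_iff]
  have hcard3 : ∀ i, (T i).card = 3 := by
    intro i
    rw [Finset.card_insert_of_notMem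
        (by simp only [Finset.mem_insert, Finset.mem_singleton, Fin.ext_iff, Fin.val_mk]; omega),
      Finset.card_insert_of_notMem
        (by simp only [Finset.mem_singleton, Fin.ext_iff, Fin.val_mk]; omega),
      Finset.card_singleton]
  let f : Fin p → {A : Finset (Fin (p+2)) // A.card = 3} := fun i => ⟨T i, hcard3 i⟩
  have hadj : ∀ i j : Fin p, i ≠ j → (distGraph (p + 2) 3 2).Adj (f i) (f j) := by
    intro i j hij
    have hij' : i.val ≠ j.val := fun hc => hij (Fin.ext hc)
    constructor
    · intro hc
      have : T i = T j := congrArg Subtype.val hc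
      have hm : (⟨i.val + 2, by omega⟩ : Fin (p+2)) ∈ T j := by
        rw [← this, hmem]; exact Or.inr (Or.inr rfl)
      rw [hmem] at hm
      have hm' : i.val + 2 = 0 ∨ i.val + 2 = 1 ∨ i.val + 2 = j.val + 2 := hm
      omega
    · have : T i ∩ T j = {⟨0, h0⟩, ⟨1, h1⟩} := by
        ext t
        simp only [Finset.mem_inter, hmem, Finset.mem_insert, Finset.mem_singleton, Fin.ext_iff]
        constructor
        · rintro ⟨h1', h2'⟩; omega
        · rintro (h' | h') <;> omega
      rw [this, Finset.card_insert_of_notMem (by simp [Fin.ext_iff]), Finset.card_singleton]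
  have hinj : Function.Injective (fun i => Cn (f i)) := by
    intro i j hc
    by_contra hij
    exact Cn.valid (hadj i j hij) hc
  have := Fintype.card_le_of_injective _ hinj
  simpa using this
end
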